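/- arXiv:1610.09651 — 9 statements merged into one kernel-verified Lean document; each statement's English description precedes it below -/
import Mathlib

section
/- Let T : ℝⁿ → ℝⁿ be a perfect-information finite Shapley operator and assume the game is ergodic, i.e., for every g ∈ ℝⁿ there exist λ ∈ ℝ and u ∈ ℝⁿ with g + T(u) = λe + u. Then there exists a finite family H₁,…,H_N of affine hyperplanes of ℝⁿ such that for every g ∈ ℝⁿ outside H₁ ∪ … ∪ H_N, the operator g + T has a unique bias vector up to an additive constant: whenever g + T(u) = λe + u and g + T(v) = μe + v, one has v = u + ce for some c ∈ ℝ. In particular, the set of g for which the bias vector of g + T is not unique up to an additive constant is contained in a finite union of affine hyperplanes (hence has Lebesgue measure zero). -/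
open Filter Topology

set_option linter.unusedSectionVars false
set_option maxHeartbeats 1000000

/-- Existence of an invariant probability measure of a finite Markov chain,
supported on a given nonempty closed set. -/
lemma exists_invariant {n : ℕ} (Q : Fin n → Fin n → ℝ)
    (hQ0 : ∀ i j, 0 ≤ Q i j) (hQ1 : ∀ i, ∑ j, Q i j = 1)
    (I : Finset (Fin n)) (hne : I.Nonempty)
    (hclosed : ∀ i ∈ I, ∀ j, Q i j ≠ 0 → j ∈ I) :
    ∃ m : Fin n → ℝ, (∀ j, 0 ≤ m j) ∧ (∑ j, m j = 1) ∧ (∀ j, j ∉ I → m j = 0) ∧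
      (∀ j, ∑ i, m i * Q i j = m j) := by
  classical
  obtain ⟨i₀, hi₀⟩ := hne
  set step : (Fin n → ℝ) → (Fin n → ℝ) := fun mm j => ∑ i, mm i * Q i j with hstep
  set x : ℕ → Fin n → ℝ := fun t => step^[t] (fun j => if j = i₀ then 1 else 0) with hxdef
  have hx0 : x 0 = fun j => if j = i₀ then 1 else 0 := rfl
  have hxs : ∀ t, x (t+1) = step (x t) := by
    intro t
    simp [hxdef, Function.iterate_succ_apply']
  have hinv : ∀ t, (∀ j, 0 ≤ x t j) ∧ (∑ j, x t j = 1) ∧ (∀ j, j ∉ I → x t j = 0) := by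
    intro t
    induction t with
    | zero =>
      refine ⟨fun j => by rw [hx0]; positivity, ?_, ?_⟩
      · rw [hx0]; simp
      · intro j hj
        rw [hx0]
        simp only [ite_eq_right_iff]
        intro h; exact absurd (h ▸ hi₀) hj
    | succ t ih =>
      obtain ⟨h0, h1, h2⟩ := ih
      refine ⟨?_, ?_, ?_⟩
      · intro j
        rw [hxs]
        exact Finset.sum_nonneg fun i _ => mul_nonneg (h0 i) (hQ0 i j)
      · rw [hxs]
        simp only [hstep]
        rw [Finset.sum_comm]
        calc ∑ i, ∑ j, x t i * Q i j = ∑ i, x t i * ∑ j, Q i j := by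
              simp [Finset.mul_sum]
          _ = 1 := by simp [hQ1, h1]
      · intro j hj
        rw [hxs]
        refine Finset.sum_eq_zero fun i _ => ?_
        by_cases hi : i ∈ I
        · have : Q i j = 0 := by
            by_contra h
            exact hj (hclosed i hi j h)
          simp [this]
        · simp [h2 i hi]
  have hxle1 : ∀ t j, x t j ≤ 1 := by
    intro t j
    obtain ⟨h0, h1, _⟩ := hinv t
    calc x t j ≤ ∑ j', x t j' := Finset.single_le_sum (fun j' _ => h0 j') (Finset.mem_univ j)
      _ = 1 := h1
  set y : ℕ → Fin n → ℝ := fun k j => (∑ t ∈ Finset.range (k+1), x t j) / (k+1) with hydef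
  have hy01 : ∀ k, y k ∈ Set.Icc (0 : Fin n → ℝ) 1 := by
    intro k
    constructor <;> intro j <;> simp only [hydef, Pi.zero_apply, Pi.one_apply]
    · exact div_nonneg (Finset.sum_nonneg fun t _ => (hinv t).1 j) (by positivity)
    · rw [div_le_one (by positivity)]
      calc ∑ t ∈ Finset.range (k+1), x t j ≤ ∑ t ∈ Finset.range (k+1), 1 :=
            Finset.sum_le_sum fun t _ => hxle1 t j
        _ = (k+1 : ℝ) := by simp
  obtain ⟨m, hm, φ, hφ, hconv⟩ := isCompact_Icc.tendsto_subseq hy01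
  have hj : ∀ j, Tendsto (fun k => y (φ k) j) atTop (𝓝 (m j)) := fun j =>
    tendsto_pi_nhds.mp hconv j
  have hysum : ∀ k, ∑ j, y k j = 1 := by
    intro k
    simp only [hydef]
    rw [← Finset.sum_div, Finset.sum_comm]
    have : ∀ t ∈ Finset.range (k+1), ∑ j, x t j = 1 := fun t _ => (hinv t).2.1
    rw [Finset.sum_congr rfl this]
    rw [Finset.sum_const, Finset.card_range]
    field_simp
    simp
  refine ⟨m, fun j => hm.1 j, ?_, ?_, ?_⟩
  · have t1 : Tendsto (fun k => ∑ j, y (φ k) j) atTop (𝓝 (∑ j, m j)) :=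
      tendsto_finset_sum _ fun j _ => hj j
    have t2 : Tendsto (fun k => ∑ j, y (φ k) j) atTop (𝓝 1) := by
      simp only [hysum]; exact tendsto_const_nhds
    exact (tendsto_nhds_unique t1 t2)
  · intro j hjI
    have t2 : Tendsto (fun k => y (φ k) j) atTop (𝓝 0) := by
      have : ∀ k, y (φ k) j = 0 := by
        intro k
        simp only [hydef]
        rw [Finset.sum_eq_zero fun t _ => (hinv t).2.2 j hjI]
        simp
      simp only [this]; exact tendsto_const_nhds
    exact tendsto_nhds_unique (hj j) t2
  · intro j
    have key : ∀ k : ℕ, ∑ i, y k i * Q i j = y k j + (x (k+1) j - x 0 j)/(k+1) := by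
      intro k
      have tel : ∑ t ∈ Finset.range (k+1), x (t+1) j
          = (∑ t ∈ Finset.range (k+1), x t j) + x (k+1) j - x 0 j := by
        have h1 := Finset.sum_range_succ' (fun t => x t j) (k+1)
        have h2 := Finset.sum_range_succ (fun t => x t j) (k+1)
        linarith
      have swap : ∑ i, (∑ t ∈ Finset.range (k+1), x t i) * Q i j
          = ∑ t ∈ Finset.range (k+1), x (t+1) j := by
        calc ∑ i, (∑ t ∈ Finset.range (k+1), x t i) * Q i j
            = ∑ i, ∑ t ∈ Finset.range (k+1), x t i * Q i j := by
              simp [Finset.sum_mul]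
          _ = ∑ t ∈ Finset.range (k+1), ∑ i, x t i * Q i j := Finset.sum_comm
          _ = ∑ t ∈ Finset.range (k+1), x (t+1) j := by
              refine Finset.sum_congr rfl fun t _ => ?_
              rw [hxs]
      simp only [hydef]
      simp only [div_mul_eq_mul_div]
      rw [← Finset.sum_div, swap, tel]
      ring
    have t1 : Tendsto (fun k => ∑ i, y (φ k) i * Q i j) atTop (𝓝 (∑ i, m i * Q i j)) :=
      tendsto_finset_sum _ fun i _ => (hj i).mul_const _
    have t2 : Tendsto (fun k => (x (φ k + 1) j - x 0 j)/((φ k : ℝ) + 1)) atTop (𝓝 0) := by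
      have hb : ∀ k : ℕ, ‖(x (φ k + 1) j - x 0 j)/((φ k : ℝ) + 1)‖ ≤ 2/((k:ℝ)+1) := by
        intro k
        have h1 : |x (φ k + 1) j - x 0 j| ≤ 2 := by
          have a1 := hxle1 (φ k + 1) j
          have a2 := (hinv (φ k + 1)).1 j
          have a3 := hxle1 0 j
          have a4 := (hinv 0).1 j
          rw [abs_le]; constructor <;> linarith
        rw [Real.norm_eq_abs, abs_div, abs_of_nonneg (by positivity : (0:ℝ) ≤ (φ k : ℝ) + 1)]
        refine div_le_div₀ (by norm_num) h1 (by positivity) ?_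
        have := hφ.le_apply (x := k)
        have : (k : ℝ) ≤ (φ k : ℝ) := by exact_mod_cast this
        linarith
      have hg : Tendsto (fun k : ℕ => 2/((k:ℝ)+1)) atTop (𝓝 0) := by
        have h := tendsto_const_div_atTop_nhds_zero_nat (2:ℝ)
        have h2 := h.comp (tendsto_add_atTop_nat 1)
        convert h2 using 2 with k
        simp only [Function.comp]
        push_cast
        ring
      exact squeeze_zero_norm hb hg
    have t3 : Tendsto (fun k => ∑ i, y (φ k) i * Q i j) atTop (𝓝 (m j + 0)) := by
      simp only [key]
      exact (hj j).add t2
    rw [add_zero] at t3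
    exact tendsto_nhds_unique t1 t3

/-- A canonically chosen invariant measure supported on a closed set (junk off spec). -/
noncomputable def invMeas {n : ℕ} (Q : Fin n → Fin n → ℝ)
    (hQ0 : ∀ i j, 0 ≤ Q i j) (hQ1 : ∀ i, ∑ j, Q i j = 1) (I : Finset (Fin n)) : Fin n → ℝ :=
  if h : I.Nonempty ∧ ∀ i ∈ I, ∀ j, Q i j ≠ 0 → j ∈ I then
    (exists_invariant Q hQ0 hQ1 I h.1 h.2).choose
  else fun _ => 0

lemma invMeas_spec {n : ℕ} (Q : Fin n → Fin n → ℝ)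
    (hQ0 : ∀ i j, 0 ≤ Q i j) (hQ1 : ∀ i, ∑ j, Q i j = 1) (I : Finset (Fin n))
    (h1 : I.Nonempty) (h2 : ∀ i ∈ I, ∀ j, Q i j ≠ 0 → j ∈ I) :
    (∀ j, 0 ≤ invMeas Q hQ0 hQ1 I j) ∧ (∑ j, invMeas Q hQ0 hQ1 I j = 1) ∧
      (∀ j, j ∉ I → invMeas Q hQ0 hQ1 I j = 0) ∧
      (∀ j, ∑ i, invMeas Q hQ0 hQ1 I i * Q i j = invMeas Q hQ0 hQ1 I j) := by
  rw [invMeas, dif_pos ⟨h1, h2⟩]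
  exact (exists_invariant Q hQ0 hQ1 I h1 h2).choose_spec

lemma pairing {n : ℕ} (Q : Fin n → Fin n → ℝ) (ρ g u m : Fin n → ℝ) (lam : ℝ)
    (I : Finset (Fin n))
    (hfix : ∀ i ∈ I, u i = g i - lam + ρ i + ∑ j, Q i j * u j)
    (hm1 : ∑ j, m j = 1) (hm0 : ∀ j, j ∉ I → m j = 0)
    (hminv : ∀ j, ∑ i, m i * Q i j = m j) :
    lam = ∑ j, m j * (g j + ρ j) := by
  have e1 : ∑ j, m j * u j
      = ∑ j, (m j * (g j + ρ j) - lam * m j + ∑ k, m j * Q j k * u k) := by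
    refine Finset.sum_congr rfl fun j _ => ?_
    by_cases hj : j ∈ I
    · rw [hfix j hj, mul_add, Finset.mul_sum]
      have : ∀ k, m j * (Q j k * u k) = m j * Q j k * u k := fun k => by ring
      simp only [this]
      ring
    · simp [hm0 j hj]
  have e2 : ∑ j, ∑ k, m j * Q j k * u k = ∑ j, m j * u j := by
    rw [Finset.sum_comm]
    calc ∑ k, ∑ j, m j * Q j k * u k = ∑ k, (∑ j, m j * Q j k) * u k := by
          refine Finset.sum_congr rfl fun k _ => ?_
          rw [Finset.sum_mul]
      _ = ∑ k, m k * u k := by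
          refine Finset.sum_congr rfl fun k _ => ?_
          rw [hminv k]
  rw [Finset.sum_add_distrib, Finset.sum_sub_distrib, e2, ← Finset.mul_sum, hm1] at e1
  linarith

lemma exists_eq_iInf' {ι : Type*} [Finite ι] [Nonempty ι] (f : ι → ℝ) : ∃ i, f i = ⨅ j, f j := by
  obtain ⟨i, hi⟩ := Finite.exists_min f
  exact ⟨i, le_antisymm (le_ciInf hi) (ciInf_le (Finite.bddBelow_range f) i)⟩

lemma exists_eq_iSup' {ι : Type*} [Finite ι] [Nonempty ι] (f : ι → ℝ) : ∃ i, f i = ⨆ j, f j := by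
  obtain ⟨i, hi⟩ := Finite.exists_max f
  exact ⟨i, le_antisymm (le_ciSup (Finite.bddAbove_range f) i) (ciSup_le hi)⟩

/-- A perfect-information finite Shapley operator:
`T_i(x) = min_{a ∈ A i} max_{b ∈ B i a} ( r i a b + ⟨P i a b, x⟩ )`. -/
noncomputable def shapleyOp {n : ℕ} (A : Fin n → Type) [∀ i, Fintype (A i)] [∀ i, Nonempty (A i)]
    (B : ∀ i, A i → Type) [∀ i a, Fintype (B i a)] [∀ i a, Nonempty (B i a)]
    (r : ∀ i, ∀ a : A i, B i a → ℝ) (P : ∀ i, ∀ a : A i, B i a → Fin n → ℝ) :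
    (Fin n → ℝ) → (Fin n → ℝ) :=
  fun x i => ⨅ a : A i, ⨆ b : B i a, (r i a b + ∑ j, P i a b j * x j)

section main
variable {n : ℕ} (A : Fin n → Type) [∀ i, Fintype (A i)] [∀ i, Nonempty (A i)]
    (B : ∀ i, A i → Type) [∀ i a, Fintype (B i a)] [∀ i a, Nonempty (B i a)]
    (r : ∀ i, ∀ a : A i, B i a → ℝ) (P : ∀ i, ∀ a : A i, B i a → Fin n → ℝ)

lemma sum_P_le (hP : ∀ i a b, (∀ j, 0 ≤ P i a b j) ∧ ∑ j, P i a b j = 1)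
    {u v : Fin n → ℝ} {c : ℝ} (h : ∀ j, v j - u j ≤ c) (i : Fin n) (a : A i) (b : B i a) :
    ∑ j, P i a b j * v j ≤ ∑ j, P i a b j * u j + c := by
  have : ∑ j, P i a b j * v j ≤ ∑ j, P i a b j * (u j + c) :=
    Finset.sum_le_sum fun j _ => mul_le_mul_of_nonneg_left (by linarith [h j]) ((hP i a b).1 j)
  calc ∑ j, P i a b j * v j ≤ ∑ j, P i a b j * (u j + c) := this
    _ = ∑ j, P i a b j * u j + (∑ j, P i a b j) * c := by
        rw [Finset.sum_mul]; rw [← Finset.sum_add_distrib]; congr 1; ext j; ring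
    _ = ∑ j, P i a b j * u j + c := by rw [(hP i a b).2, one_mul]

lemma shapley_le (hP : ∀ i a b, (∀ j, 0 ≤ P i a b j) ∧ ∑ j, P i a b j = 1)
    {u v : Fin n → ℝ} {c : ℝ} (h : ∀ j, v j - u j ≤ c) (i : Fin n) :
    shapleyOp A B r P v i ≤ shapleyOp A B r P u i + c := by
  obtain ⟨a, ha⟩ := exists_eq_iInf' (fun a => ⨆ b, (r i a b + ∑ j, P i a b j * u j))
  have h1 : shapleyOp A B r P v i ≤ ⨆ b, (r i a b + ∑ j, P i a b j * v j) :=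
    ciInf_le (Finite.bddBelow_range _) a
  refine h1.trans (ciSup_le fun b => ?_)
  have h2 : r i a b + ∑ j, P i a b j * u j ≤ ⨆ b, (r i a b + ∑ j, P i a b j * u j) :=
    le_ciSup (f := fun b' => r i a b' + ∑ j, P i a b' j * u j) (Finite.bddAbove_range _) b
  have h3 := sum_P_le A B P hP h i a b
  have : ⨆ b, (r i a b + ∑ j, P i a b j * u j) = shapleyOp A B r P u i := ha
  linarith

lemma eigen_eq (hn : 0 < n) (hP : ∀ i a b, (∀ j, 0 ≤ P i a b j) ∧ ∑ j, P i a b j = 1)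
    {g u v : Fin n → ℝ} {lam mu : ℝ}
    (hu : ∀ i, g i + shapleyOp A B r P u i = lam + u i)
    (hv : ∀ i, g i + shapleyOp A B r P v i = mu + v i) : mu = lam := by
  haveI : Nonempty (Fin n) := Fin.pos_iff_nonempty.mp hn
  have hle : mu ≤ lam := by
    obtain ⟨i, hi⟩ := Finite.exists_max (fun i => v i - u i)
    have h1 := shapley_le A B r P hP (c := v i - u i) (fun j => hi j) i
    have h2 := hu i; have h3 := hv i
    linarith
  have hge : lam ≤ mu := by
    obtain ⟨i, hi⟩ := Finite.exists_max (fun i => u i - v i)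
    have h1 := shapley_le A B r P hP (c := u i - v i) (fun j => hi j) i
    have h2 := hu i; have h3 := hv i
    linarith
  linarith

lemma key_lemma (hP : ∀ i a b, (∀ j, 0 ≤ P i a b j) ∧ ∑ j, P i a b j = 1)
    {g u v : Fin n → ℝ} {lam : ℝ}
    (hu : ∀ i, g i + shapleyOp A B r P u i = lam + u i)
    (hv : ∀ i, g i + shapleyOp A B r P v i = lam + v i)
    (I : Finset (Fin n)) (hI : ∀ i, i ∈ I ↔ ∀ j, v j - u j ≤ v i - u i) :
    ∃ π : ∀ i, Σ a : A i, B i a,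
      (∀ i ∈ I, ∀ j, P i (π i).1 (π i).2 j ≠ 0 → j ∈ I) ∧
      (∀ i ∈ I, u i = g i - lam + r i (π i).1 (π i).2 + ∑ j, P i (π i).1 (π i).2 j * u j) := by
  have ha : ∀ i, ∃ a : A i, (⨆ b, (r i a b + ∑ j, P i a b j * u j))
      = ⨅ a, ⨆ b, (r i a b + ∑ j, P i a b j * u j) :=
    fun i => exists_eq_iInf' _
  choose a haspec using ha
  have hbex : ∀ i, ∃ b : B i (a i), (r i (a i) b + ∑ j, P i (a i) b j * v j)
      = ⨆ b, (r i (a i) b + ∑ j, P i (a i) b j * v j) :=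
    fun i => exists_eq_iSup' _
  choose b hbspec using hbex
  refine ⟨fun i => ⟨a i, b i⟩, ?_, ?_⟩ <;> intro i hiI
  all_goals {
    have hci : ∀ j, v j - u j ≤ v i - u i := (hI i).mp hiI
    have h1 : shapleyOp A B r P v i ≤ ⨆ b, (r i (a i) b + ∑ j, P i (a i) b j * v j) :=
      ciInf_le (Finite.bddBelow_range _) (a i)
    have h2 : (⨆ b, (r i (a i) b + ∑ j, P i (a i) b j * v j))
        ≤ shapleyOp A B r P u i + (v i - u i) := by
      refine ciSup_le fun b' => ?_
      have h3 := sum_P_le A B P hP hci i (a i) b'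
      have h4 : r i (a i) b' + ∑ j, P i (a i) b' j * u j
          ≤ ⨆ b, (r i (a i) b + ∑ j, P i (a i) b j * u j) :=
        le_ciSup (f := fun b'' => r i (a i) b'' + ∑ j, P i (a i) b'' j * u j)
          (Finite.bddAbove_range _) b'
      have h5 : (⨆ b, (r i (a i) b + ∑ j, P i (a i) b j * u j)) = shapleyOp A B r P u i :=
        haspec i
      linarith
    have hTv : shapleyOp A B r P v i = shapleyOp A B r P u i + (v i - u i) := by
      have h6 := hu i; have h7 := hv i; linarith
    have hSv : (⨆ b, (r i (a i) b + ∑ j, P i (a i) b j * v j))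
        = shapleyOp A B r P u i + (v i - u i) := le_antisymm h2 (hTv ▸ h1)
    have hfv : r i (a i) (b i) + ∑ j, P i (a i) (b i) j * v j
        = shapleyOp A B r P u i + (v i - u i) := (hbspec i).trans hSv
    have hfu : r i (a i) (b i) + ∑ j, P i (a i) (b i) j * u j ≤ shapleyOp A B r P u i := by
      have h4 : r i (a i) (b i) + ∑ j, P i (a i) (b i) j * u j
          ≤ ⨆ b, (r i (a i) b + ∑ j, P i (a i) b j * u j) :=
        le_ciSup (f := fun b'' => r i (a i) b'' + ∑ j, P i (a i) b'' j * u j)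
          (Finite.bddAbove_range _) (b i)
      have h5 : (⨆ b, (r i (a i) b + ∑ j, P i (a i) b j * u j)) = shapleyOp A B r P u i :=
        haspec i
      linarith
    have hdiff : ∑ j, P i (a i) (b i) j * v j - ∑ j, P i (a i) (b i) j * u j
        = ∑ j, P i (a i) (b i) j * (v j - u j) := by
      rw [← Finset.sum_sub_distrib]; congr 1; ext j; ring
    have hub : ∑ j, P i (a i) (b i) j * (v j - u j) ≤ v i - u i := by
      have := sum_P_le A B P hP hci i (a i) (b i)
      linarith
    have heq : ∑ j, P i (a i) (b i) j * (v j - u j) = v i - u i := by linarith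
    have hzero : ∀ j, P i (a i) (b i) j * ((v i - u i) - (v j - u j)) = 0 := by
      have hsum0 : ∑ j, P i (a i) (b i) j * ((v i - u i) - (v j - u j)) = 0 := by
        have hPs := (hP i (a i) (b i)).2
        calc ∑ j, P i (a i) (b i) j * ((v i - u i) - (v j - u j))
            = (∑ j, P i (a i) (b i) j) * (v i - u i)
              - ∑ j, P i (a i) (b i) j * (v j - u j) := by
              rw [Finset.sum_mul, ← Finset.sum_sub_distrib]; congr 1; ext j; ring
          _ = 0 := by rw [hPs, heq]; ring
      intro j
      have := (Finset.sum_eq_zero_iff_of_nonneg (fun j _ =>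
        mul_nonneg ((hP i (a i) (b i)).1 j) (by linarith [hci j]))).mp hsum0
      exact this j (Finset.mem_univ j)
    first
    | { intro j hPj
        have hz := hzero j
        have : (v i - u i) - (v j - u j) = 0 := by
          rcases mul_eq_zero.mp hz with h | h
          · exact absurd h hPj
          · exact h
        rw [hI]
        intro k
        have := hci k
        linarith }
    | { have hfueq : r i (a i) (b i) + ∑ j, P i (a i) (b i) j * u j
            = shapleyOp A B r P u i := by linarith
        have h6 := hu i
        linarith }
  }

end main

/-- generic uniqueness of the bias vector, up to an additive constant,
for ergodic perfect-information finite stochastic games. -/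
theorem stmt0 {n : ℕ} (hn : 0 < n)
    (A : Fin n → Type) [∀ i, Fintype (A i)] [∀ i, Nonempty (A i)]
    (B : ∀ i, A i → Type) [∀ i a, Fintype (B i a)] [∀ i a, Nonempty (B i a)]
    (r : ∀ i, ∀ a : A i, B i a → ℝ) (P : ∀ i, ∀ a : A i, B i a → Fin n → ℝ)
    (hP : ∀ i a b, (∀ j, 0 ≤ P i a b j) ∧ ∑ j, P i a b j = 1)
    (T : (Fin n → ℝ) → (Fin n → ℝ)) (hT : T = shapleyOp A B r P)
    (herg : ∀ g : Fin n → ℝ, ∃ (lam : ℝ) (u : Fin n → ℝ),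
      g + T u = (fun _ => lam) + u) :
    ∃ (N : ℕ) (c : Fin N → Fin n → ℝ) (d : Fin N → ℝ),
      (∀ k, c k ≠ 0) ∧
      ∀ g : Fin n → ℝ, (∀ k, ∑ i, c k i * g i ≠ d k) →
        ∀ (u v : Fin n → ℝ) (lam mu : ℝ),
          g + T u = (fun _ => lam) + u →
          g + T v = (fun _ => mu) + v →
          ∃ cst : ℝ, v = u + (fun _ => cst) := by
  classical
  subst hT
  haveI : Nonempty (Fin n) := Fin.pos_iff_nonempty.mp hn
  set Pol := ∀ i : Fin n, Σ a : A i, B i a with hPol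
  have hQ0 : ∀ (π : Pol) i j, 0 ≤ P i (π i).1 (π i).2 j :=
    fun π i j => (hP i (π i).1 (π i).2).1 j
  have hQ1 : ∀ (π : Pol) i, ∑ j, P i (π i).1 (π i).2 j = 1 :=
    fun π i => (hP i (π i).1 (π i).2).2
  set inv : Pol → Finset (Fin n) → (Fin n → ℝ) := fun π I =>
    invMeas (fun i j => P i (π i).1 (π i).2 j) (hQ0 π) (hQ1 π) I with hinvdef
  set E : Fin (Fintype.card {q : Pol × Pol × Finset (Fin n) × Finset (Fin n) //
      inv q.1 q.2.2.1 ≠ inv q.2.1 q.2.2.2}) ≃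
      {q : Pol × Pol × Finset (Fin n) × Finset (Fin n) //
      inv q.1 q.2.2.1 ≠ inv q.2.1 q.2.2.2} :=
    (Fintype.equivFin _).symm with hEdef
  refine ⟨_, fun k i => inv (E k).1.1 (E k).1.2.2.1 i - inv (E k).1.2.1 (E k).1.2.2.2 i,
    fun k => (∑ j, inv (E k).1.2.1 (E k).1.2.2.2 j * r j ((E k).1.2.1 j).1 ((E k).1.2.1 j).2)
      - ∑ j, inv (E k).1.1 (E k).1.2.2.1 j * r j ((E k).1.1 j).1 ((E k).1.1 j).2, ?_, ?_⟩
  · intro k hc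
    apply (E k).2
    funext i
    have h := congrFun hc i
    simp only [Pi.zero_apply] at h
    linarith
  · intro g hg u v lam mu hu hv
    have hu' : ∀ i, g i + shapleyOp A B r P u i = lam + u i := fun i => congrFun hu i
    have hv0 : ∀ i, g i + shapleyOp A B r P v i = mu + v i := fun i => congrFun hv i
    have hmu : mu = lam := eigen_eq A B r P hn hP hu' hv0
    subst hmu
    have hv' : ∀ i, g i + shapleyOp A B r P v i = mu + v i := hv0
    by_contra hcon
    push_neg at hcon
    set Iset := Finset.univ.filter (fun i => ∀ j, v j - u j ≤ v i - u i) with hIsetdef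
    set Jset := Finset.univ.filter (fun i => ∀ j, u j - v j ≤ u i - v i) with hJsetdef
    have hIc : ∀ i, i ∈ Iset ↔ ∀ j, v j - u j ≤ v i - u i := by
      intro i; simp [hIsetdef]
    have hJc : ∀ i, i ∈ Jset ↔ ∀ j, u j - v j ≤ u i - v i := by
      intro i; simp [hJsetdef]
    obtain ⟨πI, hIclosed, hIfix⟩ := key_lemma A B r P hP hu' hv' Iset hIc
    obtain ⟨πJ, hJclosed, hJfix⟩ := key_lemma A B r P hP hv' hu' Jset hJc
    have hIne : Iset.Nonempty := by
      obtain ⟨i, hi⟩ := Finite.exists_max (fun i => v i - u i)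
      exact ⟨i, (hIc i).mpr hi⟩
    have hJne : Jset.Nonempty := by
      obtain ⟨i, hi⟩ := Finite.exists_max (fun i => u i - v i)
      exact ⟨i, (hJc i).mpr hi⟩
    obtain ⟨hm0, hm1, hmsupp, hminv⟩ := invMeas_spec
      (fun i j => P i (πI i).1 (πI i).2 j) (hQ0 πI) (hQ1 πI) Iset hIne hIclosed
    obtain ⟨hn0, hn1, hnsupp, hninv⟩ := invMeas_spec
      (fun i j => P i (πJ i).1 (πJ i).2 j) (hQ0 πJ) (hQ1 πJ) Jset hJne hJclosed
    have hlamI : mu = ∑ j, inv πI Iset j * (g j + r j (πI j).1 (πI j).2) :=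
      pairing (fun i j => P i (πI i).1 (πI i).2 j) (fun i => r i (πI i).1 (πI i).2)
        g u (inv πI Iset) mu Iset hIfix hm1 hmsupp hminv
    have hlamJ : mu = ∑ j, inv πJ Jset j * (g j + r j (πJ j).1 (πJ j).2) :=
      pairing (fun i j => P i (πJ i).1 (πJ i).2 j) (fun i => r i (πJ i).1 (πJ i).2)
        g v (inv πJ Jset) mu Jset hJfix hn1 hnsupp hninv
    have hdisj : ∀ i, i ∈ Iset → i ∈ Jset → False := by
      intro i hiI hiJ
      refine hcon (v i - u i) ?_
      funext j
      have h1 := (hIc i).mp hiI j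
      have h2 := (hJc i).mp hiJ j
      show v j = u j + (v i - u i)
      linarith
    have hmne : inv πI Iset ≠ inv πJ Jset := by
      intro heq
      have hz : ∀ j, inv πI Iset j = 0 := by
        intro j
        by_cases hj : j ∈ Iset
        · have hj' : j ∉ Jset := fun h => hdisj j hj h
          rw [heq]; exact hnsupp j hj'
        · exact hmsupp j hj
      rw [Finset.sum_congr rfl (fun j _ => hz j)] at hm1
      simp at hm1
    have hk := hg (E.symm ⟨(πI, πJ, Iset, Jset), hmne⟩)
    apply hk
    beta_reduce
    rw [E.apply_symm_apply]
    show ∑ i, (inv πI Iset i - inv πJ Jset i) * g i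
        = (∑ j, inv πJ Jset j * r j (πJ j).1 (πJ j).2)
          - ∑ j, inv πI Iset j * r j (πI j).1 (πI j).2
    have expI : ∑ j, inv πI Iset j * (g j + r j (πI j).1 (πI j).2)
        = ∑ j, inv πI Iset j * g j + ∑ j, inv πI Iset j * r j (πI j).1 (πI j).2 := by
      rw [← Finset.sum_add_distrib]; congr 1; ext j; ring
    have expJ : ∑ j, inv πJ Jset j * (g j + r j (πJ j).1 (πJ j).2)
        = ∑ j, inv πJ Jset j * g j + ∑ j, inv πJ Jset j * r j (πJ j).1 (πJ j).2 := by
      rw [← Finset.sum_add_distrib]; congr 1; ext j; ring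
    have expD : ∑ i, (inv πI Iset i - inv πJ Jset i) * g i
        = ∑ i, inv πI Iset i * g i - ∑ i, inv πJ Jset i * g i := by
      rw [← Finset.sum_sub_distrib]; congr 1; ext i; ring
    rw [expI] at hlamI
    rw [expJ] at hlamJ
    rw [expD]
    linarith
end

section
/- Let T : ℝⁿ → ℝⁿ be monotone and additively homogeneous, and assume the ergodic equation is solvable: there exist u₀ ∈ ℝⁿ and λ ∈ ℝ with T(u₀) = λe + u₀. Then the eigenspace E(T) = { x ∈ ℝⁿ : T(x) = λe + x } is a retract of ℝⁿ by a sup-norm nonexpansive map: there exists p : ℝⁿ → ℝⁿ satisfying ‖p(x) − p(y)‖_∞ ≤ ‖x − y‖_∞ for all x, y ∈ ℝⁿ, p ∘ p = p, and p(ℝⁿ) = E(T). In particular, E(T) is path-connected. -/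
open Filter Topology

/-- A monotone additively homogeneous map is sup-norm nonexpansive. -/
lemma monotone_homog_nonexpansive {n : ℕ} (F : (Fin n → ℝ) → (Fin n → ℝ))
    (hm : ∀ x y : Fin n → ℝ, x ≤ y → F x ≤ F y)
    (hh : ∀ (x : Fin n → ℝ) (c : ℝ), F (x + fun _ => c) = F x + fun _ => c)
    (x y : Fin n → ℝ) : ‖F x - F y‖ ≤ ‖x - y‖ := by
  have hc : (0:ℝ) ≤ ‖x - y‖ := norm_nonneg _
  have key : ∀ a b : Fin n → ℝ, ∀ i, F a i - F b i ≤ ‖a - b‖ := by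
    intro a b i
    have hab : a ≤ b + fun _ => ‖a - b‖ := by
      intro j
      have := norm_le_pi_norm (a - b) j
      have h2 : |a j - b j| ≤ ‖a - b‖ := by simpa [Real.norm_eq_abs] using this
      have := (abs_le.mp h2).2
      simpa using by linarith
    have := hm a (b + fun _ => ‖a - b‖) hab
    have h3 := this i
    rw [hh b ‖a - b‖] at h3
    simp at h3
    have hab' : ‖a - b‖ = ‖b - a‖ := by rw [← neg_sub, norm_neg]
    linarith
  rw [show ‖x - y‖ = ‖x - y‖ from rfl]
  have : ∀ i, ‖(F x - F y) i‖ ≤ ‖x - y‖ := by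
    intro i
    rw [Pi.sub_apply, Real.norm_eq_abs, abs_le]
    constructor
    · have := key y x i
      have hxy : ‖y - x‖ = ‖x - y‖ := by rw [← neg_sub, norm_neg]
      rw [hxy] at this; linarith
    · exact key x y i
  exact pi_norm_le_iff_of_nonneg hc |>.mpr this

/-- the eigenspace of a monotone additively homogeneous map whose ergodic
equation is solvable is a nonexpansive retract of `ℝⁿ`; in particular it is path-connected.
Here `Fin n → ℝ` carries the sup-norm. -/
theorem stmt1 {n : ℕ} (hn : 0 < n) (T : (Fin n → ℝ) → (Fin n → ℝ))
    (hmono : ∀ x y : Fin n → ℝ, x ≤ y → T x ≤ T y)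
    (hhom : ∀ (x : Fin n → ℝ) (c : ℝ), T (x + fun _ => c) = T x + fun _ => c)
    (u₀ : Fin n → ℝ) (lam : ℝ) (h : T u₀ = (fun _ => lam) + u₀) :
    ∃ p : (Fin n → ℝ) → (Fin n → ℝ),
      (∀ x y : Fin n → ℝ, ‖p x - p y‖ ≤ ‖x - y‖) ∧
      p ∘ p = p ∧
      Set.range p = {x | T x = (fun _ => lam) + x} ∧
      IsPathConnected {x | T x = (fun _ => lam) + x} := by
  classical
  set E : Set (Fin n → ℝ) := {x | T x = (fun _ => lam) + x} with hE
  set S : (Fin n → ℝ) → (Fin n → ℝ) := fun x => T x - fun _ => lam with hS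
  have hSfix : ∀ x, x ∈ E ↔ S x = x := by
    intro x
    constructor
    · intro hx
      funext i
      have : T x i = lam + x i := by rw [hx]; rfl
      simp [hS, this]
    · intro hx
      have : ∀ i, T x i - lam = x i := fun i => congrFun hx i
      funext i
      have := this i
      show T x i = lam + x i
      linarith
  have hSm : ∀ x y : Fin n → ℝ, x ≤ y → S x ≤ S y := by
    intro x y hxy i
    have := hmono x y hxy i
    simp only [hS, Pi.sub_apply]
    linarith
  have hSh : ∀ (x : Fin n → ℝ) (c : ℝ), S (x + fun _ => c) = S x + fun _ => c := by
    intro x c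
    funext i
    have := congrFun (hhom x c) i
    simp only [hS, Pi.sub_apply, Pi.add_apply] at this ⊢
    linarith
  have hSne : ∀ x y : Fin n → ℝ, ‖S x - S y‖ ≤ ‖x - y‖ :=
    monotone_homog_nonexpansive S hSm hSh
  have hu₀ : u₀ ∈ E := h
  have htrans : ∀ u ∈ E, ∀ c : ℝ, (u + fun _ => c) ∈ E := by
    intro u hu c
    rw [hSfix] at hu ⊢
    rw [hSh u c, hu]
  -- the family of fixed points below x
  set fam : (Fin n → ℝ) → Set (Fin n → ℝ) := fun x => {z | z ∈ E ∧ z ≤ x} with hfam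
  have hfamne : ∀ x, (fam x).Nonempty := by
    intro x
    refine ⟨u₀ + fun _ => -‖u₀ - x‖, htrans u₀ hu₀ _, ?_⟩
    intro i
    have := norm_le_pi_norm (u₀ - x) i
    have h2 : |u₀ i - x i| ≤ ‖u₀ - x‖ := by simpa [Real.norm_eq_abs] using this
    have := (abs_le.mp h2).2
    simp only [Pi.add_apply]
    linarith
  -- projection
  set P : (Fin n → ℝ) → (Fin n → ℝ) := fun x i => sSup ((fun z => z i) '' fam x) with hP
  have hbdd : ∀ x i, BddAbove ((fun z => z i) '' fam x) := by
    intro x i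
    refine ⟨x i, ?_⟩
    rintro _ ⟨z, ⟨_, hz⟩, rfl⟩
    exact hz i
  have hne' : ∀ x i, ((fun z => z i) '' fam x).Nonempty := fun x i => (hfamne x).image _
  have hPle : ∀ x, P x ≤ x := by
    intro x i
    exact csSup_le (hne' x i) (by rintro _ ⟨z, ⟨_, hz⟩, rfl⟩; exact hz i)
  have hPge : ∀ x ∈ E, x ≤ P x := by
    intro x hx i
    exact le_csSup (hbdd x i) ⟨x, ⟨hx, le_refl x⟩, rfl⟩
  have hPfix : ∀ x ∈ E, P x = x := fun x hx =>
    le_antisymm (hPle x) (hPge x hx)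
  have hPshift : ∀ x y : Fin n → ℝ, ∀ i, P x i ≤ P y i + ‖x - y‖ := by
    intro x y i
    refine csSup_le (hne' x i) ?_
    rintro _ ⟨z, ⟨hzE, hzx⟩, rfl⟩
    have hz' : (z + fun _ => -‖x - y‖) ∈ fam y := by
      refine ⟨htrans z hzE _, ?_⟩
      intro j
      have h1 : x j ≤ y j + ‖x - y‖ := by
        have := norm_le_pi_norm (x - y) j
        have h2 : |x j - y j| ≤ ‖x - y‖ := by simpa [Real.norm_eq_abs] using this
        have := (abs_le.mp h2).2
        linarith
      have := hzx j
      simp only [Pi.add_apply]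
      linarith
    have := le_csSup (hbdd y i) ⟨_, hz', rfl⟩
    simp only [Pi.add_apply] at this
    linarith
  have hPne : ∀ x y : Fin n → ℝ, ‖P x - P y‖ ≤ ‖x - y‖ := by
    intro x y
    refine pi_norm_le_iff_of_nonneg (norm_nonneg _) |>.mpr ?_
    intro i
    rw [Pi.sub_apply, Real.norm_eq_abs, abs_le]
    constructor
    · have := hPshift y x i
      have hxy : ‖y - x‖ = ‖x - y‖ := by rw [← neg_sub, norm_neg]
      rw [hxy] at this; linarith
    · have := hPshift x y i; linarith
  -- S (P x) ≥ P x
  have hSPge : ∀ x, P x ≤ S (P x) := by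
    intro x i
    refine csSup_le (hne' x i) ?_
    rintro _ ⟨z, ⟨hzE, hzx⟩, rfl⟩
    have hzP : z ≤ P x := fun j => le_csSup (hbdd x j) ⟨z, ⟨hzE, hzx⟩, rfl⟩
    have := hSm z (P x) hzP i
    rw [(hSfix z).mp hzE] at this
    exact this
  -- iterates are monotone
  have hiter_mono : ∀ x, ∀ k, S^[k] (P x) ≤ S^[k+1] (P x) := by
    intro x k
    induction k with
    | zero => simpa using hSPge x
    | succ m ih =>
      rw [Function.iterate_succ_apply', Function.iterate_succ_apply']
      exact hSm _ _ ih
  have hiter_mono' : ∀ x i, Monotone fun k => S^[k] (P x) i :=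
    fun x i => monotone_nat_of_le_succ (fun k => hiter_mono x k i)
  -- iterates are bounded above
  have hiter_bdd : ∀ x k, S^[k] (P x) ≤ u₀ + fun _ => ‖P x - u₀‖ := by
    intro x k
    have hub : (u₀ + fun _ => ‖P x - u₀‖) ∈ E := htrans u₀ hu₀ _
    have hfixub : S (u₀ + fun _ => ‖P x - u₀‖) = (u₀ + fun _ => ‖P x - u₀‖) :=
      (hSfix _).mp hub
    induction k with
    | zero =>
      intro i
      have := norm_le_pi_norm (P x - u₀) i
      have h2 : |P x i - u₀ i| ≤ ‖P x - u₀‖ := by simpa [Real.norm_eq_abs] using this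
      have := (abs_le.mp h2).2
      simp only [Function.iterate_zero_apply, Pi.add_apply]
      linarith
    | succ m ih =>
      rw [Function.iterate_succ_apply']
      calc S (S^[m] (P x)) ≤ S (u₀ + fun _ => ‖P x - u₀‖) := hSm _ _ ih
        _ = _ := hfixub
  -- define the limit p
  set p : (Fin n → ℝ) → (Fin n → ℝ) := fun x i => ⨆ k, S^[k] (P x) i with hp
  have hlim : ∀ x, Tendsto (fun k => S^[k] (P x)) atTop (𝓝 (p x)) := by
    intro x
    rw [tendsto_pi_nhds]
    intro i
    apply tendsto_atTop_ciSup (hiter_mono' x i)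
    refine ⟨u₀ i + ‖P x - u₀‖, ?_⟩
    rintro _ ⟨k, rfl⟩
    simpa using hiter_bdd x k i
  have hScont : Continuous S := by
    have : LipschitzWith 1 S := by
      refine LipschitzWith.of_dist_le_mul ?_
      intro a b
      rw [dist_eq_norm, dist_eq_norm]
      simpa using hSne a b
    exact this.continuous
  have hpfixS : ∀ x, S (p x) = p x := by
    intro x
    have h1 : Tendsto (fun k => S (S^[k] (P x))) atTop (𝓝 (S (p x))) :=
      (hScont.tendsto (p x)).comp (hlim x)
    have h2 : Tendsto (fun k => S^[k+1] (P x)) atTop (𝓝 (p x)) :=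
      (hlim x).comp (tendsto_add_atTop_nat 1)
    have h3 : (fun k => S (S^[k] (P x))) = fun k => S^[k+1] (P x) := by
      funext k; rw [Function.iterate_succ_apply']
    rw [h3] at h1
    exact tendsto_nhds_unique h1 h2
  have hpE : ∀ x, p x ∈ E := fun x => (hSfix (p x)).mpr (hpfixS x)
  have hpfix : ∀ x ∈ E, p x = x := by
    intro x hx
    have hPx : P x = x := hPfix x hx
    have hSx : S x = x := (hSfix x).mp hx
    have hit : ∀ k, S^[k] (P x) = x := by
      intro k
      rw [hPx]
      induction k with
      | zero => rfl
      | succ m ih => rw [Function.iterate_succ_apply', ih, hSx]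
    funext i
    simp only [hp]
    rw [show (fun k => S^[k] (P x) i) = fun _ => x i from funext fun k => by rw [hit k]]
    exact ciSup_const
  have hpne : ∀ x y : Fin n → ℝ, ‖p x - p y‖ ≤ ‖x - y‖ := by
    intro x y
    have hSkne : ∀ k, ∀ a b : Fin n → ℝ, ‖S^[k] a - S^[k] b‖ ≤ ‖a - b‖ := by
      intro k
      induction k with
      | zero => intro a b; simp
      | succ m ih =>
        intro a b
        rw [Function.iterate_succ_apply', Function.iterate_succ_apply']
        exact le_trans (hSne _ _) (ih a b)
    have hlim' : Tendsto (fun k => ‖S^[k] (P x) - S^[k] (P y)‖) atTop (𝓝 ‖p x - p y‖) := by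
      exact (continuous_norm.tendsto _).comp ((hlim x).sub (hlim y))
    have hbound : ∀ k, ‖S^[k] (P x) - S^[k] (P y)‖ ≤ ‖x - y‖ :=
      fun k => le_trans (hSkne k _ _) (le_trans (hPne x y) le_rfl)
    exact le_of_tendsto' hlim' hbound
  refine ⟨p, hpne, ?_, ?_, ?_⟩
  · funext x
    exact hpfix (p x) (hpE x)
  · apply Set.eq_of_subset_of_subset
    · rintro _ ⟨x, rfl⟩
      exact hpE x
    · intro x hx
      exact ⟨x, hpfix x hx⟩
  · have hrange : Set.range p = E := by
      apply Set.eq_of_subset_of_subset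
      · rintro _ ⟨x, rfl⟩
        exact hpE x
      · intro x hx
        exact ⟨x, hpfix x hx⟩
    have hpcont : Continuous p := by
      have : LipschitzWith 1 p := by
        refine LipschitzWith.of_dist_le_mul ?_
        intro a b
        rw [dist_eq_norm, dist_eq_norm]
        simpa using hpne a b
      exact this.continuous
    have himg : IsPathConnected (Set.range p) := by
      rw [← Set.image_univ]
      exact (isPathConnected_univ (X := Fin n → ℝ)).image hpcont
    show IsPathConnected E
    rw [show E = Set.range p from hrange.symm]
    exact himg
end

section
/- Let T : ℝⁿ → ℝⁿ be monotone and additively homogeneous, and assume there exist u₀ ∈ ℝⁿ and λ ∈ ℝ with T(u₀) = λe + u₀. Then there exists a retraction of ℝⁿ onto the eigenspace E(T) = { x : T(x) = λe + x } which is itself monotone and additively homogeneous: a map p : ℝⁿ → ℝⁿ that is monotone, additively homogeneous, satisfies p ∘ p = p and p(ℝⁿ) = E(T). Explicitly, when λ = 0 one may take p(x) = lim_{k→∞} T^k(q(x)) where q(x) = lim_{k→∞} inf_{ℓ ≥ k} T^ℓ(x) (componentwise), and all these limits exist. -/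
open Filter
open Set

lemma sInf_translate {S : Set ℝ} (hne : S.Nonempty) (hbd : BddBelow S) (c : ℝ) :
    sInf ((fun y => y + c) '' S) = sInf S + c := by
  obtain ⟨b, hb⟩ := hbd
  apply le_antisymm
  · have h1 : sInf ((fun y => y + c) '' S) - c ≤ sInf S := by
      apply le_csInf hne
      intro s hs
      have h2 : sInf ((fun y => y + c) '' S) ≤ s + c :=
        csInf_le ⟨b + c, by rintro _ ⟨t, ht, rfl⟩; have := hb ht; simp only []; linarith⟩
          ⟨s, hs, rfl⟩
      linarith
    linarith
  · apply le_csInf (hne.image _)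
    rintro _ ⟨t, ht, rfl⟩
    have := csInf_le ⟨b, hb⟩ ht
    simp only []
    linarith

lemma fixed_retraction {n : ℕ} (T : (Fin n → ℝ) → (Fin n → ℝ))
    (hmono : ∀ x y : Fin n → ℝ, x ≤ y → T x ≤ T y)
    (hhom : ∀ (x : Fin n → ℝ) (c : ℝ), T (x + fun _ => c) = T x + fun _ => c)
    (u₀ : Fin n → ℝ) (hu : T u₀ = u₀) :
    ∃ q p : (Fin n → ℝ) → (Fin n → ℝ),
      (∀ (x : Fin n → ℝ) (i : Fin n),
        Tendsto (fun k : ℕ => sInf {y : ℝ | ∃ l : ℕ, k ≤ l ∧ y = T^[l] x i})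
          atTop (nhds (q x i))) ∧
      (∀ x : Fin n → ℝ, Tendsto (fun k : ℕ => T^[k] (q x)) atTop (nhds (p x))) ∧
      (∀ x y : Fin n → ℝ, x ≤ y → p x ≤ p y) ∧
      (∀ (x : Fin n → ℝ) (c : ℝ), p (x + fun _ => c) = p x + fun _ => c) ∧
      p ∘ p = p ∧
      Set.range p = {x | T x = x} := by
  -- iterate lemmas
  have itermono : ∀ (l : ℕ) (x y : Fin n → ℝ), x ≤ y → T^[l] x ≤ T^[l] y := by
    intro l
    induction l with
    | zero => intro x y h; simpa using h
    | succ l ih =>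
      intro x y h
      rw [Function.iterate_succ_apply', Function.iterate_succ_apply']
      exact hmono _ _ (ih x y h)
  have iterhom : ∀ (l : ℕ) (x : Fin n → ℝ) (c : ℝ),
      T^[l] (x + fun _ => c) = T^[l] x + fun _ => c := by
    intro l
    induction l with
    | zero => intro x c; simp
    | succ l ih =>
      intro x c
      rw [Function.iterate_succ_apply', Function.iterate_succ_apply', ih, hhom]
  have iterfix : ∀ l : ℕ, T^[l] u₀ = u₀ := fun l => Function.iterate_fixed hu l
  have shiftfix : ∀ (l : ℕ) (c : ℝ), T^[l] (u₀ + fun _ => c) = u₀ + fun _ => c := by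
    intro l c; rw [iterhom, iterfix]
  -- basic pointwise bounds
  have hle : ∀ x : Fin n → ℝ, x ≤ u₀ + fun _ => dist x u₀ := by
    intro x i
    have h1 : dist (x i) (u₀ i) ≤ dist x u₀ := dist_le_pi_dist x u₀ i
    rw [Real.dist_eq] at h1
    have := abs_le.mp h1
    simp only [Pi.add_apply]
    linarith [this.2]
  have hge : ∀ x : Fin n → ℝ, (u₀ + fun _ => -(dist x u₀)) ≤ x := by
    intro x i
    have h1 : dist (x i) (u₀ i) ≤ dist x u₀ := dist_le_pi_dist x u₀ i
    rw [Real.dist_eq] at h1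
    have := abs_le.mp h1
    simp only [Pi.add_apply]
    linarith [this.1]
  have bndhi : ∀ (x : Fin n → ℝ) (l : ℕ) (i : Fin n), T^[l] x i ≤ u₀ i + dist x u₀ := by
    intro x l i
    have := itermono l x _ (hle x)
    have h2 := this i
    rwa [shiftfix] at h2
  have bndlo : ∀ (x : Fin n → ℝ) (l : ℕ) (i : Fin n), u₀ i + -(dist x u₀) ≤ T^[l] x i := by
    intro x l i
    have := itermono l _ x (hge x)
    have h2 := this i
    rwa [shiftfix] at h2
  -- continuity of T
  have nonexp : ∀ x y : Fin n → ℝ, dist (T x) (T y) ≤ dist x y := by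
    intro x y
    rw [dist_pi_le_iff dist_nonneg]
    intro i
    have hxy : x ≤ y + fun _ => dist x y := by
      intro j
      have h1 : dist (x j) (y j) ≤ dist x y := dist_le_pi_dist x y j
      rw [Real.dist_eq] at h1
      have := abs_le.mp h1
      simp only [Pi.add_apply]
      linarith [this.2]
    have hyx : y ≤ x + fun _ => dist x y := by
      intro j
      have h1 : dist (x j) (y j) ≤ dist x y := dist_le_pi_dist x y j
      rw [Real.dist_eq] at h1
      have := abs_le.mp h1
      simp only [Pi.add_apply]
      linarith [this.1]
    have h1 := hmono _ _ hxy
    have h2 := hmono _ _ hyx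
    rw [hhom] at h1 h2
    have h1i := h1 i
    have h2i := h2 i
    simp only [Pi.add_apply] at h1i h2i
    rw [Real.dist_eq, abs_le]
    constructor <;> linarith
  have cont : Continuous T :=
    (LipschitzWith.of_dist_le_mul (K := 1) (by simpa using nonexp)).continuous
  -- the sets and A
  set A : (Fin n → ℝ) → ℕ → (Fin n → ℝ) :=
    fun x k i => sInf {y : ℝ | ∃ l : ℕ, k ≤ l ∧ y = T^[l] x i} with hA
  have Sne : ∀ (x : Fin n → ℝ) (k : ℕ) (i : Fin n),
      {y : ℝ | ∃ l : ℕ, k ≤ l ∧ y = T^[l] x i}.Nonempty :=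
    fun x k i => ⟨T^[k] x i, k, le_rfl, rfl⟩
  have Sbd : ∀ (x : Fin n → ℝ) (k : ℕ) (i : Fin n),
      BddBelow {y : ℝ | ∃ l : ℕ, k ≤ l ∧ y = T^[l] x i} := by
    intro x k i
    refine ⟨u₀ i + -(dist x u₀), ?_⟩
    rintro _ ⟨l, hl, rfl⟩
    exact bndlo x l i
  have Amono : ∀ (x : Fin n → ℝ) (i : Fin n), Monotone fun k => A x k i := by
    intro x i k k' hkk'
    exact csInf_le_csInf (Sbd x k i) (Sne x k' i)
      (by rintro _ ⟨l, hl, rfl⟩; exact ⟨l, hkk'.trans hl, rfl⟩)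
  have AleT : ∀ (x : Fin n → ℝ) (k l : ℕ), k ≤ l → ∀ i, A x k i ≤ T^[l] x i := by
    intro x k l hkl i
    exact csInf_le (Sbd x k i) ⟨l, hkl, rfl⟩
  have Abdd : ∀ (x : Fin n → ℝ) (i : Fin n), BddAbove (range fun k => A x k i) := by
    intro x i
    refine ⟨u₀ i + dist x u₀, ?_⟩
    rintro _ ⟨k, rfl⟩
    exact (AleT x k k le_rfl i).trans (bndhi x k i)
  set q : (Fin n → ℝ) → (Fin n → ℝ) := fun x i => ⨆ k, A x k i with hqdef
  have hq : ∀ (x : Fin n → ℝ) (i : Fin n),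
      Tendsto (fun k : ℕ => A x k i) atTop (nhds (q x i)) :=
    fun x i => tendsto_atTop_ciSup (Amono x i) (Abdd x i)
  have hqA : ∀ (x : Fin n → ℝ) (k : ℕ), A x k ≤ q x :=
    fun x k i => le_ciSup (Abdd x i) k
  have hqvec : ∀ x : Fin n → ℝ, Tendsto (fun k => A x k) atTop (nhds (q x)) :=
    fun x => tendsto_pi_nhds.mpr (hq x)
  -- T (q x) ≤ q x
  have Tq_le : ∀ x : Fin n → ℝ, T (q x) ≤ q x := by
    intro x
    have step : ∀ k : ℕ, T (A x k) ≤ A x (k + 1) := by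
      intro k i
      apply le_csInf (Sne x (k + 1) i)
      rintro _ ⟨m, hm, rfl⟩
      obtain ⟨l, rfl⟩ : ∃ l, m = l + 1 := ⟨m - 1, by omega⟩
      have hkl : k ≤ l := by omega
      have h1 : T (A x k) ≤ T (T^[l] x) := hmono _ _ (fun j => AleT x k l hkl j)
      rw [Function.iterate_succ_apply']
      exact h1 i
    have step2 : ∀ k : ℕ, T (A x k) ≤ q x := fun k => (step k).trans (hqA x (k + 1))
    have hTA : Tendsto (fun k => T (A x k)) atTop (nhds (T (q x))) :=
      (cont.tendsto (q x)).comp (hqvec x)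
    intro i
    have hTAi : Tendsto (fun k => T (A x k) i) atTop (nhds (T (q x) i)) :=
      ((continuous_apply i).tendsto _).comp hTA
    exact le_of_tendsto hTAi (Eventually.of_forall fun k => step2 k i)
  -- decreasing iterates on q x
  have iter_anti : ∀ (x : Fin n → ℝ), Antitone fun k => T^[k] (q x) := by
    intro x
    apply antitone_nat_of_succ_le
    intro k
    rw [Function.iterate_succ_apply]
    exact itermono k _ _ (Tq_le x)
  have iter_bdd : ∀ (x : Fin n → ℝ) (i : Fin n),
      BddBelow (range fun k => T^[k] (q x) i) := by
    intro x i
    exact ⟨u₀ i + -(dist (q x) u₀), by rintro _ ⟨k, rfl⟩; exact bndlo (q x) k i⟩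
  set p : (Fin n → ℝ) → (Fin n → ℝ) := fun x i => ⨅ k, T^[k] (q x) i with hpdef
  have hp_i : ∀ (x : Fin n → ℝ) (i : Fin n),
      Tendsto (fun k : ℕ => T^[k] (q x) i) atTop (nhds (p x i)) :=
    fun x i => tendsto_atTop_ciInf (fun a b hab => iter_anti x hab i) (iter_bdd x i)
  have hp : ∀ x : Fin n → ℝ, Tendsto (fun k : ℕ => T^[k] (q x)) atTop (nhds (p x)) :=
    fun x => tendsto_pi_nhds.mpr (hp_i x)
  -- p x is a fixed point
  have hpfix : ∀ x : Fin n → ℝ, T (p x) = p x := by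
    intro x
    have h1 : Tendsto (fun k : ℕ => T^[k + 1] (q x)) atTop (nhds (T (p x))) := by
      have := (cont.tendsto (p x)).comp (hp x)
      simpa [Function.comp_def, ← Function.iterate_succ_apply'] using this
    have h2 : Tendsto (fun k : ℕ => T^[k + 1] (q x)) atTop (nhds (p x)) :=
      (hp x).comp (tendsto_add_atTop_nat 1)
    exact tendsto_nhds_unique h1 h2
  -- fixed points are fixed by q and p
  have hqfixed : ∀ z : Fin n → ℝ, T z = z → q z = z := by
    intro z hz
    have hiter : ∀ l : ℕ, T^[l] z = z := fun l => Function.iterate_fixed hz l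
    have hAz : ∀ (k : ℕ) (i : Fin n), A z k i = z i := by
      intro k i
      have : {y : ℝ | ∃ l : ℕ, k ≤ l ∧ y = T^[l] z i} = {z i} := by
        ext y
        simp only [Set.mem_setOf_eq, Set.mem_singleton_iff]
        constructor
        · rintro ⟨l, _, rfl⟩; rw [hiter l]
        · rintro rfl; exact ⟨k, le_rfl, by rw [hiter k]⟩
      rw [hA]; simp only []; rw [this, csInf_singleton]
    funext i
    rw [hqdef]
    simp only []
    rw [show (fun k => A z k i) = fun _ => z i from funext fun k => hAz k i, ciSup_const]
  have hpfixed : ∀ z : Fin n → ℝ, T z = z → p z = z := by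
    intro z hz
    have hqz := hqfixed z hz
    funext i
    rw [hpdef]
    simp only []
    rw [show (fun k => T^[k] (q z) i) = fun _ => z i from
      funext fun k => by rw [hqz, Function.iterate_fixed hz k], ciInf_const]
  -- monotonicity
  have qmono : ∀ x y : Fin n → ℝ, x ≤ y → q x ≤ q y := by
    intro x y hxy i
    apply ciSup_mono (Abdd y i)
    intro k
    apply le_csInf (Sne y k i)
    rintro _ ⟨l, hl, rfl⟩
    exact (AleT x k l hl i).trans (itermono l x y hxy i)
  have pmono : ∀ x y : Fin n → ℝ, x ≤ y → p x ≤ p y := by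
    intro x y hxy i
    exact ciInf_mono (iter_bdd x i) (fun k => itermono k _ _ (qmono x y hxy) i)
  -- homogeneity
  have Ahom : ∀ (x : Fin n → ℝ) (c : ℝ) (k : ℕ) (i : Fin n),
      A (x + fun _ => c) k i = A x k i + c := by
    intro x c k i
    have hset : {y : ℝ | ∃ l : ℕ, k ≤ l ∧ y = T^[l] (x + fun _ => c) i}
        = (fun y => y + c) '' {y : ℝ | ∃ l : ℕ, k ≤ l ∧ y = T^[l] x i} := by
      ext y
      simp only [Set.mem_setOf_eq, Set.mem_image]
      constructor
      · rintro ⟨l, hl, rfl⟩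
        exact ⟨T^[l] x i, ⟨l, hl, rfl⟩, by rw [iterhom]; simp⟩
      · rintro ⟨_, ⟨l, hl, rfl⟩, rfl⟩
        exact ⟨l, hl, by rw [iterhom]; simp⟩
    rw [hA]
    simp only []
    rw [hset, sInf_translate (Sne x k i) (Sbd x k i)]
  have qhom : ∀ (x : Fin n → ℝ) (c : ℝ), q (x + fun _ => c) = q x + fun _ => c := by
    intro x c
    funext i
    have h1 : Tendsto (fun k => A (x + fun _ => c) k i) atTop (nhds (q (x + fun _ => c) i)) :=
      hq _ i
    have h2 : Tendsto (fun k => A (x + fun _ => c) k i) atTop (nhds (q x i + c)) := by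
      simp only [Ahom]
      exact (hq x i).add tendsto_const_nhds
    have := tendsto_nhds_unique h1 h2
    simpa using this
  have phom : ∀ (x : Fin n → ℝ) (c : ℝ), p (x + fun _ => c) = p x + fun _ => c := by
    intro x c
    have h1 : Tendsto (fun k : ℕ => T^[k] (q (x + fun _ => c))) atTop
        (nhds (p (x + fun _ => c))) := hp _
    have h2 : Tendsto (fun k : ℕ => T^[k] (q (x + fun _ => c))) atTop
        (nhds (p x + fun _ => c)) := by
      have heq : (fun k : ℕ => T^[k] (q (x + fun _ => c)))
          = fun k : ℕ => T^[k] (q x) + fun _ => c := by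
        funext k
        rw [qhom, iterhom]
      rw [heq]
      exact (hp x).add tendsto_const_nhds
    exact tendsto_nhds_unique h1 h2
  refine ⟨q, p, hq, hp, pmono, phom, ?_, ?_⟩
  · funext x
    exact hpfixed (p x) (hpfix x)
  · ext z
    constructor
    · rintro ⟨x, rfl⟩
      exact hpfix x
    · intro hz
      exact ⟨z, hpfixed z hz⟩


/-- existence of a monotone, additively homogeneous retraction of `ℝⁿ` onto
the eigenspace of a monotone additively homogeneous map with solvable ergodic equation;
when `λ = 0` an explicit retraction is obtained as
`p(x) = lim_k T^k(q(x))` with `q(x) = lim_k inf_{ℓ ≥ k} T^ℓ(x)` (componentwise),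
and all these limits exist. -/
theorem stmt2 {n : ℕ} (hn : 0 < n) (T : (Fin n → ℝ) → (Fin n → ℝ))
    (hmono : ∀ x y : Fin n → ℝ, x ≤ y → T x ≤ T y)
    (hhom : ∀ (x : Fin n → ℝ) (c : ℝ), T (x + fun _ => c) = T x + fun _ => c)
    (u₀ : Fin n → ℝ) (lam : ℝ) (h : T u₀ = (fun _ => lam) + u₀) :
    (∃ p : (Fin n → ℝ) → (Fin n → ℝ),
      (∀ x y : Fin n → ℝ, x ≤ y → p x ≤ p y) ∧
      (∀ (x : Fin n → ℝ) (c : ℝ), p (x + fun _ => c) = p x + fun _ => c) ∧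
      p ∘ p = p ∧
      Set.range p = {x | T x = (fun _ => lam) + x}) ∧
    (lam = 0 →
      ∃ q p : (Fin n → ℝ) → (Fin n → ℝ),
        (∀ (x : Fin n → ℝ) (i : Fin n),
          Tendsto (fun k : ℕ => sInf {y : ℝ | ∃ l : ℕ, k ≤ l ∧ y = T^[l] x i})
            atTop (nhds (q x i))) ∧
        (∀ x : Fin n → ℝ, Tendsto (fun k : ℕ => T^[k] (q x)) atTop (nhds (p x))) ∧
        (∀ x y : Fin n → ℝ, x ≤ y → p x ≤ p y) ∧
        (∀ (x : Fin n → ℝ) (c : ℝ), p (x + fun _ => c) = p x + fun _ => c) ∧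
        p ∘ p = p ∧
        Set.range p = {x | T x = x}) := by
  constructor
  · set S : (Fin n → ℝ) → (Fin n → ℝ) := fun x => T x + fun _ => -lam with hS
    have Smono : ∀ x y : Fin n → ℝ, x ≤ y → S x ≤ S y := by
      intro x y hxy i
      simp only [hS, Pi.add_apply]
      exact add_le_add (hmono x y hxy i) le_rfl
    have Shom : ∀ (x : Fin n → ℝ) (c : ℝ), S (x + fun _ => c) = S x + fun _ => c := by
      intro x c
      simp only [hS]
      rw [hhom]
      funext i
      simp only [Pi.add_apply]
      ring
    have Su : S u₀ = u₀ := by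
      funext i
      simp only [hS, Pi.add_apply, h]
      ring
    obtain ⟨q, p, _, _, pmono, phom, pp, prange⟩ := fixed_retraction S Smono Shom u₀ Su
    refine ⟨p, pmono, phom, pp, ?_⟩
    rw [prange]
    ext z
    simp only [Set.mem_setOf_eq, hS]
    constructor
    · intro hz
      funext i
      have := congrFun hz i
      simp only [Pi.add_apply] at this ⊢
      linarith
    · intro hz
      funext i
      have := congrFun hz i
      simp only [Pi.add_apply] at this ⊢
      linarith
  · intro hlam
    subst hlam
    have hu : T u₀ = u₀ := by
      funext i
      have := congrFun h i
      simpa using this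
    exact fixed_retraction T hmono hhom u₀ hu
end

section
/- Let T : ℝⁿ → ℝⁿ be a perfect-information finite Shapley operator. Assume T admits an invariant half-line with direction ν, i.e., there are u, ν ∈ ℝⁿ and α₀ ∈ ℝ with T(u + αν) = u + (α+1)ν for all α ≥ α₀, and assume likewise that each reduced operator T^σ admits an invariant half-line (these hypotheses hold automatically by Kohlberg's theorem). Then the upper mean payoff 𝜒̄(T) := max_{1≤i≤n} ν_i satisfies 𝜒̄(T) = min_σ max { ⟨m, r^{στ}⟩ : τ a policy of player Max, m ∈ M(P^{στ}) }, where the minimum is over all policies σ of player Min. -/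
/-- Reduced Shapley operator `T^σ` obtained by fixing a policy `σ` of player Min. -/
noncomputable def reducedOp {n : ℕ} (A : Fin n → Type)
    (B : ∀ i, A i → Type) [∀ i a, Fintype (B i a)] [∀ i a, Nonempty (B i a)]
    (r : ∀ i, ∀ a : A i, B i a → ℝ) (P : ∀ i, ∀ a : A i, B i a → Fin n → ℝ)
    (σ : ∀ i, A i) : (Fin n → ℝ) → (Fin n → ℝ) :=
  fun x i => ⨆ b : B i (σ i), (r i (σ i) b + ∑ j, P i (σ i) b j * x j)

/-- `m` is an invariant probability vector of the stochastic matrix `Q` (rows `Q i`). -/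
def isInvProb {n : ℕ} (Q : Fin n → Fin n → ℝ) (m : Fin n → ℝ) : Prop :=
  (∀ i, 0 ≤ m i) ∧ (∑ i, m i) = 1 ∧ ∀ j, ∑ i, m i * Q i j = m j


open Finset Filter Topology

set_option linter.unusedSectionVars false

section helpers

lemma fin_max {ι : Type*} [Finite ι] [Nonempty ι] (f : ι → ℝ) :
    ∃ a, (⨆ b, f b) = f a ∧ ∀ b, f b ≤ f a := by
  obtain ⟨a, ha⟩ := Finite.exists_max f
  exact ⟨a, le_antisymm (ciSup_le ha) (le_ciSup (Set.finite_range f).bddAbove a), ha⟩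

lemma inv_swap {n : ℕ} (Q : Fin n → Fin n → ℝ) (m w : Fin n → ℝ)
    (hinv : ∀ j, ∑ i, m i * Q i j = m j) :
    ∑ i, m i * (∑ j, Q i j * w j) = ∑ j, m j * w j := by
  calc ∑ i, m i * ∑ j, Q i j * w j = ∑ i, ∑ j, m i * Q i j * w j := by
        refine Finset.sum_congr rfl fun i _ => ?_
        rw [Finset.mul_sum]
        exact Finset.sum_congr rfl fun j _ => (mul_assoc _ _ _).symm
    _ = ∑ j, ∑ i, m i * Q i j * w j := Finset.sum_comm
    _ = ∑ j, m j * w j := by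
        refine Finset.sum_congr rfl fun j _ => ?_
        rw [← Finset.sum_mul, hinv j]

end helpers


lemma cesaro' {n : ℕ} (Q : Fin n → Fin n → ℝ)
    (hQ0 : ∀ i j, 0 ≤ Q i j) (hQ1 : ∀ i, ∑ j, Q i j = 1)
    (S : Set (Fin n)) (i₀ : Fin n) (hi₀ : i₀ ∈ S)
    (hS : ∀ i ∈ S, ∀ j, Q i j ≠ 0 → j ∈ S) :
    ∃ m : Fin n → ℝ, (∀ j, 0 ≤ m j) ∧ (∑ j, m j) = 1 ∧
      (∀ l, ∑ j, m j * Q j l = m l) ∧ (∀ j, j ∉ S → m j = 0) := by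
  classical
  set p : ℕ → Fin n → ℝ := fun k => Nat.rec (fun j => if j = i₀ then (1:ℝ) else 0)
      (fun _ q j => ∑ i, q i * Q i j) k with hp
  have hsucc : ∀ k j, p (k+1) j = ∑ i, p k i * Q i j := fun k j => rfl
  have hzero : ∀ j, p 0 j = if j = i₀ then (1:ℝ) else 0 := fun j => rfl
  have hp0 : ∀ k j, 0 ≤ p k j := by
    intro k
    induction k with
    | zero => intro j; rw [hzero]; positivity
    | succ k ih =>
        intro j; rw [hsucc]
        exact Finset.sum_nonneg fun i _ => mul_nonneg (ih i) (hQ0 i j)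
  have hpsum : ∀ k, ∑ j, p k j = 1 := by
    intro k
    induction k with
    | zero => simp [hzero]
    | succ k ih =>
        simp only [hsucc]
        rw [Finset.sum_comm]
        calc ∑ i, ∑ j, p k i * Q i j = ∑ i, p k i := by
              refine Finset.sum_congr rfl fun i _ => ?_
              rw [← Finset.mul_sum, hQ1, mul_one]
          _ = 1 := ih
  have hpS : ∀ k j, j ∉ S → p k j = 0 := by
    intro k
    induction k with
    | zero =>
        intro j hj; rw [hzero]
        rw [if_neg]; rintro rfl; exact hj hi₀
    | succ k ih =>
        intro j hj; rw [hsucc]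
        refine Finset.sum_eq_zero fun i _ => ?_
        by_cases hiS : i ∈ S
        · rw [(by_contra fun h => hj (hS i hiS j h) : Q i j = 0), mul_zero]
        · rw [ih i hiS, zero_mul]
  have hp1 : ∀ k j, p k j ≤ 1 := by
    intro k j
    calc p k j ≤ ∑ i, p k i :=
          Finset.single_le_sum (fun i _ => hp0 k i) (Finset.mem_univ j)
      _ = 1 := hpsum k
  set m' : ℕ → Fin n → ℝ :=
    fun k j => (∑ t ∈ Finset.range (k+1), p t j) / (k+1) with hm'
  have hk1 : ∀ k : ℕ, (0:ℝ) < k + 1 := by intro k; positivity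
  have hm'0 : ∀ k j, 0 ≤ m' k j := by
    intro k j
    exact div_nonneg (Finset.sum_nonneg fun t _ => hp0 t j) (hk1 k).le
  have hm'sum : ∀ k, ∑ j, m' k j = 1 := by
    intro k
    simp only [hm']
    rw [← Finset.sum_div, Finset.sum_comm]
    rw [Finset.sum_congr rfl fun t _ => hpsum t]
    rw [Finset.sum_const, Finset.card_range, nsmul_eq_mul]
    push_cast
    field_simp
  have hm'1 : ∀ k j, m' k j ≤ 1 := by
    intro k j
    calc m' k j ≤ ∑ i, m' k i :=
          Finset.single_le_sum (fun i _ => hm'0 k i) (Finset.mem_univ j)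
      _ = 1 := hm'sum k
  have hm'S : ∀ k j, j ∉ S → m' k j = 0 := by
    intro k j hj
    simp only [hm']
    rw [Finset.sum_eq_zero fun t _ => hpS t j hj, zero_div]
  have hkey : ∀ k l, |∑ j, m' k j * Q j l - m' k l| ≤ 1 / (k+1) := by
    intro k l
    have h1 : ∑ j, m' k j * Q j l
        = (∑ t ∈ Finset.range (k+1), p (t+1) l) / (k+1) := by
      have e : ∀ j, m' k j * Q j l = (∑ t ∈ Finset.range (k+1), p t j * Q j l)/(k+1) := by
        intro j; simp only [hm', div_mul_eq_mul_div, Finset.sum_mul]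
      rw [Finset.sum_congr rfl fun j _ => e j, ← Finset.sum_div]
      congr 1
      rw [Finset.sum_comm]
    have h2 : (∑ t ∈ Finset.range (k+1), p (t+1) l)
        = (∑ t ∈ Finset.range (k+1), p t l) - p 0 l + p (k+1) l := by
      have e1 := Finset.sum_range_succ' (fun t => p t l) (k+1)
      have e2 := Finset.sum_range_succ (fun t => p t l) (k+1)
      rw [e2] at e1
      linarith [e1]
    have h3 : ∑ j, m' k j * Q j l - m' k l = (p (k+1) l - p 0 l) / (k+1) := by
      rw [h1, h2]
      simp only [hm']
      ring
    rw [h3, abs_div, abs_of_pos (hk1 k), div_le_div_iff_of_pos_right (hk1 k)]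
    rw [abs_sub_le_iff]
    constructor <;> nlinarith [hp0 (k+1) l, hp1 (k+1) l, hp0 0 l, hp1 0 l]
  -- compactness
  have hmem : ∀ k, m' k ∈ Set.Icc (0 : Fin n → ℝ) 1 := by
    intro k
    constructor <;> intro j
    · exact hm'0 k j
    · exact hm'1 k j
  obtain ⟨m, hmIcc, φ, hφ, hconv⟩ :=
    (isCompact_Icc (a := (0 : Fin n → ℝ)) (b := 1)).tendsto_subseq hmem
  have hcoord : ∀ j, Tendsto (fun k => m' (φ k) j) atTop (𝓝 (m j)) := by
    intro j
    exact (tendsto_pi_nhds.mp hconv) j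
  refine ⟨m, ?_, ?_, ?_, ?_⟩
  · intro j
    exact ge_of_tendsto' (hcoord j) fun k => hm'0 (φ k) j
  · have h1 : Tendsto (fun k => ∑ j, m' (φ k) j) atTop (𝓝 (∑ j, m j)) :=
      tendsto_finset_sum _ fun j _ => hcoord j
    have h2 : Tendsto (fun k => ∑ j, m' (φ k) j) atTop (𝓝 1) := by
      simp only [hm'sum]; exact tendsto_const_nhds
    exact tendsto_nhds_unique h1 h2
  · intro l
    have h1 : Tendsto (fun k => ∑ j, m' (φ k) j * Q j l - m' (φ k) l) atTop
        (𝓝 (∑ j, m j * Q j l - m l)) :=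
      Tendsto.sub (tendsto_finset_sum _ fun j _ => (hcoord j).mul_const _) (hcoord l)
    have h2 : Tendsto (fun k => ∑ j, m' (φ k) j * Q j l - m' (φ k) l) atTop (𝓝 0) := by
      apply squeeze_zero_norm (a := fun k : ℕ => 1/((k:ℝ)+1)) (fun k => ?_)
        tendsto_one_div_add_atTop_nhds_zero_nat
      calc ‖∑ j, m' (φ k) j * Q j l - m' (φ k) l‖ ≤ 1 / ((φ k : ℝ) + 1) := hkey (φ k) l
        _ ≤ 1 / ((k:ℝ)+1) := by
            apply div_le_div_of_nonneg_left one_pos.le (hk1 k)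
            exact_mod_cast Nat.succ_le_succ (hφ.le_apply)
    have := tendsto_nhds_unique h1 h2
    linarith
  · intro j hj
    have h2 : Tendsto (fun k => m' (φ k) j) atTop (𝓝 0) := by
      simp only [hm'S _ j hj]; exact tendsto_const_nhds
    exact tendsto_nhds_unique (hcoord j) h2

section ops

variable {n : ℕ} (A : Fin n → Type) [∀ i, Fintype (A i)] [∀ i, Nonempty (A i)]
    (B : ∀ i, A i → Type) [∀ i a, Fintype (B i a)] [∀ i a, Nonempty (B i a)]
    (r : ∀ i, ∀ a : A i, B i a → ℝ) (P : ∀ i, ∀ a : A i, B i a → Fin n → ℝ)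

lemma shapley_le_reduced (σ : ∀ i, A i) (x : Fin n → ℝ) (i : Fin n) :
    shapleyOp A B r P x i ≤ reducedOp A B r P σ x i :=
  ciInf_le (Set.finite_range _).bddBelow (σ i)

lemma reduced_mono (hP : ∀ i a b, (∀ j, 0 ≤ P i a b j) ∧ ∑ j, P i a b j = 1)
    (σ : ∀ i, A i) {x y : Fin n → ℝ} (h : ∀ j, x j ≤ y j) (i : Fin n) :
    reducedOp A B r P σ x i ≤ reducedOp A B r P σ y i := by
  apply ciSup_mono (Set.finite_range _).bddAbove
  intro b
  have : ∑ j, P i (σ i) b j * x j ≤ ∑ j, P i (σ i) b j * y j :=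
    Finset.sum_le_sum fun j _ => mul_le_mul_of_nonneg_left (h j) ((hP i (σ i) b).1 j)
  linarith

lemma reduced_homog (hP : ∀ i a b, (∀ j, 0 ≤ P i a b j) ∧ ∑ j, P i a b j = 1)
    (σ : ∀ i, A i) (x : Fin n → ℝ) (c : ℝ) (i : Fin n) :
    reducedOp A B r P σ (fun j => x j + c) i = reducedOp A B r P σ x i + c := by
  unfold reducedOp
  have e : ∀ b : B i (σ i), (r i (σ i) b + ∑ j, P i (σ i) b j * (x j + c))
      = (r i (σ i) b + ∑ j, P i (σ i) b j * x j) + c := by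
    intro b
    have : ∑ j, P i (σ i) b j * (x j + c) = (∑ j, P i (σ i) b j * x j) + c := by
      simp only [mul_add, Finset.sum_add_distrib, ← Finset.sum_mul, (hP i (σ i) b).2, one_mul]
    rw [this]; ring
  rw [iSup_congr e]
  obtain ⟨b0, hb0, hmax⟩ := fin_max (fun b : B i (σ i) => r i (σ i) b + ∑ j, P i (σ i) b j * x j)
  rw [hb0]
  apply le_antisymm
  · exact ciSup_le fun b => by have := hmax b; linarith
  · exact le_ciSup (f := fun b : B i (σ i) =>
      (r i (σ i) b + ∑ j, P i (σ i) b j * x j) + c) (Set.finite_range _).bddAbove b0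

end ops

/-- characterization of the upper mean payoff
`𝜒̄(T) = min_σ max { ⟨m, r^{στ}⟩ : τ, m ∈ M(P^{στ}) }`. -/
theorem stmt3 {n : ℕ} (hn : 0 < n)
    (A : Fin n → Type) [∀ i, Fintype (A i)] [∀ i, Nonempty (A i)]
    (B : ∀ i, A i → Type) [∀ i a, Fintype (B i a)] [∀ i a, Nonempty (B i a)]
    (r : ∀ i, ∀ a : A i, B i a → ℝ) (P : ∀ i, ∀ a : A i, B i a → Fin n → ℝ)
    (hP : ∀ i a b, (∀ j, 0 ≤ P i a b j) ∧ ∑ j, P i a b j = 1)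
    (T : (Fin n → ℝ) → (Fin n → ℝ)) (hT : T = shapleyOp A B r P)
    (u ν : Fin n → ℝ) (α₀ : ℝ)
    (hhalf : ∀ α ≥ α₀, T (u + α • ν) = u + (α + 1) • ν)
    (hhalfσ : ∀ σ : ∀ i, A i, ∃ (uσ νσ : Fin n → ℝ) (ασ : ℝ),
      ∀ α ≥ ασ, reducedOp A B r P σ (uσ + α • νσ) = uσ + (α + 1) • νσ) :
    (⨆ i, ν i) =
      ⨅ σ : ∀ i, A i, sSup {v : ℝ | ∃ (τ : ∀ i, ∀ a : A i, B i a) (m : Fin n → ℝ),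
        isInvProb (fun i j => P i (σ i) (τ i (σ i)) j) m ∧
        v = ∑ i, m i * r i (σ i) (τ i (σ i))} := by
  classical
  subst hT
  haveI : Nonempty (Fin n) := ⟨⟨0, hn⟩⟩
  obtain ⟨istar, histar, histar'⟩ := fin_max ν
  -- a uniform upper bound for all rewards
  haveI : Nonempty ((i : Fin n) × (a : A i) × B i a) :=
    ⟨⟨⟨0, hn⟩, Classical.arbitrary _, Classical.arbitrary _⟩⟩
  obtain ⟨pmax, hpmax⟩ := Finite.exists_max (fun p : (i : Fin n) × (a : A i) × B i a =>
    r p.1 p.2.1 p.2.2)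
  set C : ℝ := r pmax.1 pmax.2.1 pmax.2.2 with hC
  have hrC : ∀ i a b, r i a b ≤ C := fun i a b => hpmax ⟨i, a, b⟩
  -- the candidate sets
  set Sσ : (∀ i, A i) → Set ℝ := fun σ =>
    {v : ℝ | ∃ (τ : ∀ i, ∀ a : A i, B i a) (m : Fin n → ℝ),
      isInvProb (fun i j => P i (σ i) (τ i (σ i)) j) m ∧
      v = ∑ i, m i * r i (σ i) (τ i (σ i))} with hSσ
  have hbdd : ∀ σ, BddAbove (Sσ σ) := by
    intro σ
    refine ⟨C, ?_⟩
    rintro v ⟨τ, m, ⟨hm0, hm1, _⟩, rfl⟩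
    calc ∑ i, m i * r i (σ i) (τ i (σ i)) ≤ ∑ i, m i * C :=
          Finset.sum_le_sum fun i _ => mul_le_mul_of_nonneg_left (hrC _ _ _) (hm0 i)
      _ = C := by rw [← Finset.sum_mul, hm1, one_mul]
  have hne : ∀ σ, (Sσ σ).Nonempty := by
    intro σ
    set τ0 : ∀ i, ∀ a : A i, B i a := fun i a => Classical.arbitrary _ with hτ0
    obtain ⟨m, hm0, hm1, hminv, _⟩ := cesaro' (fun i j => P i (σ i) (τ0 i (σ i)) j)
      (fun i j => (hP i (σ i) (τ0 i (σ i))).1 j) (fun i => (hP i (σ i) (τ0 i (σ i))).2)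
      Set.univ ⟨0, hn⟩ (Set.mem_univ _) (fun _ _ j _ => Set.mem_univ j)
    exact ⟨_, τ0, m, ⟨hm0, hm1, hminv⟩, rfl⟩
  apply le_antisymm
  · -- ⨆ ≤ ⨅ : for every σ, max ν ≤ sSup (Sσ σ)
    rw [histar]
    apply le_ciInf
    intro σ
    obtain ⟨uσ, νσ, ασ, hσ⟩ := hhalfσ σ
    obtain ⟨iσ, hiσ⟩ := Finite.exists_max νσ
    -- Step A : ν istar ≤ νσ iσ via iteration comparison
    have hstepA : ν istar ≤ νσ iσ := by
      set x : Fin n → ℝ := u + α₀ • ν with hx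
      set y : Fin n → ℝ := uσ + ασ • νσ with hy
      have hiterT : ∀ k : ℕ, (shapleyOp A B r P)^[k] x = u + (α₀ + k) • ν := by
        intro k
        induction k with
        | zero => simp [hx]
        | succ k ih =>
            rw [Function.iterate_succ_apply', ih,
              hhalf _ (le_add_of_nonneg_right (Nat.cast_nonneg k))]
            have : (α₀ + (k : ℝ)) + 1 = α₀ + ((k + 1 : ℕ) : ℝ) := by push_cast; ring
            rw [this]
      have hiterσ : ∀ k : ℕ, (reducedOp A B r P σ)^[k] y = uσ + (ασ + k) • νσ := by
        intro k
        induction k with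
        | zero => simp [hy]
        | succ k ih =>
            rw [Function.iterate_succ_apply', ih,
              hσ _ (le_add_of_nonneg_right (Nat.cast_nonneg k))]
            have : (ασ + (k : ℝ)) + 1 = ασ + ((k + 1 : ℕ) : ℝ) := by push_cast; ring
            rw [this]
      obtain ⟨i₀, hi₀⟩ := Finite.exists_max (fun i => x i - y i)
      set c : ℝ := x i₀ - y i₀ with hc
      have hxy : ∀ i, x i ≤ y i + c := fun i => by have := hi₀ i; linarith
      have hcomp : ∀ k : ℕ, ∀ i, (shapleyOp A B r P)^[k] x i
          ≤ (reducedOp A B r P σ)^[k] y i + c := by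
        intro k
        induction k with
        | zero => simpa using hxy
        | succ k ih =>
            intro i
            rw [Function.iterate_succ_apply', Function.iterate_succ_apply']
            calc shapleyOp A B r P ((shapleyOp A B r P)^[k] x) i
                ≤ reducedOp A B r P σ ((shapleyOp A B r P)^[k] x) i :=
                  shapley_le_reduced A B r P σ _ i
              _ ≤ reducedOp A B r P σ (fun j => (reducedOp A B r P σ)^[k] y j + c) i :=
                  reduced_mono A B r P hP σ ih i
              _ = reducedOp A B r P σ ((reducedOp A B r P σ)^[k] y) i + c :=
                  reduced_homog A B r P hP σ _ c i
      by_contra hlt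
      push_neg at hlt
      set δ : ℝ := ν istar - νσ iσ with hδ
      have hδpos : 0 < δ := by simp only [hδ]; linarith
      set Cc : ℝ := uσ istar + ασ * νσ iσ + c - u istar - α₀ * ν istar with hCc
      obtain ⟨k, hk⟩ := exists_nat_gt (max (-ασ) (Cc / δ))
      have hk1 : (-ασ : ℝ) < k := lt_of_le_of_lt (le_max_left _ _) hk
      have hk2 : Cc / δ < k := lt_of_le_of_lt (le_max_right _ _) hk
      have hkC : Cc < k * δ := by
        have := (div_lt_iff₀ hδpos).mp hk2
        linarith
      have hineq := hcomp k istar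
      rw [hiterT k, hiterσ k] at hineq
      simp only [Pi.add_apply, Pi.smul_apply, smul_eq_mul] at hineq
      have hνbound : νσ istar ≤ νσ iσ := hiσ istar
      have hmul : (ασ + k) * νσ istar ≤ (ασ + k) * νσ iσ :=
        mul_le_mul_of_nonneg_left hνbound (by linarith)
      nlinarith [hineq, hmul]
    -- Step B : νσ iσ is attained as a value in Sσ σ
    have hstepB : ∃ v ∈ Sσ σ, νσ iσ ≤ v := by
      set xk : ℕ → Fin n → ℝ := fun k => uσ + (ασ + k) • νσ with hxk
      have hσk : ∀ k : ℕ, ∀ i, reducedOp A B r P σ (xk k) i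
          = uσ i + ((ασ + k) + 1) * νσ i := by
        intro k i
        have := congrFun (hσ (ασ + k) (le_add_of_nonneg_right (Nat.cast_nonneg k))) i
        simpa using this
      set τf : ℕ → ∀ i, ∀ a : A i, B i a := fun k i a =>
        Classical.choose (Finite.exists_max (fun b : B i a =>
          r i a b + ∑ j, P i a b j * xk k j)) with hτf
      have hτmax : ∀ k i a b, r i a b + ∑ j, P i a b j * xk k j
          ≤ r i a (τf k i a) + ∑ j, P i a (τf k i a) j * xk k j := by
        intro k i a b
        exact Classical.choose_spec (Finite.exists_max (fun b : B i a =>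
          r i a b + ∑ j, P i a b j * xk k j)) b
      have hval : ∀ k i, reducedOp A B r P σ (xk k) i
          = r i (σ i) (τf k i (σ i)) + ∑ j, P i (σ i) (τf k i (σ i)) j * xk k j := by
        intro k i
        apply le_antisymm
        · exact ciSup_le (hτmax k i (σ i))
        · exact le_ciSup (f := fun b : B i (σ i) =>
            r i (σ i) b + ∑ j, P i (σ i) b j * xk k j) (Set.finite_range _).bddAbove _
      obtain ⟨k₁, k₂, hk12, hττ⟩ := Finite.exists_ne_map_eq_of_infinite τf
      set τ : ∀ i, ∀ a : A i, B i a := τf k₁ with hτ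
      set Q : Fin n → Fin n → ℝ := fun i j => P i (σ i) (τ i (σ i)) j with hQ
      have hQ0 : ∀ i j, 0 ≤ Q i j := fun i j => (hP i (σ i) (τ i (σ i))).1 j
      have hQ1 : ∀ i, ∑ j, Q i j = 1 := fun i => (hP i (σ i) (τ i (σ i))).2
      set Su : Fin n → ℝ := fun i => ∑ j, Q i j * uσ j with hSu
      set Sν : Fin n → ℝ := fun i => ∑ j, Q i j * νσ j with hSνdef
      have hexp : ∀ (k : ℕ) (i : Fin n), ∑ j, Q i j * xk k j = Su i + (ασ + k) * Sν i := by
        intro k i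
        simp only [hxk, Pi.add_apply, Pi.smul_apply, smul_eq_mul, mul_add,
          Finset.sum_add_distrib, hSu, hSνdef, Finset.mul_sum]
        congr 1
        exact Finset.sum_congr rfl fun j _ => by ring
      have E1 : ∀ i, r i (σ i) (τ i (σ i)) + (Su i + (ασ + k₁) * Sν i)
          = uσ i + ((ασ + k₁) + 1) * νσ i := by
        intro i
        have := hval k₁ i
        rw [hσk k₁ i] at this
        rw [← hexp k₁ i]
        exact this.symm
      have E2 : ∀ i, r i (σ i) (τ i (σ i)) + (Su i + (ασ + k₂) * Sν i)
          = uσ i + ((ασ + k₂) + 1) * νσ i := by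
        intro i
        have := hval k₂ i
        rw [hσk k₂ i] at this
        rw [← hexp k₂ i]
        have hττ' : τf k₂ = τ := hττ.symm ▸ rfl
        rw [hττ'] at this
        exact this.symm
      have hkk : (k₁ : ℝ) ≠ (k₂ : ℝ) := by exact_mod_cast hk12
      have hSν : ∀ i, Sν i = νσ i := by
        intro i
        have h0 : ((k₁ : ℝ) - k₂) * (Sν i - νσ i) = 0 := by
          linear_combination E1 i - E2 i
        rcases mul_eq_zero.mp h0 with h | h
        · exact absurd (by linarith : (k₁ : ℝ) = k₂) hkk
        · linarith
      have hE : ∀ i, r i (σ i) (τ i (σ i)) + Su i = uσ i + νσ i := by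
        intro i
        linear_combination E1 i - (ασ + (k₁ : ℝ)) * hSν i
      -- the argmax set is closed
      set S : Set (Fin n) := {i | νσ i = νσ iσ} with hSdef
      have hclosed : ∀ i ∈ S, ∀ j, Q i j ≠ 0 → j ∈ S := by
        intro i hi j hj
        have hsum0 : ∑ j, Q i j * (νσ iσ - νσ j) = 0 := by
          simp only [mul_sub, Finset.sum_sub_distrib, ← Finset.sum_mul]
          rw [hQ1 i, one_mul]
          have : ∑ j, Q i j * νσ j = Sν i := rfl
          rw [this, hSν i, hi]
          ring
        have hterm := (Finset.sum_eq_zero_iff_of_nonneg (fun l _ =>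
          mul_nonneg (hQ0 i l) (sub_nonneg.mpr (hiσ l)))).mp hsum0 j (Finset.mem_univ j)
        rcases mul_eq_zero.mp hterm with h | h
        · exact absurd h hj
        · show νσ j = νσ iσ
          linarith
      obtain ⟨m, hm0, hm1, hminv, hmS⟩ := cesaro' Q hQ0 hQ1 S iσ rfl hclosed
      have hmν : ∑ j, m j * νσ j = νσ iσ := by
        have e : ∀ j, m j * νσ j = m j * νσ iσ := by
          intro j
          by_cases hj : j ∈ S
          · rw [hj]
          · rw [hmS j hj]; ring
        rw [Finset.sum_congr rfl fun j _ => e j, ← Finset.sum_mul, hm1, one_mul]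
      have hmSu : ∑ i, m i * Su i = ∑ j, m j * uσ j := inv_swap Q m uσ hminv
      have hvalue : ∑ i, m i * r i (σ i) (τ i (σ i)) = νσ iσ := by
        have hsum : ∑ i, m i * (r i (σ i) (τ i (σ i)) + Su i)
            = ∑ i, m i * (uσ i + νσ i) :=
          Finset.sum_congr rfl fun i _ => by rw [hE i]
        simp only [mul_add, Finset.sum_add_distrib] at hsum
        rw [hmSu] at hsum
        rw [hmν] at hsum
        linarith
      exact ⟨∑ i, m i * r i (σ i) (τ i (σ i)), ⟨τ, m, ⟨hm0, hm1, hminv⟩, rfl⟩,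
        le_of_eq hvalue.symm⟩
    obtain ⟨v, hv, hvle⟩ := hstepB
    calc ν istar ≤ νσ iσ := hstepA
      _ ≤ v := hvle
      _ ≤ sSup (Sσ σ) := le_csSup (hbdd σ) hv
  · -- ⨅ ≤ ⨆ : exhibit an optimal σ*
    set x₀ : Fin n → ℝ := u + α₀ • ν with hx₀
    set σs : ∀ i, A i := fun i => Classical.choose (Finite.exists_min (fun a : A i =>
      ⨆ b : B i a, (r i a b + ∑ j, P i a b j * x₀ j))) with hσs
    have hσsmin : ∀ i a, (⨆ b : B i (σs i), (r i (σs i) b + ∑ j, P i (σs i) b j * x₀ j))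
        ≤ ⨆ b : B i a, (r i a b + ∑ j, P i a b j * x₀ j) := by
      intro i a
      exact Classical.choose_spec (Finite.exists_min (fun a : A i =>
        ⨆ b : B i a, (r i a b + ∑ j, P i a b j * x₀ j))) a
    have hred : ∀ i, reducedOp A B r P σs x₀ i = u i + (α₀ + 1) * ν i := by
      intro i
      have heq : shapleyOp A B r P x₀ i = reducedOp A B r P σs x₀ i := by
        apply le_antisymm (shapley_le_reduced A B r P σs x₀ i)
        exact le_ciInf fun a => hσsmin i a
      rw [← heq]
      have := congrFun (hhalf α₀ le_rfl) i
      simpa using this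
    refine le_trans (ciInf_le (Set.finite_range _).bddBelow σs) ?_
    rw [histar]
    apply csSup_le (hne σs)
    rintro v ⟨τ, m, ⟨hm0, hm1, hminv⟩, rfl⟩
    set Q : Fin n → Fin n → ℝ := fun i j => P i (σs i) (τ i (σs i)) j with hQ
    have hub : ∀ i, r i (σs i) (τ i (σs i)) + ∑ j, Q i j * x₀ j ≤ u i + (α₀ + 1) * ν i := by
      intro i
      have h1 : r i (σs i) (τ i (σs i)) + ∑ j, Q i j * x₀ j
          ≤ ⨆ b : B i (σs i), (r i (σs i) b + ∑ j, P i (σs i) b j * x₀ j) :=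
        le_ciSup (f := fun b : B i (σs i) => r i (σs i) b + ∑ j, P i (σs i) b j * x₀ j)
          (Set.finite_range _).bddAbove (τ i (σs i))
      have h2 : reducedOp A B r P σs x₀ i
          = ⨆ b : B i (σs i), (r i (σs i) b + ∑ j, P i (σs i) b j * x₀ j) := rfl
      rw [← h2] at h1
      rw [hred i] at h1
      exact h1
    have hw := Finset.sum_le_sum (fun i (_ : i ∈ Finset.univ) =>
      mul_le_mul_of_nonneg_left (hub i) (hm0 i))
    have eL : ∑ i, m i * (r i (σs i) (τ i (σs i)) + ∑ j, Q i j * x₀ j)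
        = ∑ i, m i * r i (σs i) (τ i (σs i)) + ∑ j, m j * x₀ j := by
      simp only [mul_add, Finset.sum_add_distrib]
      rw [inv_swap Q m x₀ hminv]
    have ex₀ : ∀ j, m j * x₀ j = m j * u j + α₀ * (m j * ν j) := by
      intro j; simp only [hx₀, Pi.add_apply, Pi.smul_apply, smul_eq_mul]; ring
    have eR : ∀ i, m i * (u i + (α₀ + 1) * ν i)
        = m i * u i + (α₀ + 1) * (m i * ν i) := fun i => by ring
    rw [eL] at hw
    rw [Finset.sum_congr rfl fun j _ => ex₀ j] at hw
    rw [Finset.sum_congr rfl fun i _ => eR i] at hw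
    simp only [Finset.sum_add_distrib, ← Finset.mul_sum] at hw
    have hmν : ∑ j, m j * ν j ≤ ν istar := by
      calc ∑ j, m j * ν j ≤ ∑ j, m j * ν istar :=
            Finset.sum_le_sum fun j _ => mul_le_mul_of_nonneg_left (histar' j) (hm0 j)
        _ = ν istar := by rw [← Finset.sum_mul, hm1, one_mul]
    nlinarith [hw, hmν]
end

section
/- Let T : ℝⁿ → ℝⁿ be a one-player Shapley operator admitting an invariant half-line with direction χ, i.e., there are v, χ ∈ ℝⁿ and α₀ ∈ ℝ with T(v + αχ) = v + (α+1)χ for all α ≥ α₀ (this hypothesis holds automatically by Kohlberg's theorem). Then max_{1≤i≤n} χ_i = max { ⟨m, r^τ⟩ : τ a deterministic policy, m ∈ M(P^τ) }. -/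
open Finset Matrix in
/-- Every row-stochastic matrix on a nonempty finite set has an invariant probability vector. -/
lemma exists_stationary_aux {S : Type*} [Fintype S] [Nonempty S] [DecidableEq S]
    (Q : S → S → ℝ) (h0 : ∀ i j, 0 ≤ Q i j) (h1 : ∀ i, ∑ j, Q i j = 1) :
    ∃ m : S → ℝ, (∀ i, 0 ≤ m i) ∧ ∑ i, m i = 1 ∧ ∀ j, ∑ i, m i * Q i j = m j := by
  set A : Matrix S S ℝ := Matrix.of Q - 1 with hA
  have hdet : A.det = 0 := by
    rw [← Matrix.exists_mulVec_eq_zero_iff]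
    refine ⟨fun _ => (1:ℝ), ?_, ?_⟩
    · intro h
      have := congrFun h (Classical.arbitrary S)
      simp at this
    · funext i
      simp [hA, Matrix.mulVec, Matrix.sub_apply, Matrix.one_apply, dotProduct,
        Finset.sum_sub_distrib, h1]
  have hdetT : Aᵀ.det = 0 := by rw [Matrix.det_transpose]; exact hdet
  obtain ⟨u, hu0, hu⟩ := (Matrix.exists_mulVec_eq_zero_iff).mpr hdetT
  have hinv : ∀ a, ∑ b, Q b a * u b = u a := by
    intro a
    have := congrFun hu a
    simp only [Matrix.mulVec, dotProduct, Matrix.transpose_apply, hA, Matrix.sub_apply,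
      Matrix.one_apply, Pi.zero_apply, Matrix.of_apply] at this
    have h3 : ∑ b, (Q b a * u b - (if b = a then 1 else 0) * u b) = 0 := by
      convert this using 2 with b; ring
    rw [Finset.sum_sub_distrib] at h3
    simp at h3
    linarith
  set w : S → ℝ := fun a => |u a| with hw
  have hwle : ∀ a, w a ≤ ∑ b, w b * Q b a := by
    intro a
    calc w a = |∑ b, Q b a * u b| := by rw [hinv]
    _ ≤ ∑ b, |Q b a * u b| := Finset.abs_sum_le_sum_abs _ _
    _ = ∑ b, w b * Q b a := by
        refine Finset.sum_congr rfl fun b _ => ?_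
        rw [abs_mul, abs_of_nonneg (h0 b a), mul_comm]
  have htot : ∑ a, ∑ b, w b * Q b a = ∑ b, w b := by
    rw [Finset.sum_comm]
    refine Finset.sum_congr rfl fun b _ => ?_
    rw [← Finset.mul_sum, h1, mul_one]
  have hweq : ∀ a, ∑ b, w b * Q b a = w a := by
    have hz : ∑ a, ((∑ b, w b * Q b a) - w a) = 0 := by
      rw [Finset.sum_sub_distrib, htot, sub_self]
    have := (Finset.sum_eq_zero_iff_of_nonneg (fun a _ => by linarith [hwle a])).mp hz
    intro a; have := this a (Finset.mem_univ a); linarith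
  have hc : 0 < ∑ a, w a := by
    have : ∃ a, u a ≠ 0 := by
      by_contra h; push_neg at h; exact hu0 (funext fun a => h a)
    obtain ⟨a, ha⟩ := this
    exact Finset.sum_pos' (fun b _ => abs_nonneg _) ⟨a, Finset.mem_univ a, abs_pos.mpr ha⟩
  refine ⟨fun a => w a / (∑ b, w b), fun a => div_nonneg (abs_nonneg _) hc.le, ?_, ?_⟩
  · rw [← Finset.sum_div, div_self hc.ne']
  · intro j
    simp only []
    rw [← hweq j, Finset.sum_div]
    refine Finset.sum_congr rfl fun b _ => ?_
    ring

/-- Invariance passes through the matrix product with any vector. -/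
lemma inv_dot_aux {n : ℕ} (Q : Fin n → Fin n → ℝ) (m : Fin n → ℝ)
    (hinv : ∀ j, ∑ i, m i * Q i j = m j) (x : Fin n → ℝ) :
    ∑ i, m i * ∑ j, Q i j * x j = ∑ j, m j * x j := by
  calc ∑ i, m i * ∑ j, Q i j * x j = ∑ i, ∑ j, m i * Q i j * x j := by
        refine Finset.sum_congr rfl fun i _ => ?_
        rw [Finset.mul_sum]
        exact Finset.sum_congr rfl fun j _ => by ring
    _ = ∑ j, ∑ i, m i * Q i j * x j := Finset.sum_comm
    _ = ∑ j, (∑ i, m i * Q i j) * x j := by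
        refine Finset.sum_congr rfl fun j _ => ?_
        rw [Finset.sum_mul]
    _ = ∑ j, m j * x j := by
        refine Finset.sum_congr rfl fun j _ => ?_
        rw [hinv j]

/-- One-player Shapley operator `T_i(x) = max_{b ∈ B i} ( r i b + ⟨P i b, x⟩ )`. -/
noncomputable def onePlayerOp {n : ℕ} (B : Fin n → Type) [∀ i, Fintype (B i)]
    [∀ i, Nonempty (B i)] (r : ∀ i, B i → ℝ) (P : ∀ i, B i → Fin n → ℝ) :
    (Fin n → ℝ) → (Fin n → ℝ) :=
  fun x i => ⨆ b : B i, (r i b + ∑ j, P i b j * x j)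

/-- for a one-player Shapley operator with an invariant half-line of
direction `χ`, `max_i χ_i = max { ⟨m, r^τ⟩ : τ deterministic policy, m ∈ M(P^τ) }`. -/
theorem stmt5 {n : ℕ} (hn : 0 < n)
    (B : Fin n → Type) [∀ i, Fintype (B i)] [∀ i, Nonempty (B i)]
    (r : ∀ i, B i → ℝ) (P : ∀ i, B i → Fin n → ℝ)
    (hP : ∀ i b, (∀ j, 0 ≤ P i b j) ∧ ∑ j, P i b j = 1)
    (T : (Fin n → ℝ) → (Fin n → ℝ)) (hT : T = onePlayerOp B r P)
    (v χ : Fin n → ℝ) (α₀ : ℝ)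
    (hhalf : ∀ α ≥ α₀, T (v + α • χ) = v + (α + 1) • χ) :
    (⨆ i, χ i) = sSup {val : ℝ | ∃ (τ : ∀ i, B i) (m : Fin n → ℝ),
      isInvProb (fun i j => P i (τ i) j) m ∧ val = ∑ i, m i * r i (τ i)} := by
  classical
  haveI : Nonempty (Fin n) := ⟨⟨0, hn⟩⟩
  have heq : ∀ α ≥ α₀, ∀ i, (⨆ b : B i, (r i b + ∑ j, P i b j * (v j + α * χ j)))
      = v i + (α + 1) * χ i := by
    intro α hα i
    have h := congrFun (hhalf α hα) i
    rw [hT] at h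
    simpa [onePlayerOp] using h
  obtain ⟨i₀, hi₀⟩ := Finite.exists_max χ
  have hsupχ : (⨆ i, χ i) = χ i₀ :=
    le_antisymm (ciSup_le hi₀) (le_ciSup (Finite.bddAbove_range _) i₀)
  have hattain : ∀ i (α : ℝ), ∃ b : B i, r i b + ∑ j, P i b j * (v j + α * χ j)
      = ⨆ b : B i, (r i b + ∑ j, P i b j * (v j + α * χ j)) := by
    intro i α
    obtain ⟨b, hb⟩ := Finite.exists_max (fun b : B i => r i b + ∑ j, P i b j * (v j + α * χ j))
    exact ⟨b, le_antisymm (le_ciSup (f := fun b : B i => r i b + ∑ j, P i b j * (v j + α * χ j)) (Finite.bddAbove_range _) b) (ciSup_le hb)⟩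
  -- choose a policy realizing the invariant half-line equation affinely
  have hpol : ∀ i, ∃ b : B i, (∑ j, P i b j * χ j = χ i) ∧
      (r i b + ∑ j, P i b j * v j = v i + χ i) := by
    intro i
    have hg : ∀ k : ℕ, ∃ b : B i,
        r i b + ∑ j, P i b j * v j + (α₀ + k) * (∑ j, P i b j * χ j)
        = v i + (α₀ + k + 1) * χ i := by
      intro k
      have hα : α₀ + (k:ℝ) ≥ α₀ := le_add_of_nonneg_right (Nat.cast_nonneg k)
      obtain ⟨b, hb⟩ := hattain i (α₀ + k)
      rw [heq _ hα i] at hb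
      refine ⟨b, ?_⟩
      rw [← hb]
      have hdist : ∑ j, P i b j * (v j + (α₀ + (k:ℝ)) * χ j)
           = ∑ j, P i b j * v j + (α₀ + (k:ℝ)) * ∑ j, P i b j * χ j := by
        rw [Finset.mul_sum, ← Finset.sum_add_distrib]
        exact Finset.sum_congr rfl fun j _ => by ring
      rw [hdist]; ring
    choose g hgspec using hg
    obtain ⟨k, k', hkk', hgk⟩ := Finite.exists_ne_map_eq_of_infinite g
    set b := g k with hb
    have e1 := hgspec k
    have e2 := hgspec k'
    rw [← hgk] at e2
    have hk : (k:ℝ) ≠ (k':ℝ) := by exact_mod_cast hkk'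
    have h3 : ((k:ℝ) - (k':ℝ)) * ((∑ j, P i b j * χ j) - χ i) = 0 := by
      linear_combination e1 - e2
    have h4 : (∑ j, P i b j * χ j) = χ i := by
      rcases mul_eq_zero.mp h3 with h | h
      · exact absurd (by linarith [sub_eq_zero.mp h] : (k:ℝ) = (k':ℝ)) hk
      · linarith [sub_eq_zero.mp h]
    refine ⟨b, h4, ?_⟩
    rw [h4] at e1
    linear_combination e1
  choose τ hτ1 hτ2 using hpol
  set Mx := χ i₀ with hMx
  set Sf : Finset (Fin n) := Finset.univ.filter (fun i => χ i = Mx) with hSf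
  have hi₀S : i₀ ∈ Sf := by simp [hSf, hMx]
  haveI : Nonempty ↥Sf := ⟨⟨i₀, hi₀S⟩⟩
  have hzero : ∀ i ∈ Sf, ∀ j, j ∉ Sf → P i (τ i) j = 0 := by
    intro i hi j hj
    have hiχ : χ i = Mx := by simpa [hSf] using hi
    have hsum0 : ∑ j, P i (τ i) j * (Mx - χ j) = 0 := by
      have ht := hτ1 i
      have h1 := (hP i (τ i)).2
      calc ∑ j, P i (τ i) j * (Mx - χ j)
          = (∑ j, P i (τ i) j) * Mx - ∑ j, P i (τ i) j * χ j := by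
            rw [Finset.sum_mul, ← Finset.sum_sub_distrib]
            exact Finset.sum_congr rfl fun j _ => by ring
        _ = 0 := by rw [h1, ht, hiχ]; ring
    have hterm := (Finset.sum_eq_zero_iff_of_nonneg (fun j _ =>
      mul_nonneg ((hP i (τ i)).1 j) (by linarith [hi₀ j] : (0:ℝ) ≤ Mx - χ j))).mp hsum0 j
      (Finset.mem_univ j)
    have hjχ : χ j ≠ Mx := by simpa [hSf] using hj
    exact (mul_eq_zero.mp hterm).resolve_right (sub_ne_zero.mpr (Ne.symm hjχ))
  set Q : ↥Sf → ↥Sf → ℝ := fun a b => P a (τ a) b with hQ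
  have hQ1 : ∀ a : ↥Sf, ∑ b, Q a b = 1 := by
    intro a
    rw [show (∑ b, Q a b) = ∑ b : ↥Sf, (fun j => P a (τ a) j) ↑b from rfl,
      Finset.sum_coe_sort Sf (fun j => P a (τ a) j),
      Finset.sum_subset (Finset.subset_univ Sf) (fun j _ hj => hzero a a.2 j hj)]
    exact (hP a (τ a)).2
  obtain ⟨mq, hmq0, hmq1, hmqinv⟩ := exists_stationary_aux Q
    (fun a b => (hP a (τ a)).1 b) hQ1
  set m : Fin n → ℝ := fun i => if h : i ∈ Sf then mq ⟨i, h⟩ else 0 with hm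
  have hmS : ∀ i (h : i ∈ Sf), m i = mq ⟨i, h⟩ := fun i h => dif_pos h
  have hm0 : ∀ i, 0 ≤ m i := by
    intro i
    by_cases h : i ∈ Sf
    · rw [hmS i h]; exact hmq0 _
    · simp [hm, h]
  have hsum_reduce : ∀ f : Fin n → ℝ, ∑ i, m i * f i = ∑ a : ↥Sf, mq a * f a := by
    intro f
    rw [← Finset.sum_subset (Finset.subset_univ Sf)
        (fun j _ hj => by simp [hm, hj]),
      ← Finset.sum_coe_sort Sf (fun i => m i * f i)]
    exact Finset.sum_congr rfl fun a _ => by rw [hmS a a.2]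
  have hmsum : ∑ i, m i = 1 := by
    have h := hsum_reduce (fun _ => 1)
    simpa using h.trans (by simpa using hmq1)
  have hminv : ∀ j, ∑ i, m i * P i (τ i) j = m j := by
    intro j
    by_cases hj : j ∈ Sf
    · rw [hsum_reduce (fun i => P i (τ i) j), hmS j hj]
      exact hmqinv ⟨j, hj⟩
    · rw [hsum_reduce (fun i => P i (τ i) j)]
      have hz : ∀ a : ↥Sf, P a (τ a) j = 0 := fun a => hzero a a.2 j hj
      simp [hz, hm, hj]
  have hval : ∑ i, m i * r i (τ i) = Mx := by
    have hswap : ∑ i, m i * ∑ j, P i (τ i) j * v j = ∑ j, m j * v j :=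
      inv_dot_aux (fun i j => P i (τ i) j) m hminv v
    calc ∑ i, m i * r i (τ i)
        = ∑ i, (m i * v i + m i * χ i - m i * ∑ j, P i (τ i) j * v j) := by
          refine Finset.sum_congr rfl fun i _ => ?_
          have := hτ2 i
          have hr : r i (τ i) = v i + χ i - ∑ j, P i (τ i) j * v j := by linarith
          rw [hr]; ring
      _ = ∑ i, m i * χ i := by
          rw [Finset.sum_sub_distrib, Finset.sum_add_distrib, hswap]; ring
      _ = ∑ i, m i * Mx := by
          refine Finset.sum_congr rfl fun i _ => ?_
          by_cases h : i ∈ Sf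
          · have hc : χ i = Mx := by simpa [hSf] using h
            rw [hc]
          · simp [hm, h]
      _ = Mx := by rw [← Finset.sum_mul, hmsum, one_mul]
  have hmem : Mx ∈ {val : ℝ | ∃ (τ : ∀ i, B i) (m : Fin n → ℝ),
      isInvProb (fun i j => P i (τ i) j) m ∧ val = ∑ i, m i * r i (τ i)} :=
    ⟨τ, m, ⟨hm0, hmsum, hminv⟩, hval.symm⟩
  have hub : ∀ x ∈ {val : ℝ | ∃ (τ : ∀ i, B i) (m : Fin n → ℝ),
      isInvProb (fun i j => P i (τ i) j) m ∧ val = ∑ i, m i * r i (τ i)}, x ≤ Mx := by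
    rintro x ⟨τ', m'', ⟨h0, h1, hinv⟩, rfl⟩
    have hb : ∀ i, r i (τ' i) + ∑ j, P i (τ' i) j * (v j + α₀ * χ j)
        ≤ v i + (α₀ + 1) * χ i := by
      intro i
      rw [← heq α₀ le_rfl i]
      exact le_ciSup (f := fun b : B i => r i b + ∑ j, P i b j * (v j + α₀ * χ j)) (Finite.bddAbove_range _) (τ' i)
    have hs : ∑ i, m'' i * (r i (τ' i) + ∑ j, P i (τ' i) j * (v j + α₀ * χ j))
        ≤ ∑ i, m'' i * (v i + (α₀ + 1) * χ i) :=
      Finset.sum_le_sum fun i _ => mul_le_mul_of_nonneg_left (hb i) (h0 i)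
    have hswap : ∑ i, m'' i * ∑ j, P i (τ' i) j * (v j + α₀ * χ j)
        = ∑ j, m'' j * (v j + α₀ * χ j) :=
      inv_dot_aux (fun i j => P i (τ' i) j) m'' hinv _
    have e1 : ∑ i, m'' i * (r i (τ' i) + ∑ j, P i (τ' i) j * (v j + α₀ * χ j))
        = ∑ i, m'' i * r i (τ' i) + ∑ j, m'' j * (v j + α₀ * χ j) := by
      rw [← hswap, ← Finset.sum_add_distrib]
      exact Finset.sum_congr rfl fun i _ => by ring
    have e2 : ∑ i, m'' i * (v i + (α₀ + 1) * χ i)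
        = ∑ i, m'' i * (v i + α₀ * χ i) + ∑ i, m'' i * χ i := by
      rw [← Finset.sum_add_distrib]
      exact Finset.sum_congr rfl fun i _ => by ring
    have hrχ : ∑ i, m'' i * r i (τ' i) ≤ ∑ i, m'' i * χ i := by
      rw [e1, e2] at hs
      have e3 : ∑ j, m'' j * (v j + α₀ * χ j) = ∑ i, m'' i * (v i + α₀ * χ i) := rfl
      linarith [hs, e3]
    have hχM : ∑ i, m'' i * χ i ≤ Mx := by
      calc ∑ i, m'' i * χ i ≤ ∑ i, m'' i * Mx :=
            Finset.sum_le_sum fun i _ => mul_le_mul_of_nonneg_left (hi₀ i) (h0 i)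
        _ = Mx := by rw [← Finset.sum_mul, h1, one_mul]
    linarith
  rw [hsupχ]
  exact le_antisymm (le_csSup ⟨Mx, hub⟩ hmem) (csSup_le ⟨Mx, hmem⟩ hub)
end

section
/- Let T : ℝⁿ → ℝⁿ be a one-player Shapley operator such that T(u) = λe + u for some u ∈ ℝⁿ and λ ∈ ℝ. If there is a unique probability vector m* such that ⟨m*, r^τ⟩ = λ and m* ∈ M(P^τ) for some deterministic policy τ, then T has a unique critical class, namely the support { i : m*_i > 0 } of m*. -/
/-- The set `M(Q)` of invariant probability vectors of `Q`. -/
def invProbSet {n : ℕ} (Q : Fin n → Fin n → ℝ) : Set (Fin n → ℝ) :=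
  {m | isInvProb Q m}

/-- A randomized policy: `t i` is a probability vector on `B i`. -/
def isRandPolicy {n : ℕ} (B : Fin n → Type) [∀ i, Fintype (B i)]
    (t : ∀ i, B i → ℝ) : Prop :=
  (∀ i b, 0 ≤ t i b) ∧ ∀ i, (∑ b, t i b) = 1

/-- Transition matrix `P^t` of a randomized policy `t`. -/
def randMatrix {n : ℕ} (B : Fin n → Type) [∀ i, Fintype (B i)]
    (P : ∀ i, B i → Fin n → ℝ) (t : ∀ i, B i → ℝ) : Fin n → Fin n → ℝ :=
  fun i j => ∑ b, t i b * P i b j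

/-- Payment vector `r^t` of a randomized policy `t`. -/
def randPayment {n : ℕ} (B : Fin n → Type) [∀ i, Fintype (B i)]
    (r : ∀ i, B i → ℝ) (t : ∀ i, B i → ℝ) : Fin n → ℝ :=
  fun i => ∑ b, t i b * r i b

/-- `m` is a maximizing measure: `⟨m, r^t⟩ = lam` and `m` is an extreme point of
`M(P^t)` for some randomized policy `t`. -/
def isMaximizing {n : ℕ} (B : Fin n → Type) [∀ i, Fintype (B i)]
    (r : ∀ i, B i → ℝ) (P : ∀ i, B i → Fin n → ℝ) (lam : ℝ) (m : Fin n → ℝ) : Prop :=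
  ∃ t : ∀ i, B i → ℝ, isRandPolicy B t ∧
    (∑ i, m i * randPayment B r t i) = lam ∧
    m ∈ Set.extremePoints ℝ (invProbSet (randMatrix B P t))

/-- `I` is a critical class: it is the support of a maximizing measure and is maximal
with respect to inclusion among all supports of maximizing measures. -/
def isCriticalClass {n : ℕ} (B : Fin n → Type) [∀ i, Fintype (B i)]
    (r : ∀ i, B i → ℝ) (P : ∀ i, B i → Fin n → ℝ) (lam : ℝ) (I : Set (Fin n)) : Prop :=
  (∃ m, isMaximizing B r P lam m ∧ I = {i | 0 < m i}) ∧
  ∀ m', isMaximizing B r P lam m' → I ⊆ {i | 0 < m' i} → {i | 0 < m' i} = I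

/-- Every stochastic matrix has an invariant probability vector. -/
lemma exists_invProb {n : ℕ} (hn : 0 < n) (Q : Fin n → Fin n → ℝ)
    (hQ0 : ∀ i j, 0 ≤ Q i j) (hQ1 : ∀ i, ∑ j, Q i j = 1) :
    ∃ m : Fin n → ℝ, isInvProb Q m := by
  classical
  set A : Matrix (Fin n) (Fin n) ℝ := Matrix.of Q with hA
  have hdet : (A - 1).det = 0 := by
    rw [← Matrix.exists_mulVec_eq_zero_iff]
    refine ⟨fun _ => 1, ?_, ?_⟩
    · intro hc
      have := congrFun hc ⟨0, hn⟩
      simp at this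
    · funext i
      simp [Matrix.sub_mulVec, Matrix.one_mulVec, Matrix.mulVec, dotProduct, hA,
        hQ1 i, Matrix.one_apply, Finset.sum_ite_eq]
  have hdetT : (Matrix.transpose (A - 1)).det = 0 := by rw [Matrix.det_transpose]; exact hdet
  obtain ⟨v, hv0, hv⟩ :=
    (Matrix.exists_mulVec_eq_zero_iff (M := Matrix.transpose (A - 1))).2 hdetT
  have hinv : ∀ i, ∑ j, v j * Q j i = v i := by
    intro i
    have := congrFun hv i
    simp only [Matrix.sub_mulVec, Matrix.mulVec, dotProduct, Matrix.transpose_apply,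
      hA, Matrix.of_apply, Matrix.sub_apply, Pi.sub_apply, Pi.zero_apply, sub_eq_zero, sub_mul,
      Matrix.one_apply, ite_mul, zero_mul, Finset.sum_sub_distrib,
      Finset.sum_ite_eq', Finset.mem_univ, if_true] at this
    rw [one_mul] at this
    rw [← this]
    exact Finset.sum_congr rfl fun j _ => mul_comm _ _
  set w : Fin n → ℝ := fun i => |v i| with hw
  have hwge : ∀ i, w i ≤ ∑ j, w j * Q j i := by
    intro i
    calc w i = |∑ j, v j * Q j i| := by rw [hinv i]
    _ ≤ ∑ j, |v j * Q j i| := Finset.abs_sum_le_sum_abs _ _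
    _ = ∑ j, w j * Q j i := by
        refine Finset.sum_congr rfl fun j _ => ?_
        rw [abs_mul, abs_of_nonneg (hQ0 j i)]
  have htot : ∑ i, ∑ j, w j * Q j i = ∑ j, w j := by
    rw [Finset.sum_comm]
    refine Finset.sum_congr rfl fun j _ => ?_
    rw [← Finset.mul_sum, hQ1 j, mul_one]
  have heq : ∀ i, ∑ j, w j * Q j i = w i := by
    have hsum0 : ∑ i, (∑ j, w j * Q j i - w i) = 0 := by
      rw [Finset.sum_sub_distrib, htot, sub_self]
    intro i
    have := (Finset.sum_eq_zero_iff_of_nonneg (fun i _ => by linarith [hwge i])).1 hsum0 i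
      (Finset.mem_univ i)
    linarith
  have hS : 0 < ∑ i, w i := by
    obtain ⟨i, hi⟩ := Function.ne_iff.1 hv0
    exact Finset.sum_pos' (fun i _ => abs_nonneg _) ⟨i, Finset.mem_univ i, abs_pos.2 hi⟩
  refine ⟨fun i => w i / (∑ k, w k), fun i => div_nonneg (abs_nonneg _) hS.le, ?_, ?_⟩
  · rw [← Finset.sum_div, div_self hS.ne']
  · intro j
    show ∑ i, w i / (∑ k, w k) * Q i j = w j / (∑ k, w k)
    rw [← heq j, Finset.sum_div]
    exact Finset.sum_congr rfl fun i _ => div_mul_eq_mul_div _ _ _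

/-- A stochastic matrix with a nonempty closed set `C` has an invariant probability
vector supported in `C`. -/
lemma exists_invProb_subset {n : ℕ} (Q : Fin n → Fin n → ℝ)
    (hQ0 : ∀ i j, 0 ≤ Q i j) (hQ1 : ∀ i, ∑ j, Q i j = 1)
    (C : Set (Fin n)) (i0 : Fin n) (hi0 : i0 ∈ C)
    (hCcl : ∀ i ∈ C, ∀ j, 0 < Q i j → j ∈ C) :
    ∃ m, isInvProb Q m ∧ ∀ i, 0 < m i → i ∈ C := by
  classical
  set Q' : Fin n → Fin n → ℝ :=
    fun i j => if i ∈ C then Q i j else (if j = i0 then 1 else 0) with hQ'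
  have hQ'0 : ∀ i j, 0 ≤ Q' i j := by
    intro i j
    by_cases hi : i ∈ C <;> by_cases hj : j = i0 <;> simp [hQ', hi, hj, hQ0]
  have hQ'1 : ∀ i, ∑ j, Q' i j = 1 := by
    intro i
    by_cases hi : i ∈ C
    · simp [hQ', hi, hQ1]
    · simp [hQ', hi]
  obtain ⟨m, hm⟩ := exists_invProb i0.pos Q' hQ'0 hQ'1
  have hzero : ∀ j, j ∉ C → m j = 0 := by
    intro j hj
    rw [← hm.2.2 j]
    refine Finset.sum_eq_zero fun i _ => ?_
    by_cases hi : i ∈ C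
    · have : Q i j = 0 := by
        rcases lt_or_eq_of_le (hQ0 i j) with h | h
        · exact absurd (hCcl i hi j h) hj
        · exact h.symm
      simp [hQ', hi, this]
    · have : j ≠ i0 := fun hc => hj (hc ▸ hi0)
      simp [hQ', hi, this]
  refine ⟨m, ⟨hm.1, hm.2.1, ?_⟩, fun i hi => by
    by_contra hic; exact absurd (hzero i hic) (ne_of_gt hi)⟩
  intro j
  rw [← hm.2.2 j]
  refine Finset.sum_congr rfl fun i _ => ?_
  by_cases hi : i ∈ C
  · simp [hQ', hi]
  · simp [hzero i hi]

/-- The support of an extreme invariant probability vector is a minimal closed set. -/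
lemma extreme_supp_subset {n : ℕ} (Q : Fin n → Fin n → ℝ)
    (hQ0 : ∀ i j, 0 ≤ Q i j) (hQ1 : ∀ i, ∑ j, Q i j = 1)
    (m : Fin n → ℝ) (hm : m ∈ Set.extremePoints ℝ (invProbSet Q))
    (D : Set (Fin n)) (i0 : Fin n) (hi0 : i0 ∈ D)
    (hDsub : ∀ i ∈ D, 0 < m i)
    (hDcl : ∀ i ∈ D, ∀ j, 0 < Q i j → j ∈ D) :
    ∀ i, 0 < m i → i ∈ D := by
  classical
  obtain ⟨md, hmd, hmdsupp⟩ := exists_invProb_subset Q hQ0 hQ1 D i0 hi0 hDcl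
  by_contra hcon
  push_neg at hcon
  obtain ⟨k, hk, hkD⟩ := hcon
  have hmdk : md k = 0 := by
    rcases lt_or_eq_of_le (hmd.1 k) with h | h
    · exact absurd (hmdsupp k h) hkD
    · exact h.symm
  set F := Finset.univ.filter (fun i => 0 < md i) with hF
  have hFne : F.Nonempty := by
    by_contra hc
    rw [Finset.not_nonempty_iff_eq_empty, Finset.filter_eq_empty_iff] at hc
    have : ∑ i, md i = 0 := Finset.sum_eq_zero fun i hi =>
      le_antisymm (not_lt.1 (hc hi)) (hmd.1 i)
    rw [hmd.2.1] at this; norm_num at this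
  set ε : ℝ := min (F.inf' hFne m) (1/2) with hε
  have hεle : ∀ i, 0 < md i → ε ≤ m i := fun i hi =>
    le_trans (min_le_left _ _) (Finset.inf'_le m (Finset.mem_filter.2 ⟨Finset.mem_univ i, hi⟩))
  have hε0 : 0 < ε := by
    rw [hε]
    refine lt_min ?_ (by norm_num)
    rw [Finset.lt_inf'_iff]
    intro i hi
    exact hDsub i (hmdsupp i (Finset.mem_filter.1 hi).2)
  have hε1 : ε < 1 := lt_of_le_of_lt (min_le_right _ _) (by norm_num)
  have hmd1 : ∀ i, md i ≤ 1 := fun i => by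
    rw [← hmd.2.1]
    exact Finset.single_le_sum (fun j _ => hmd.1 j) (Finset.mem_univ i)
  set m' : Fin n → ℝ := fun i => (m i - ε * md i) / (1 - ε) with hm'def
  have hmm : m ∈ invProbSet Q := hm.1
  have hnn : ∀ i, 0 ≤ m i - ε * md i := by
    intro i
    rcases lt_or_eq_of_le (hmd.1 i) with h | h
    · have h1 : ε * md i ≤ ε := by nlinarith [hmd1 i]
      linarith [hεle i h]
    · rw [← h]; simpa using hmm.1 i
  have hm'mem : m' ∈ invProbSet Q := by
    refine ⟨fun i => div_nonneg (hnn i) (by linarith), ?_, ?_⟩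
    · show (∑ i, (m i - ε * md i) / (1 - ε)) = 1
      rw [← Finset.sum_div, Finset.sum_sub_distrib, ← Finset.mul_sum, hmm.2.1, hmd.2.1]
      rw [mul_one]
      exact div_self (ne_of_gt (by linarith))
    · intro j
      show ∑ i, ((m i - ε * md i) / (1 - ε)) * Q i j = (m j - ε * md j) / (1 - ε)
      have he : ∀ i, (m i - ε * md i) / (1 - ε) * Q i j
          = (m i * Q i j - ε * (md i * Q i j)) / (1 - ε) := fun i => by ring
      rw [Finset.sum_congr rfl fun i _ => he i, ← Finset.sum_div, Finset.sum_sub_distrib,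
        ← Finset.mul_sum, hmm.2.2 j, hmd.2.2 j]
  have hcomb : m ∈ openSegment ℝ m' md := by
    refine ⟨1 - ε, ε, by linarith, hε0, by ring, ?_⟩
    funext i
    show (1 - ε) * ((m i - ε * md i) / (1 - ε)) + ε * md i = m i
    rw [mul_div_cancel₀ _ (ne_of_gt (by linarith : (0:ℝ) < 1 - ε))]
    ring
  have hmd' : md ∈ invProbSet Q := hmd
  have heqm := hm.2 hmd' hm'mem (by rw [openSegment_symm]; exact hcomb)
  rw [← heqm, hmdk] at hk
  exact lt_irrefl _ hk

lemma sum_affine {n : ℕ} (Q : Fin n → Fin n → ℝ) (a : Fin n → ℝ) (ha : isInvProb Q a)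
    (u : Fin n → ℝ) (lam : ℝ) :
    ∑ i, a i * (lam + u i - ∑ j, Q i j * u j) = lam := by
  have hswap : ∑ i, a i * ∑ j, Q i j * u j = ∑ i, a i * u i := by
    calc ∑ i, a i * ∑ j, Q i j * u j = ∑ i, ∑ j, a i * Q i j * u j := by
          refine Finset.sum_congr rfl fun i _ => ?_
          rw [Finset.mul_sum]
          exact Finset.sum_congr rfl fun j _ => (mul_assoc _ _ _).symm
    _ = ∑ j, (∑ i, a i * Q i j) * u j := by
          rw [Finset.sum_comm]
          exact Finset.sum_congr rfl fun j _ => (Finset.sum_mul _ _ _).symm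
    _ = ∑ j, a j * u j := by
          refine Finset.sum_congr rfl fun j _ => ?_
          rw [ha.2.2 j]
  have he : ∀ i, a i * (lam + u i - ∑ j, Q i j * u j)
      = lam * a i + a i * u i - a i * ∑ j, Q i j * u j := fun i => by ring
  rw [Finset.sum_congr rfl fun i _ => he i, Finset.sum_sub_distrib, Finset.sum_add_distrib,
    ← Finset.mul_sum, ha.2.1, hswap]
  ring

lemma det_value_le {n : ℕ} {B : Fin n → Type} [∀ i, Fintype (B i)]
    (r : ∀ i, B i → ℝ) (P : ∀ i, B i → Fin n → ℝ) (u : Fin n → ℝ) (lam : ℝ)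
    (hub : ∀ i (b : B i), r i b + ∑ j, P i b j * u j ≤ lam + u i)
    (τ : ∀ i, B i) (a : Fin n → ℝ) (ha : isInvProb (fun i j => P i (τ i) j) a) :
    ∑ i, a i * r i (τ i) ≤ lam := by
  calc ∑ i, a i * r i (τ i)
      ≤ ∑ i, a i * (lam + u i - ∑ j, P i (τ i) j * u j) :=
        Finset.sum_le_sum fun i _ =>
          mul_le_mul_of_nonneg_left (by linarith [hub i (τ i)]) (ha.1 i)
  _ = lam := sum_affine _ a ha u lam

lemma det_value_eq {n : ℕ} {B : Fin n → Type} [∀ i, Fintype (B i)]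
    (r : ∀ i, B i → ℝ) (P : ∀ i, B i → Fin n → ℝ) (u : Fin n → ℝ) (lam : ℝ)
    (τ : ∀ i, B i) (a : Fin n → ℝ) (ha : isInvProb (fun i j => P i (τ i) j) a)
    (hopt : ∀ i, 0 < a i → r i (τ i) + ∑ j, P i (τ i) j * u j = lam + u i) :
    ∑ i, a i * r i (τ i) = lam := by
  have he : ∀ i, a i * r i (τ i) = a i * (lam + u i - ∑ j, P i (τ i) j * u j) := by
    intro i
    rcases lt_or_eq_of_le (ha.1 i) with h | h
    · have := hopt i h
      rw [show r i (τ i) = lam + u i - ∑ j, P i (τ i) j * u j from by linarith]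
    · rw [← h, zero_mul, zero_mul]
  rw [Finset.sum_congr rfl fun i _ => he i]
  exact sum_affine _ a ha u lam

lemma comp_slack {n : ℕ} {B : Fin n → Type} [∀ i, Fintype (B i)]
    (r : ∀ i, B i → ℝ) (P : ∀ i, B i → Fin n → ℝ) (u : Fin n → ℝ) (lam : ℝ)
    (hub : ∀ i (b : B i), r i b + ∑ j, P i b j * u j ≤ lam + u i)
    (t : ∀ i, B i → ℝ) (ht : isRandPolicy B t)
    (m : Fin n → ℝ) (hm : isInvProb (randMatrix B P t) m)
    (hval : ∑ i, m i * randPayment B r t i = lam) :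
    ∀ i, 0 < m i → ∀ b, 0 < t i b → r i b + ∑ j, P i b j * u j = lam + u i := by
  set g : Fin n → ℝ :=
    fun i => ∑ b, t i b * (r i b + ∑ j, P i b j * u j - (lam + u i)) with hg
  have hgnp : ∀ i, g i ≤ 0 := fun i =>
    Finset.sum_nonpos fun b _ =>
      mul_nonpos_of_nonneg_of_nonpos (ht.1 i b) (by linarith [hub i b])
  have hgi : ∀ i, g i
      = randPayment B r t i + (∑ j, randMatrix B P t i j * u j) - (lam + u i) := by
    intro i
    have e1 : ∀ b : B i, t i b * (r i b + ∑ j, P i b j * u j - (lam + u i))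
        = t i b * r i b + t i b * ∑ j, P i b j * u j - (lam + u i) * t i b := fun b => by ring
    have e2 : ∑ b, t i b * ∑ j, P i b j * u j = ∑ j, randMatrix B P t i j * u j := by
      calc ∑ b, t i b * ∑ j, P i b j * u j = ∑ b, ∑ j, t i b * P i b j * u j := by
            refine Finset.sum_congr rfl fun b _ => ?_
            rw [Finset.mul_sum]
            exact Finset.sum_congr rfl fun j _ => (mul_assoc _ _ _).symm
      _ = ∑ j, (∑ b, t i b * P i b j) * u j := by
            rw [Finset.sum_comm]
            exact Finset.sum_congr rfl fun j _ => (Finset.sum_mul _ _ _).symm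
      _ = _ := rfl
    show (∑ b, t i b * (r i b + ∑ j, P i b j * u j - (lam + u i))) = _
    rw [Finset.sum_congr rfl fun b _ => e1 b, Finset.sum_sub_distrib, Finset.sum_add_distrib,
      ← Finset.mul_sum, ht.2 i, mul_one, e2]
    rfl
  have hsum : ∑ i, m i * g i = 0 := by
    have e : ∀ i, m i * g i = m i * randPayment B r t i
        - m i * (lam + u i - ∑ j, randMatrix B P t i j * u j) := fun i => by
      rw [hgi i]; ring
    rw [Finset.sum_congr rfl fun i _ => e i, Finset.sum_sub_distrib, hval,
      sum_affine _ m hm u lam, sub_self]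
  have hzero : ∀ i ∈ Finset.univ, m i * g i = 0 :=
    (Finset.sum_eq_zero_iff_of_nonpos fun i _ =>
      mul_nonpos_of_nonneg_of_nonpos (hm.1 i) (hgnp i)).1 hsum
  intro i hi b hb
  have hgi0 : g i = 0 := by
    rcases mul_eq_zero.1 (hzero i (Finset.mem_univ i)) with h | h
    · exact absurd h (ne_of_gt hi)
    · exact h
  have hterm : ∀ b' ∈ Finset.univ, t i b' * (r i b' + ∑ j, P i b' j * u j - (lam + u i)) = 0 :=
    (Finset.sum_eq_zero_iff_of_nonpos fun b' _ =>
      mul_nonpos_of_nonneg_of_nonpos (ht.1 i b') (by linarith [hub i b'])).1 hgi0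
  rcases mul_eq_zero.1 (hterm b (Finset.mem_univ b)) with h | h
  · exact absurd h (ne_of_gt hb)
  · linarith
lemma supp_eq {n : ℕ} {B : Fin n → Type} [∀ i, Fintype (B i)] [∀ i, Nonempty (B i)]
    (r : ∀ i, B i → ℝ) (P : ∀ i, B i → Fin n → ℝ)
    (hP : ∀ i b, (∀ j, 0 ≤ P i b j) ∧ ∑ j, P i b j = 1)
    (u : Fin n → ℝ) (lam : ℝ)
    (hub : ∀ i (b : B i), r i b + ∑ j, P i b j * u j ≤ lam + u i)
    (mstar : Fin n → ℝ)
    (huniq : ∀ m : Fin n → ℝ, ((∀ i, 0 ≤ m i) ∧ (∑ i, m i) = 1 ∧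
      ∃ τ : ∀ i, B i, isInvProb (fun i j => P i (τ i) j) m ∧
        (∑ i, m i * r i (τ i)) = lam) → m = mstar)
    (m : Fin n → ℝ) (hmax : isMaximizing B r P lam m) :
    {i | 0 < m i} = {i | 0 < mstar i} := by
  classical
  obtain ⟨t, ht, hval, hext⟩ := hmax
  set Q := randMatrix B P t with hQdef
  have hm : isInvProb Q m := hext.1
  have hQ0 : ∀ i j, 0 ≤ Q i j := fun i j =>
    Finset.sum_nonneg fun b _ => mul_nonneg (ht.1 i b) ((hP i b).1 j)
  have hQ1 : ∀ i, ∑ j, Q i j = 1 := by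
    intro i
    show ∑ j, ∑ b, t i b * P i b j = 1
    rw [Finset.sum_comm]
    calc ∑ b, ∑ j, t i b * P i b j = ∑ b, t i b := by
          refine Finset.sum_congr rfl fun b _ => ?_
          rw [← Finset.mul_sum, (hP i b).2, mul_one]
    _ = 1 := ht.2 i
  have hCcl : ∀ i, 0 < m i → ∀ j, 0 < Q i j → 0 < m j := by
    intro i hi j hj
    calc (0:ℝ) < m i * Q i j := mul_pos hi hj
    _ ≤ ∑ k, m k * Q k j :=
        Finset.single_le_sum (fun k _ => mul_nonneg (hm.1 k) (hQ0 k j)) (Finset.mem_univ i)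
    _ = m j := hm.2.2 j
  have hcs := comp_slack r P u lam hub t ht m hm hval
  have hQge : ∀ i (b : B i) j, t i b * P i b j ≤ Q i j := fun i b j =>
    Finset.single_le_sum (fun b' _ => mul_nonneg (ht.1 i b') ((hP i b').1 j))
      (Finset.mem_univ b)
  have hsel : ∀ i, ∃ b : B i, 0 < m i → 0 < t i b := by
    intro i
    by_cases hi : 0 < m i
    · by_contra hc
      push_neg at hc
      have : ∑ b, t i b = 0 := Finset.sum_eq_zero fun b _ =>
        le_antisymm ((hc b).2) (ht.1 i b)
      rw [ht.2 i] at this; norm_num at this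
    · exact ⟨Classical.arbitrary (B i), fun h => absurd h hi⟩
  set σ : ∀ i, B i := fun i => Classical.choose (hsel i) with hσdef
  have hσ : ∀ i, 0 < m i → 0 < t i (σ i) := fun i => Classical.choose_spec (hsel i)
  obtain ⟨i0, hi0⟩ : ∃ i0, 0 < m i0 := by
    by_contra hc
    push_neg at hc
    have : ∑ i, m i = 0 := Finset.sum_eq_zero fun i _ => le_antisymm (hc i) (hm.1 i)
    rw [hm.2.1] at this; norm_num at this
  have hB1 : ∀ τ' : ∀ i, B i, (∀ i, 0 < m i → 0 < t i (τ' i)) →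
      isInvProb (fun i j => P i (τ' i) j) mstar ∧ (∀ i, 0 < mstar i → 0 < m i) := by
    intro τ' hτ'
    have hcl' : ∀ i ∈ {k | 0 < m k}, ∀ j, 0 < P i (τ' i) j → j ∈ {k | 0 < m k} := by
      intro i hi j hj
      exact hCcl i hi j (lt_of_lt_of_le (mul_pos (hτ' i hi) hj) (hQge i (τ' i) j))
    obtain ⟨m', hm', hm'supp⟩ := exists_invProb_subset (fun i j => P i (τ' i) j)
      (fun i j => (hP i (τ' i)).1 j) (fun i => (hP i (τ' i)).2) {k | 0 < m k} i0 hi0 hcl'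
    have hval' : ∑ i, m' i * r i (τ' i) = lam := by
      refine det_value_eq r P u lam τ' m' hm' fun i hi => ?_
      exact hcs i (hm'supp i hi) (τ' i) (hτ' i (hm'supp i hi))
    have heq := huniq m' ⟨hm'.1, hm'.2.1, τ', hm', hval'⟩
    rw [← heq]
    exact ⟨hm', hm'supp⟩
  have hsub1 : ∀ i, 0 < mstar i → 0 < m i := (hB1 σ hσ).2
  have hDcl : ∀ i ∈ {k | 0 < mstar k}, ∀ j, 0 < Q i j → j ∈ {k | 0 < mstar k} := by
    intro i hi j hj
    have hex : ∃ b : B i, 0 < t i b ∧ 0 < P i b j := by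
      by_contra hc
      push_neg at hc
      have hz : Q i j = 0 := by
        show (∑ b, t i b * P i b j) = 0
        refine Finset.sum_eq_zero fun b _ => ?_
        rcases lt_or_eq_of_le (ht.1 i b) with h | h
        · rw [le_antisymm (hc b h) ((hP i b).1 j), mul_zero]
        · rw [← h, zero_mul]
      rw [hz] at hj; exact lt_irrefl _ hj
    obtain ⟨b0, hb0t, hb0P⟩ := hex
    have hτ'ok : ∀ k, 0 < m k → 0 < t k (Function.update σ i b0 k) := by
      intro k hk
      by_cases hki : k = i
      · subst hki; rw [Function.update_self]; exact hb0t
      · rw [Function.update_of_ne hki]; exact hσ k hk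
    have hB := (hB1 (Function.update σ i b0) hτ'ok).1
    show 0 < mstar j
    calc (0:ℝ) < mstar i * P i (Function.update σ i b0 i) j := by
          rw [Function.update_self]; exact mul_pos hi hb0P
    _ ≤ ∑ k, mstar k * P k (Function.update σ i b0 k) j :=
        Finset.single_le_sum (fun k _ => mul_nonneg (hB.1 k) ((hP k _).1 j))
          (Finset.mem_univ i)
    _ = mstar j := hB.2.2 j
  have hmstarinv := (hB1 σ hσ).1
  obtain ⟨istar, histar⟩ : ∃ i, 0 < mstar i := by
    by_contra hc
    push_neg at hc
    have : ∑ i, mstar i = 0 := Finset.sum_eq_zero fun i _ =>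
      le_antisymm (hc i) (hmstarinv.1 i)
    rw [hmstarinv.2.1] at this; norm_num at this
  have hfin := extreme_supp_subset Q hQ0 hQ1 m hext {k | 0 < mstar k} istar histar
    (fun i hi => hsub1 i hi) hDcl
  ext i
  exact ⟨fun hi => hfin i hi, fun hi => hsub1 i hi⟩

/-- if there is a unique probability vector `m*` with `⟨m*, r^τ⟩ = λ` and
`m* ∈ M(P^τ)` for some deterministic policy `τ`, then `T` has a unique critical class,
namely the support of `m*`. -/
theorem stmt6 {n : ℕ} (hn : 0 < n)
    (B : Fin n → Type) [∀ i, Fintype (B i)] [∀ i, Nonempty (B i)]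
    (r : ∀ i, B i → ℝ) (P : ∀ i, B i → Fin n → ℝ)
    (hP : ∀ i b, (∀ j, 0 ≤ P i b j) ∧ ∑ j, P i b j = 1)
    (T : (Fin n → ℝ) → (Fin n → ℝ)) (hT : T = onePlayerOp B r P)
    (u : Fin n → ℝ) (lam : ℝ) (h : T u = (fun _ => lam) + u)
    (mstar : Fin n → ℝ)
    (hmstar : (∀ i, 0 ≤ mstar i) ∧ (∑ i, mstar i) = 1 ∧
      ∃ τ : ∀ i, B i, isInvProb (fun i j => P i (τ i) j) mstar ∧
        (∑ i, mstar i * r i (τ i)) = lam)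
    (huniq : ∀ m : Fin n → ℝ, ((∀ i, 0 ≤ m i) ∧ (∑ i, m i) = 1 ∧
      ∃ τ : ∀ i, B i, isInvProb (fun i j => P i (τ i) j) m ∧
        (∑ i, m i * r i (τ i)) = lam) → m = mstar) :
    {I : Set (Fin n) | isCriticalClass B r P lam I} = {{i | 0 < mstar i}} := by
  classical
  obtain ⟨hms0, hms1, τ, hτinv, hτval⟩ := hmstar
  have hub : ∀ i (b : B i), r i b + ∑ j, P i b j * u j ≤ lam + u i := by
    intro i b
    have hTu : onePlayerOp B r P u i = lam + u i := by
      rw [← hT]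
      exact congrFun h i
    rw [← hTu]
    show r i b + ∑ j, P i b j * u j ≤ ⨆ b : B i, (r i b + ∑ j, P i b j * u j)
    exact le_ciSup (f := fun b : B i => r i b + ∑ j, P i b j * u j)
      (Set.Finite.bddAbove (Set.finite_range _)) b
  set tstar : ∀ i, B i → ℝ := fun i b => if b = τ i then 1 else 0 with htstar
  have htsP : isRandPolicy B tstar := by
    constructor
    · intro i b; by_cases hb : b = τ i <;> simp [htstar, hb]
    · intro i; simp [htstar]
  have hpay : randPayment B r tstar = fun i => r i (τ i) := by
    funext i
    show (∑ b, (if b = τ i then (1:ℝ) else 0) * r i b) = r i (τ i)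
    simp [ite_mul]
  have hmat : randMatrix B P tstar = fun i j => P i (τ i) j := by
    funext i j
    show (∑ b, (if b = τ i then (1:ℝ) else 0) * P i b j) = P i (τ i) j
    simp [ite_mul]
  have hmaxstar : isMaximizing B r P lam mstar := by
    refine ⟨tstar, htsP, ?_, ?_⟩
    · rw [hpay]; exact hτval
    · rw [hmat]
      refine ⟨hτinv, ?_⟩
      intro x1 hx1 x2 hx2 hseg
      obtain ⟨a, b, ha, hb, hab, habm⟩ := hseg
      have hx1inv : isInvProb (fun i j => P i (τ i) j) x1 := hx1
      have hx2inv : isInvProb (fun i j => P i (τ i) j) x2 := hx2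
      have hv1 : ∑ i, x1 i * r i (τ i) ≤ lam := det_value_le r P u lam hub τ x1 hx1inv
      have hv2 : ∑ i, x2 i * r i (τ i) ≤ lam := det_value_le r P u lam hub τ x2 hx2inv
      have hcomb : a * (∑ i, x1 i * r i (τ i)) + b * (∑ i, x2 i * r i (τ i)) = lam := by
        rw [← hτval, Finset.mul_sum, Finset.mul_sum, ← Finset.sum_add_distrib]
        refine Finset.sum_congr rfl fun i _ => ?_
        have hmi : mstar i = a * x1 i + b * x2 i := by rw [← habm]; rfl
        rw [hmi]; ring
      have h3 : a * lam + b * lam = lam := by rw [← add_mul, hab, one_mul]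
      have hv1e : ∑ i, x1 i * r i (τ i) = lam := by
        by_contra hne
        have hlt := lt_of_le_of_ne hv1 hne
        have h1 := mul_lt_mul_of_pos_left hlt ha
        have h2 := mul_le_mul_of_nonneg_left hv2 hb.le
        linarith
      have hv2e : ∑ i, x2 i * r i (τ i) = lam := by
        by_contra hne
        have hlt := lt_of_le_of_ne hv2 hne
        have h1 := mul_lt_mul_of_pos_left hlt hb
        have h2 := mul_le_mul_of_nonneg_left hv1 ha.le
        linarith
      exact huniq x1 ⟨hx1inv.1, hx1inv.2.1, τ, hx1inv, hv1e⟩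
  have hsupp : ∀ m, isMaximizing B r P lam m → {i | 0 < m i} = {i | 0 < mstar i} :=
    fun m hm => supp_eq r P hP u lam hub mstar huniq m hm
  ext I
  simp only [Set.mem_setOf_eq, Set.mem_singleton_iff]
  constructor
  · rintro ⟨⟨m, hmx, rfl⟩, -⟩
    exact hsupp m hmx
  · rintro rfl
    exact ⟨⟨mstar, hmaxstar, rfl⟩, fun m' hm' _ => hsupp m' hm'⟩
end

section
/- Let T : ℝⁿ → ℝⁿ be a one-player Shapley operator such that T(u) = λe + u for some u ∈ ℝⁿ and λ ∈ ℝ. If there is a unique probability vector m such that ⟨m, r^τ⟩ = λ and m ∈ M(P^τ) for some deterministic policy τ, then the eigenvector of T is unique up to an additive constant: every v ∈ ℝⁿ with T(v) = λe + v satisfies v = u + ce for some c ∈ ℝ. -/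
open Finset Filter Topology in
lemma inv_exists {n : ℕ} (Q : Fin n → Fin n → ℝ)
    (hQ : ∀ i, (∀ j, 0 ≤ Q i j) ∧ ∑ j, Q i j = 1)
    (S : Finset (Fin n)) (hS : S.Nonempty)
    (hclosed : ∀ i ∈ S, ∀ j, Q i j ≠ 0 → j ∈ S) :
    ∃ m : Fin n → ℝ, isInvProb Q m ∧ ∀ i, i ∉ S → m i = 0 := by
  classical
  set K : Set (Fin n → ℝ) :=
    {m | (∀ i, 0 ≤ m i) ∧ (∑ i, m i) = 1 ∧ ∀ i, i ∉ S → m i = 0} with hK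
  set g : (Fin n → ℝ) → (Fin n → ℝ) := fun m j => ∑ i, m i * Q i j with hg
  have hgK : ∀ m ∈ K, g m ∈ K := by
    rintro m ⟨h1, h2, h3⟩
    refine ⟨fun j => Finset.sum_nonneg fun i _ => mul_nonneg (h1 i) ((hQ i).1 j), ?_, ?_⟩
    · rw [hg]; simp only
      rw [Finset.sum_comm]
      calc ∑ i, ∑ j, m i * Q i j = ∑ i, m i * ∑ j, Q i j := by
            simp [Finset.mul_sum]
        _ = 1 := by simp only [(hQ _).2, mul_one, h2]
    · intro j hj
      apply Finset.sum_eq_zero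
      intro i _
      by_cases hiS : i ∈ S
      · have : Q i j = 0 := by
          by_contra hne
          exact hj (hclosed i hiS j hne)
        simp [this]
      · simp [h3 i hiS]
  set p : Fin n → ℝ := fun i => if i ∈ S then (1 : ℝ) / S.card else 0 with hp
  have hScard : (0:ℝ) < S.card := by exact_mod_cast Finset.card_pos.mpr hS
  have hpK : p ∈ K := by
    refine ⟨fun i => ?_, ?_, fun i hi => by simp [hp, hi]⟩
    · rw [hp]; dsimp only
      split <;> positivity
    · rw [hp]
      rw [Finset.sum_ite_mem, Finset.univ_inter, Finset.sum_const, nsmul_eq_mul]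
      field_simp
  set x : ℕ → Fin n → ℝ := fun k => g^[k] p with hx
  have hxK : ∀ k, x k ∈ K := by
    intro k
    induction k with
    | zero => simpa [hx] using hpK
    | succ k ih =>
      have : x (k+1) = g (x k) := by
        rw [hx]; simp [Function.iterate_succ_apply']
      rw [this]; exact hgK _ ih
  have hxsucc : ∀ k, x (k+1) = g (x k) := by
    intro k; rw [hx]; simp [Function.iterate_succ_apply']
  have hxbound : ∀ k j, |x k j| ≤ 1 := by
    intro k j
    obtain ⟨h1, h2, _⟩ := hxK k
    rw [abs_of_nonneg (h1 j)]
    calc x k j ≤ ∑ i, x k i := Finset.single_le_sum (fun i _ => h1 i) (mem_univ j)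
      _ = 1 := h2
  set a : ℕ → Fin n → ℝ := fun N j => (∑ k ∈ Finset.range (N+1), x k j) / (N+1) with ha
  have haK : ∀ N, a N ∈ K := by
    intro N
    have hNpos : (0:ℝ) < (N:ℝ) + 1 := by positivity
    refine ⟨fun j => ?_, ?_, fun i hi => ?_⟩
    · exact div_nonneg (Finset.sum_nonneg fun k _ => (hxK k).1 j) hNpos.le
    · rw [ha]; dsimp only
      rw [← Finset.sum_div, Finset.sum_comm]
      rw [show ∑ k ∈ Finset.range (N+1), ∑ i, x k i = ∑ k ∈ Finset.range (N+1), 1 from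
        Finset.sum_congr rfl fun k _ => (hxK k).2.1]
      simp
      field_simp
      exact hNpos.ne'
    · rw [ha]; dsimp only
      rw [Finset.sum_congr rfl fun k _ => (hxK k).2.2 i hi]
      simp
  have hga : ∀ N j, g (a N) j = a N j + (x (N+1) j - x 0 j) / (N+1) := by
    intro N j
    have h1 : g (a N) j = (∑ k ∈ Finset.range (N+1), x (k+1) j) / (N+1) := by
      rw [hg]; dsimp only
      rw [ha]; dsimp only
      calc ∑ i, (∑ k ∈ Finset.range (N+1), x k i) / (N+1) * Q i j
          = (∑ i, (∑ k ∈ Finset.range (N+1), x k i) * Q i j) / ((N:ℝ)+1) := by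
            rw [Finset.sum_div]
            exact Finset.sum_congr rfl fun i _ => div_mul_eq_mul_div _ _ _
        _ = (∑ k ∈ Finset.range (N+1), ∑ i, x k i * Q i j) / ((N:ℝ)+1) := by
            congr 1
            rw [← Finset.sum_comm]
            exact Finset.sum_congr rfl fun i _ => Finset.sum_mul _ _ _
        _ = (∑ k ∈ Finset.range (N+1), x (k+1) j) / ((N:ℝ)+1) := by
            congr 1
            refine Finset.sum_congr rfl fun k _ => ?_
            exact (congrFun (hxsucc k) j).symm
    have h2 : ∑ k ∈ Finset.range (N+1), x (k+1) j
        = ∑ k ∈ Finset.range (N+1), x k j + x (N+1) j - x 0 j := by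
      have e1 := Finset.sum_range_succ (fun k => x k j) (N+1)
      have e2 := Finset.sum_range_succ' (fun k => x k j) (N+1)
      linarith
    rw [h1, h2, ha]
    ring
  -- K is bounded and closed
  have hKbdd : Bornology.IsBounded K := by
    apply Bornology.IsBounded.subset (Metric.isBounded_closedBall (x := (0 : Fin n → ℝ)) (r := 1))
    rintro m ⟨h1, h2, _⟩
    rw [Metric.mem_closedBall, dist_zero_right]
    rw [pi_norm_le_iff_of_nonneg zero_le_one]
    intro i
    rw [Real.norm_eq_abs, abs_of_nonneg (h1 i)]
    calc m i ≤ ∑ i, m i := Finset.single_le_sum (fun i _ => h1 i) (mem_univ i)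
      _ = 1 := h2
  have hKclosed : IsClosed K := by
    have : K = (⋂ i, {m : Fin n → ℝ | 0 ≤ m i}) ∩
        ({m : Fin n → ℝ | ∑ i, m i = 1} ∩ ⋂ i ∈ {i : Fin n | i ∉ S}, {m : Fin n → ℝ | m i = 0}) := by
      ext m
      constructor
      · rintro ⟨h1, h2, h3⟩
        exact ⟨Set.mem_iInter.mpr h1, h2, Set.mem_iInter₂.mpr h3⟩
      · rintro ⟨h1, h2, h3⟩
        exact ⟨fun i => Set.mem_iInter.mp h1 i, h2, fun i hi => Set.mem_iInter₂.mp h3 i hi⟩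
    rw [this]
    refine IsClosed.inter (isClosed_iInter fun i => isClosed_le continuous_const
      (continuous_apply i)) (IsClosed.inter (isClosed_eq
      (continuous_finset_sum _ fun i _ => continuous_apply i) continuous_const) ?_)
    exact isClosed_biInter fun i _ => isClosed_eq (continuous_apply i) continuous_const
  obtain ⟨m₀, hm₀, φ, hφ, hconv⟩ := tendsto_subseq_of_bounded hKbdd haK
  rw [hKclosed.closure_eq] at hm₀
  obtain ⟨hm1, hm2, hm3⟩ := hm₀
  have hconvj : ∀ j, Tendsto (fun N => a (φ N) j) atTop (𝓝 (m₀ j)) := by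
    intro j
    exact (tendsto_pi_nhds.mp hconv) j
  refine ⟨m₀, ⟨hm1, hm2, ?_⟩, hm3⟩
  intro j
  -- the sequence N ↦ g (a (φ N)) j tends to both g m₀ j and m₀ j
  have hA : Tendsto (fun N => g (a (φ N)) j) atTop (𝓝 (∑ i, m₀ i * Q i j)) := by
    rw [hg]; dsimp only
    exact tendsto_finset_sum _ fun i _ => (hconvj i).mul_const (Q i j)
  have herr : Tendsto (fun N => (x (φ N + 1) j - x 0 j) / ((φ N : ℝ) + 1)) atTop (𝓝 0) := by
    refine squeeze_zero_norm (f := fun N => (x (φ N + 1) j - x 0 j) / ((φ N : ℝ) + 1)) (a := fun N => 2 * (1 / ((N:ℝ)+1))) ?_ ?_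
    · intro N
      rw [Real.norm_eq_abs, abs_div, abs_of_pos (by positivity : (0:ℝ) < (φ N : ℝ) + 1)]
      have hnum : |x (φ N + 1) j - x 0 j| ≤ 2 := by
        calc |x (φ N + 1) j - x 0 j| ≤ |x (φ N + 1) j| + |x 0 j| := abs_sub _ _
          _ ≤ 2 := by linarith [hxbound (φ N + 1) j, hxbound 0 j]
      have hden : (N:ℝ) + 1 ≤ (φ N : ℝ) + 1 := by
        have hNφ : N ≤ φ N := hφ.le_apply
        have : (N:ℝ) ≤ (φ N : ℝ) := by exact_mod_cast hNφ
        linarith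
      calc |x (φ N + 1) j - x 0 j| / ((φ N : ℝ) + 1)
          ≤ 2 / ((φ N : ℝ) + 1) := by gcongr
        _ ≤ 2 / ((N:ℝ) + 1) := by
            apply div_le_div_of_nonneg_left (by norm_num) (by positivity) hden
        _ = 2 * (1 / ((N:ℝ)+1)) := by ring
    · have := tendsto_one_div_add_atTop_nhds_zero_nat (𝕜 := ℝ)
      have h2 := this.const_mul (2:ℝ)
      simpa using h2
  have hB : Tendsto (fun N => g (a (φ N)) j) atTop (𝓝 (m₀ j)) := by
    have : (fun N => g (a (φ N)) j)
        = fun N => a (φ N) j + (x (φ N + 1) j - x 0 j) / ((φ N : ℝ) + 1) := by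
      funext N; exact hga (φ N) j
    rw [this]
    simpa using (hconvj j).add herr
  exact tendsto_nhds_unique hA hB

/-- Pick a policy achieving the sup at a fixed point `v`; get exact equations plus
inequalities for the other fixed point. -/
lemma policy_choice {n : ℕ}
    (B : Fin n → Type) [∀ i, Fintype (B i)] [∀ i, Nonempty (B i)]
    (r : ∀ i, B i → ℝ) (P : ∀ i, B i → Fin n → ℝ)
    (v : Fin n → ℝ) (lam : ℝ) (h : onePlayerOp B r P v = (fun _ => lam) + v) :
    ∃ τ : ∀ i, B i, (∀ i, r i (τ i) + ∑ j, P i (τ i) j * v j = lam + v i) ∧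
      (∀ i (b : B i), r i b + ∑ j, P i b j * v j ≤ lam + v i) := by
  have key : ∀ i, onePlayerOp B r P v i = lam + v i := by
    intro i; rw [h]; rfl
  have hchoose : ∀ i, ∃ b : B i, (r i b + ∑ j, P i b j * v j)
      = ⨆ b : B i, (r i b + ∑ j, P i b j * v j) := fun i => exists_eq_ciSup_of_finite
  choose τ hτ using hchoose
  refine ⟨τ, fun i => by rw [hτ i]; exact key i, fun i b => ?_⟩
  rw [← key i]
  exact le_ciSup (f := fun b : B i => r i b + ∑ j, P i b j * v j) (Finite.bddAbove_range _) b

/-- Invariant measures of a policy optimal at a fixed point give value `lam`. -/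
lemma inv_value {n : ℕ} (Q : Fin n → Fin n → ℝ) (rr : Fin n → ℝ)
    (v : Fin n → ℝ) (lam : ℝ) (heq : ∀ i, rr i + ∑ j, Q i j * v j = lam + v i)
    (m : Fin n → ℝ) (hm : isInvProb Q m) : ∑ i, m i * rr i = lam := by
  obtain ⟨hm1, hm2, hm3⟩ := hm
  have e1 : ∑ i, m i * (rr i + ∑ j, Q i j * v j) = ∑ i, m i * (lam + v i) := by
    exact Finset.sum_congr rfl fun i _ => by rw [heq i]
  have e2 : ∑ i, m i * (rr i + ∑ j, Q i j * v j)
      = ∑ i, m i * rr i + ∑ j, m j * v j := by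
    have hterm : ∀ i, m i * (rr i + ∑ j, Q i j * v j)
        = m i * rr i + ∑ j, m i * Q i j * v j := by
      intro i
      rw [mul_add, Finset.mul_sum]
      congr 1
      exact Finset.sum_congr rfl fun j _ => by ring
    rw [Finset.sum_congr rfl fun i _ => hterm i, Finset.sum_add_distrib]
    congr 1
    rw [Finset.sum_comm]
    exact Finset.sum_congr rfl fun j _ => by rw [← Finset.sum_mul, hm3 j]
  have e3 : ∑ i, m i * (lam + v i) = lam + ∑ j, m j * v j := by
    rw [Finset.sum_congr rfl fun i _ => mul_add (m i) lam (v i), Finset.sum_add_distrib,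
      ← Finset.sum_mul, hm2, one_mul]
  rw [e2, e3] at e1
  linarith

/-- if there is a unique probability vector `m` with `⟨m, r^τ⟩ = λ` and
`m ∈ M(P^τ)` for some deterministic policy `τ`, then the eigenvector of `T` is unique
up to an additive constant. -/
theorem stmt7 {n : ℕ} (hn : 0 < n)
    (B : Fin n → Type) [∀ i, Fintype (B i)] [∀ i, Nonempty (B i)]
    (r : ∀ i, B i → ℝ) (P : ∀ i, B i → Fin n → ℝ)
    (hP : ∀ i b, (∀ j, 0 ≤ P i b j) ∧ ∑ j, P i b j = 1)
    (T : (Fin n → ℝ) → (Fin n → ℝ)) (hT : T = onePlayerOp B r P)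
    (u : Fin n → ℝ) (lam : ℝ) (h : T u = (fun _ => lam) + u)
    (huniq : ∃! m : Fin n → ℝ,
      ∃ τ : ∀ i, B i, isInvProb (fun i j => P i (τ i) j) m ∧
        (∑ i, m i * r i (τ i)) = lam) :
    ∀ v : Fin n → ℝ, T v = (fun _ => lam) + v → ∃ c : ℝ, v = u + (fun _ => c) := by
  classical
  subst hT
  intro v hv
  haveI : Nonempty (Fin n) := ⟨⟨0, hn⟩⟩
  obtain ⟨τ, hτeq, hτle⟩ := policy_choice B r P v lam hv
  obtain ⟨σ, hσeq, hσle⟩ := policy_choice B r P u lam h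
  set w : Fin n → ℝ := fun i => v i - u i with hw
  -- w ≤ P^τ w and P^σ w ≤ w
  have hwτ : ∀ i, w i ≤ ∑ j, P i (τ i) j * w j := by
    intro i
    have h1 := hτeq i
    have h2 := hτle i (τ i)
    have h3 : r i (τ i) + ∑ j, P i (τ i) j * u j ≤ lam + u i := hσle i (τ i) |>.trans_eq rfl
    have hsum : ∑ j, P i (τ i) j * w j
        = ∑ j, P i (τ i) j * v j - ∑ j, P i (τ i) j * u j := by
      rw [← Finset.sum_sub_distrib]
      exact Finset.sum_congr rfl fun j _ => by rw [hw]; ring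
    rw [hsum, hw]
    dsimp only
    linarith
  have hwσ : ∀ i, ∑ j, P i (σ i) j * w j ≤ w i := by
    intro i
    have h1 := hσeq i
    have h3 : r i (σ i) + ∑ j, P i (σ i) j * v j ≤ lam + v i := hτle i (σ i) |>.trans_eq rfl
    have hsum : ∑ j, P i (σ i) j * w j
        = ∑ j, P i (σ i) j * v j - ∑ j, P i (σ i) j * u j := by
      rw [← Finset.sum_sub_distrib]
      exact Finset.sum_congr rfl fun j _ => by rw [hw]; ring
    rw [hsum, hw]
    dsimp only
    linarith
  -- argmax and argmin sets
  obtain ⟨imax, himax⟩ := Finite.exists_max w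
  obtain ⟨imin, himin⟩ := Finite.exists_min w
  set c : ℝ := w imax with hc
  set c' : ℝ := w imin with hc'
  set S : Finset (Fin n) := Finset.univ.filter (fun i => w i = c) with hS
  set S' : Finset (Fin n) := Finset.univ.filter (fun i => w i = c') with hS'
  have hSclosed : ∀ i ∈ S, ∀ j, P i (τ i) j ≠ 0 → j ∈ S := by
    intro i hi j hne
    rw [hS, Finset.mem_filter] at hi ⊢
    refine ⟨Finset.mem_univ j, ?_⟩
    have hic : w i = c := hi.2
    have hzero : ∑ j, P i (τ i) j * (c - w j) = 0 := by
      have : ∑ j, P i (τ i) j * (c - w j)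
          = c * (∑ j, P i (τ i) j) - ∑ j, P i (τ i) j * w j := by
        rw [Finset.mul_sum, ← Finset.sum_sub_distrib]
        exact Finset.sum_congr rfl fun j _ => by ring
      rw [this, (hP i (τ i)).2, mul_one]
      have hle := hwτ i
      have hge : ∑ j, P i (τ i) j * w j ≤ c := by
        calc ∑ j, P i (τ i) j * w j ≤ ∑ j, P i (τ i) j * c :=
          Finset.sum_le_sum fun j _ => mul_le_mul_of_nonneg_left (himax j) ((hP i (τ i)).1 j)
        _ = c := by rw [← Finset.sum_mul, (hP i (τ i)).2, one_mul]
      linarith [hic ▸ hle]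
    have hterm := (Finset.sum_eq_zero_iff_of_nonneg (fun j _ =>
      mul_nonneg ((hP i (τ i)).1 j) (by linarith [himax j] : (0:ℝ) ≤ c - w j))).mp hzero j
      (Finset.mem_univ j)
    rcases mul_eq_zero.mp hterm with h0 | h0
    · exact absurd h0 hne
    · linarith
  have hS'closed : ∀ i ∈ S', ∀ j, P i (σ i) j ≠ 0 → j ∈ S' := by
    intro i hi j hne
    rw [hS', Finset.mem_filter] at hi ⊢
    refine ⟨Finset.mem_univ j, ?_⟩
    have hic : w i = c' := hi.2
    have hzero : ∑ j, P i (σ i) j * (w j - c') = 0 := by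
      have : ∑ j, P i (σ i) j * (w j - c')
          = ∑ j, P i (σ i) j * w j - c' * (∑ j, P i (σ i) j) := by
        rw [Finset.mul_sum, ← Finset.sum_sub_distrib]
        exact Finset.sum_congr rfl fun j _ => by ring
      rw [this, (hP i (σ i)).2, mul_one]
      have hle := hwσ i
      have hge : c' ≤ ∑ j, P i (σ i) j * w j := by
        calc c' = ∑ j, P i (σ i) j * c' := by rw [← Finset.sum_mul, (hP i (σ i)).2, one_mul]
        _ ≤ ∑ j, P i (σ i) j * w j :=
          Finset.sum_le_sum fun j _ => mul_le_mul_of_nonneg_left (himin j) ((hP i (σ i)).1 j)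
      linarith [hic ▸ hle]
    have hterm := (Finset.sum_eq_zero_iff_of_nonneg (fun j _ =>
      mul_nonneg ((hP i (σ i)).1 j) (by linarith [himin j] : (0:ℝ) ≤ w j - c'))).mp hzero j
      (Finset.mem_univ j)
    rcases mul_eq_zero.mp hterm with h0 | h0
    · exact absurd h0 hne
    · linarith
  obtain ⟨m₁, hm₁, hm₁S⟩ := inv_exists (fun i j => P i (τ i) j)
    (fun i => hP i (τ i)) S ⟨imax, by simp [hS, hc]⟩ hSclosed
  obtain ⟨m₂, hm₂, hm₂S⟩ := inv_exists (fun i j => P i (σ i) j)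
    (fun i => hP i (σ i)) S' ⟨imin, by simp [hS', hc']⟩ hS'closed
  have hv₁ : ∑ i, m₁ i * r i (τ i) = lam :=
    inv_value (fun i j => P i (τ i) j) (fun i => r i (τ i)) v lam hτeq m₁ hm₁
  have hv₂ : ∑ i, m₂ i * r i (σ i) = lam :=
    inv_value (fun i j => P i (σ i) j) (fun i => r i (σ i)) u lam hσeq m₂ hm₂
  obtain ⟨m₀, hm₀, hm₀uniq⟩ := huniq
  have e1 : m₁ = m₀ := hm₀uniq m₁ ⟨τ, hm₁, hv₁⟩
  have e2 : m₂ = m₀ := hm₀uniq m₂ ⟨σ, hm₂, hv₂⟩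
  -- some index where m₁ ≠ 0
  have hex : ∃ i, m₁ i ≠ 0 := by
    by_contra hall
    push_neg at hall
    have : (1:ℝ) = 0 := by rw [← hm₁.2.1]; exact Finset.sum_eq_zero fun i _ => hall i
    norm_num at this
  obtain ⟨i0, hi0⟩ := hex
  have hi0S : i0 ∈ S := by
    by_contra hns; exact hi0 (hm₁S i0 hns)
  have hi0S' : i0 ∈ S' := by
    by_contra hns
    exact hi0 (by rw [e1, ← e2]; exact hm₂S i0 hns)
  have hcc' : c = c' := by
    have h1 : w i0 = c := (Finset.mem_filter.mp hi0S).2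
    have h2 : w i0 = c' := (Finset.mem_filter.mp hi0S').2
    rw [← h1, h2]
  refine ⟨c, funext fun j => ?_⟩
  have hwj : w j = c := le_antisymm (himax j) (by rw [hcc']; exact himin j)
  have : v j - u j = c := hwj
  simp only [Pi.add_apply]
  linarith
end

section
/- Let T : ℝⁿ → ℝⁿ be monotone and additively homogeneous, let λ ∈ ℝ, and suppose the eigenspace E(T) = { x ∈ ℝⁿ : T(x) = λe + x } is nonempty and is contained in a finite union of lines with direction e, i.e., there exist v¹,…,v^N ∈ ℝⁿ with E(T) ⊆ ⋃_{k=1}^N { v^k + te : t ∈ ℝ }. Then E(T) is exactly one such line: there exists u ∈ ℝⁿ with E(T) = { u + te : t ∈ ℝ }; in other words, the eigenvector of T is unique up to an additive constant. -/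
open Filter Topology Set
private def line {n : ℕ} (p : Fin n → ℝ) : Set (Fin n → ℝ) :=
  {q | ∃ t : ℝ, q = p + fun _ => t}

private lemma self_mem_line {n : ℕ} (p : Fin n → ℝ) : p ∈ line p :=
  ⟨0, by funext i; simp⟩

private lemma line_eq_of_mem {n : ℕ} {p v : Fin n → ℝ} (h : p ∈ line v) :
    line v = line p := by
  obtain ⟨t₀, rfl⟩ := h
  ext q
  constructor
  · rintro ⟨t, rfl⟩
    exact ⟨t - t₀, by funext i; simp only [Pi.add_apply]; ring⟩
  · rintro ⟨t, rfl⟩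
    exact ⟨t + t₀, by funext i; simp only [Pi.add_apply]; ring⟩

private lemma mem_line_symm {n : ℕ} {p v : Fin n → ℝ} (h : p ∈ line v) :
    v ∈ line p := (line_eq_of_mem h) ▸ self_mem_line v

private lemma line_closed {n : ℕ} (hn : 0 < n) (p : Fin n → ℝ) : IsClosed (line p) := by
  have : line p = ⋂ i, {q : Fin n → ℝ | q i - p i = q ⟨0, hn⟩ - p ⟨0, hn⟩} := by
    ext q
    simp only [line, Set.mem_iInter, Set.mem_setOf_eq]
    constructor
    · rintro ⟨t, rfl⟩ i; simp
    · intro h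
      exact ⟨q ⟨0, hn⟩ - p ⟨0, hn⟩, funext fun i => by have := h i; simp only [Pi.add_apply]; linarith⟩
  rw [this]
  exact isClosed_iInter fun i =>
    isClosed_eq ((continuous_apply i).sub continuous_const)
      ((continuous_apply _).sub continuous_const)

private lemma nonexp {n : ℕ} (F : (Fin n → ℝ) → (Fin n → ℝ))
    (hmono : ∀ a b : Fin n → ℝ, a ≤ b → F a ≤ F b)
    (hhom : ∀ (a : Fin n → ℝ) (c : ℝ), F (a + fun _ => c) = F a + fun _ => c)
    (k : ℕ) (a b : Fin n → ℝ) (c : ℝ) (h : ∀ i, |a i - b i| ≤ c) :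
    ∀ i, |F^[k] a i - F^[k] b i| ≤ c := by
  induction k generalizing a b with
  | zero => simpa using h
  | succ m ih =>
    rw [Function.iterate_succ_apply, Function.iterate_succ_apply]
    apply ih
    intro i
    have h1 : a ≤ b + fun _ => c := by
      intro j; have := (abs_le.mp (h j)).2; simp only [Pi.add_apply]; linarith
    have h2 : b ≤ a + fun _ => c := by
      intro j; have := (abs_le.mp (h j)).1; simp only [Pi.add_apply]; linarith
    have H1 : F a ≤ F b + fun _ => c := by
      have := hmono _ _ h1; rwa [hhom] at this
    have H2 : F b ≤ F a + fun _ => c := by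
      have := hmono _ _ h2; rwa [hhom] at this
    have := H1 i; have := H2 i
    simp only [Pi.add_apply] at *
    rw [abs_le]; constructor <;> linarith

private lemma key {n : ℕ} (hn : 0 < n) (F : (Fin n → ℝ) → (Fin n → ℝ))
    (hmono : ∀ a b : Fin n → ℝ, a ≤ b → F a ≤ F b)
    (hhom : ∀ (a : Fin n → ℝ) (c : ℝ), F (a + fun _ => c) = F a + fun _ => c)
    (x y : Fin n → ℝ) (hx : F x = x) (hy : F y = y) :
    ∃ f : ℝ → Fin n → ℝ, Continuous f ∧ (∀ s, F (f s) = f s) ∧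
      (∃ s₁, f s₁ = x) ∧ (∃ s₂ t₂, f s₂ = y + fun _ => t₂) := by
  haveI : Nonempty (Fin n) := ⟨⟨0, hn⟩⟩
  have hFmono : Monotone F := fun a b h => hmono a b h
  have hys : ∀ s : ℝ, F (y + fun _ => s) = y + fun _ => s := by
    intro s; rw [hhom, hy]
  set z : ℝ → Fin n → ℝ := fun s => x ⊔ (y + fun _ => s) with hzdef
  set a : ℝ → ℕ → Fin n → ℝ := fun s k => F^[k] (z s) with hadef
  have hstep : ∀ s, z s ≤ F (z s) := by
    intro s
    have h1 : x ≤ F (z s) := by rw [← hx]; exact hmono _ _ le_sup_left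
    have h2 : (y + fun _ => s) ≤ F (z s) := by
      rw [← hys s]; exact hmono _ _ le_sup_right
    exact sup_le h1 h2
  have hamono : ∀ s, Monotone (a s) := fun s => monotone_nat_of_le_succ fun k => by
    simp only [hadef, Function.iterate_succ_apply]
    exact (hFmono.iterate k) (hstep s)
  -- upper bound
  set d : ℝ := Finset.univ.sup' Finset.univ_nonempty (fun i => x i - y i) with hddef
  have hub : ∀ s k, a s k ≤ y + fun _ => max s d := by
    intro s k
    have hzle : z s ≤ y + fun _ => max s d := by
      intro i
      simp only [hzdef, Pi.sup_apply, Pi.add_apply, sup_le_iff]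
      constructor
      · have : x i - y i ≤ d := Finset.le_sup' (fun i => x i - y i) (Finset.mem_univ i)
        have := le_max_right s d
        linarith
      · have := le_max_left s d; linarith
    calc a s k ≤ F^[k] (y + fun _ => max s d) := (hFmono.iterate k) hzle
    _ = y + fun _ => max s d := Function.iterate_fixed (hys _) k
  -- the limit
  set w : ℝ → Fin n → ℝ := fun s i => ⨆ k, a s k i with hwdef
  have htendcoord : ∀ s i, Tendsto (fun k => a s k i) atTop (𝓝 (w s i)) := by
    intro s i
    apply tendsto_atTop_ciSup (fun k l hkl => hamono s hkl i)
    exact ⟨y i + max s d, by rintro r ⟨k, rfl⟩; exact hub s k i⟩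
  have htend : ∀ s, Tendsto (a s) atTop (𝓝 (w s)) := fun s =>
    tendsto_pi_nhds.mpr (htendcoord s)
  -- F is Lipschitz hence continuous
  have hFlip : LipschitzWith 1 F := by
    apply LipschitzWith.of_dist_le_mul
    intro p q
    rw [NNReal.coe_one, one_mul]
    rw [dist_pi_le_iff dist_nonneg]
    intro i
    rw [Real.dist_eq]
    have := nonexp F hmono hhom 1 p q (dist p q) (fun j => by
      rw [← Real.dist_eq]; exact dist_le_pi_dist p q j) i
    simpa using this
  -- w s is a fixed point
  have hwfix : ∀ s, F (w s) = w s := by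
    intro s
    have h1 : Tendsto (fun k => F (a s k)) atTop (𝓝 (F (w s))) :=
      (hFlip.continuous.tendsto _).comp (htend s)
    have h2 : (fun k => F (a s k)) = fun k => a s (k + 1) := by
      funext k; simp only [hadef, ← Function.iterate_succ_apply' F]
    rw [h2] at h1
    have h3 : Tendsto (fun k => a s (k + 1)) atTop (𝓝 (w s)) :=
      (htend s).comp (tendsto_add_atTop_nat 1)
    exact tendsto_nhds_unique h1 h3
  -- Lipschitz in s
  have hlip : ∀ s s' i, |w s i - w s' i| ≤ |s - s'| := by
    intro s s' i
    have hk : ∀ k, |a s k i - a s' k i| ≤ |s - s'| := by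
      intro k
      apply nonexp F hmono hhom k _ _ _ (fun j => ?_) i
      simp only [hzdef, Pi.sup_apply, Pi.add_apply]
      calc |max (x j) (y j + s) - max (x j) (y j + s')| ≤
          max |x j - x j| |y j + s - (y j + s')| := abs_max_sub_max_le_max _ _ _ _
      _ ≤ |s - s'| := by
          apply max_le <;> simp [abs_sub_comm]
    have : Tendsto (fun k => |a s k i - a s' k i|) atTop (𝓝 |w s i - w s' i|) :=
      ((htendcoord s i).sub (htendcoord s' i)).abs
    exact le_of_tendsto this (Eventually.of_forall hk)
  have hwcont : Continuous w := by
    apply continuous_pi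
    intro i
    apply LipschitzWith.continuous (K := 1)
    apply LipschitzWith.of_dist_le_mul
    intro s s'
    rw [NNReal.coe_one, one_mul, Real.dist_eq, Real.dist_eq]
    exact hlip s s' i
  -- endpoints
  refine ⟨w, hwcont, hwfix, ?_, ?_⟩
  · set s₁ : ℝ := Finset.univ.inf' Finset.univ_nonempty (fun i => x i - y i) with hs₁
    refine ⟨s₁, ?_⟩
    have hz₁ : z s₁ = x := by
      funext i
      simp only [hzdef, Pi.sup_apply, Pi.add_apply]
      have : s₁ ≤ x i - y i := Finset.inf'_le (fun i => x i - y i) (Finset.mem_univ i)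
      rw [sup_eq_left]; linarith
    have hak : ∀ k, a s₁ k = x := fun k => by
      simp only [hadef, hz₁]; exact Function.iterate_fixed hx k
    funext i
    simp only [hwdef]
    simp [hak]
  · refine ⟨d, d, ?_⟩
    have hz₂ : z d = y + fun _ => d := by
      funext i
      simp only [hzdef, Pi.sup_apply, Pi.add_apply]
      have : x i - y i ≤ d := Finset.le_sup' (fun i => x i - y i) (Finset.mem_univ i)
      rw [sup_eq_right]; linarith
    have hak : ∀ k, a d k = y + fun _ => d := fun k => by
      simp only [hadef, hz₂]; exact Function.iterate_fixed (hys d) k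
    funext i
    simp only [hwdef]
    simp [hak]

/-- if the eigenspace of a monotone additively homogeneous map is nonempty
and is contained in a finite union of lines of direction `e`, then it equals exactly one
such line, i.e., the eigenvector is unique up to an additive constant. -/
theorem stmt8 {n : ℕ} (hn : 0 < n) (T : (Fin n → ℝ) → (Fin n → ℝ))
    (hmono : ∀ x y : Fin n → ℝ, x ≤ y → T x ≤ T y)
    (hhom : ∀ (x : Fin n → ℝ) (c : ℝ), T (x + fun _ => c) = T x + fun _ => c)
    (lam : ℝ)
    (hne : {x : Fin n → ℝ | T x = (fun _ => lam) + x}.Nonempty)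
    (N : ℕ) (v : Fin N → Fin n → ℝ)
    (hsub : {x : Fin n → ℝ | T x = (fun _ => lam) + x} ⊆
      ⋃ k : Fin N, {y : Fin n → ℝ | ∃ t : ℝ, y = v k + fun _ => t}) :
    ∃ u : Fin n → ℝ, {x : Fin n → ℝ | T x = (fun _ => lam) + x} =
      {y : Fin n → ℝ | ∃ t : ℝ, y = u + fun _ => t} := by
  obtain ⟨x, hx⟩ := hne
  set F : (Fin n → ℝ) → (Fin n → ℝ) := fun z => T z + fun _ => (-lam) with hF
  have hFmono : ∀ a b : Fin n → ℝ, a ≤ b → F a ≤ F b := fun a b h i => by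
    simp only [hF, Pi.add_apply]
    have := hmono a b h i
    linarith
  have hFhom : ∀ (a : Fin n → ℝ) (c : ℝ), F (a + fun _ => c) = F a + fun _ => c := by
    intro a c
    simp only [hF, hhom]
    funext i
    simp only [Pi.add_apply]
    ring
  have hEfix : ∀ p : Fin n → ℝ, (T p = (fun _ => lam) + p) ↔ F p = p := by
    intro p
    constructor
    · intro h; funext i; have := congrFun h i
      simp only [hF, Pi.add_apply] at *; linarith
    · intro h; funext i; have := congrFun h i
      simp only [hF, Pi.add_apply] at *; linarith
  have hxfix : F x = x := (hEfix x).mp hx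
  refine ⟨x, ?_⟩
  ext q
  simp only [Set.mem_setOf_eq]
  constructor
  · intro hq
    have hqfix : F q = q := (hEfix q).mp hq
    obtain ⟨f, hfc, hffix, ⟨s₁, hfs₁⟩, ⟨s₂, t₂, hfs₂⟩⟩ :=
      key hn F hFmono hFhom x q hxfix hqfix
    have hfE : ∀ s, f s ∈ ⋃ k : Fin N, line (v k) := by
      intro s
      have : T (f s) = (fun _ => lam) + f s := (hEfix (f s)).mpr (hffix s)
      exact hsub this
    set A : Set ℝ := f ⁻¹' (line x) with hA
    have hAclosed : IsClosed A := (line_closed hn x).preimage hfc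
    have hAopen : IsOpen A := by
      rw [← isClosed_compl_iff]
      have hcompl : Aᶜ = f ⁻¹' (⋃ k : {k : Fin N // x ∉ line (v k)}, line (v k.1)) := by
        ext s
        simp only [mem_compl_iff, hA, mem_preimage, mem_iUnion]
        constructor
        · intro hs
          obtain ⟨k, hk⟩ := mem_iUnion.mp (hfE s)
          exact ⟨⟨k, fun hxk => hs (line_eq_of_mem hxk ▸ hk)⟩, hk⟩
        · rintro ⟨⟨k, hxk⟩, hk⟩ hfs
          exact hxk (line_eq_of_mem hk ▸ mem_line_symm hfs)
      rw [hcompl]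
      exact (isClosed_iUnion_of_finite fun k : {k : Fin N // x ∉ line (v k)} => line_closed hn (v k.1)).preimage hfc
    have hAne : A.Nonempty := ⟨s₁, by simp only [hA, mem_preimage, hfs₁]; exact self_mem_line x⟩
    have hAuniv : A = univ := IsClopen.eq_univ ⟨hAclosed, hAopen⟩ hAne
    have hs₂A : s₂ ∈ A := hAuniv ▸ mem_univ s₂
    simp only [hA, mem_preimage, hfs₂] at hs₂A
    obtain ⟨t, ht⟩ := hs₂A
    refine ⟨t - t₂, ?_⟩
    funext i
    have := congrFun ht i
    simp only [Pi.add_apply] at *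
    linarith
  · rintro ⟨t, rfl⟩
    rw [hhom, hx]
    funext i
    simp only [Pi.add_apply]
    ring
end

section
/- Let T : ℝⁿ → ℝⁿ be a perfect-information finite Shapley operator and let M ≥ 0. Then the operator T ∘ R_M has an eigenvalue: there exist λ ∈ ℝ and u ∈ ℝⁿ with T(R_M(u)) = λe + u. -/
/-- The map `R_M`, `(R_M x)_i = max( x_i, max_j (−M + x_j) )`. -/
noncomputable def RM {n : ℕ} (M : ℝ) (x : Fin n → ℝ) : Fin n → ℝ :=
  fun i => max (x i) (⨆ j, (-M + x j))

section helpers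
variable {ι : Type*} [Fintype ι] [Nonempty ι]

lemma myInf_add (f : ι → ℝ) (c : ℝ) : ⨅ i, (f i + c) = (⨅ i, f i) + c :=
  ((OrderIso.addRight c).map_ciInf (Finite.bddBelow_range f)).symm

lemma mySup_add (f : ι → ℝ) (c : ℝ) : ⨆ i, (f i + c) = (⨆ i, f i) + c :=
  ((OrderIso.addRight c).map_ciSup (Finite.bddAbove_range f)).symm

lemma myInf_le_myInf (f g : ι → ℝ) (c : ℝ) (h : ∀ i, f i ≤ g i + c) :
    (⨅ i, f i) ≤ (⨅ i, g i) + c := by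
  rw [← myInf_add]
  exact ciInf_mono (Finite.bddBelow_range f) h

lemma mySup_le_mySup (f g : ι → ℝ) (c : ℝ) (h : ∀ i, f i ≤ g i + c) :
    (⨆ i, f i) ≤ (⨆ i, g i) + c := by
  rw [← mySup_add]
  exact ciSup_mono (Finite.bddAbove_range fun i => g i + c) h

end helpers

section shap
variable {n : ℕ} (A : Fin n → Type) [∀ i, Fintype (A i)] [∀ i, Nonempty (A i)]
    (B : ∀ i, A i → Type) [∀ i a, Fintype (B i a)] [∀ i a, Nonempty (B i a)]
    (r : ∀ i, ∀ a : A i, B i a → ℝ) (P : ∀ i, ∀ a : A i, B i a → Fin n → ℝ)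
    (hP : ∀ i a b, (∀ j, 0 ≤ P i a b j) ∧ ∑ j, P i a b j = 1)

lemma shapley_coord_le (hP : ∀ i a b, (∀ j, 0 ≤ P i a b j) ∧ ∑ j, P i a b j = 1) (x y : Fin n → ℝ) (c : ℝ) (hc : ∀ j, x j ≤ y j + c) (i : Fin n) :
    shapleyOp A B r P x i ≤ shapleyOp A B r P y i + c := by
  unfold shapleyOp
  apply myInf_le_myInf
  intro a
  apply mySup_le_mySup
  intro b
  have h1 : ∑ j, P i a b j * x j ≤ ∑ j, P i a b j * (y j + c) :=
    Finset.sum_le_sum fun j _ => mul_le_mul_of_nonneg_left (hc j) ((hP i a b).1 j)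
  have h2 : ∑ j, P i a b j * (y j + c) = (∑ j, P i a b j * y j) + c := by
    simp_rw [mul_add, Finset.sum_add_distrib, ← Finset.sum_mul, (hP i a b).2, one_mul]
  linarith

lemma shapley_add (hP : ∀ i a b, (∀ j, 0 ≤ P i a b j) ∧ ∑ j, P i a b j = 1) (x : Fin n → ℝ) (c : ℝ) (i : Fin n) :
    shapleyOp A B r P (fun j => x j + c) i = shapleyOp A B r P x i + c := by
  unfold shapleyOp
  have h2 : ∀ (a : A i) (b : B i a), ∑ j, P i a b j * (x j + c)
      = (∑ j, P i a b j * x j) + c := by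
    intro a b
    simp_rw [mul_add, Finset.sum_add_distrib, ← Finset.sum_mul, (hP i a b).2, one_mul]
  rw [← myInf_add]
  congr 1; funext a
  rw [← mySup_add]
  congr 1; funext b
  rw [h2, add_assoc]

lemma shapley_dist (hP : ∀ i a b, (∀ j, 0 ≤ P i a b j) ∧ ∑ j, P i a b j = 1) (x y : Fin n → ℝ) (hn : 0 < n) :
    dist (shapleyOp A B r P x) (shapleyOp A B r P y) ≤ dist x y := by
  rw [dist_pi_le_iff dist_nonneg]
  intro i
  rw [Real.dist_eq, abs_sub_le_iff]
  constructor
  · have := shapley_coord_le A B r P hP x y (dist x y)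
      (fun j => by
        have := dist_le_pi_dist x y j
        rw [Real.dist_eq] at this
        cases abs_le.mp this with
        | intro h1 h2 => linarith) i
    linarith
  · have := shapley_coord_le A B r P hP y x (dist x y)
      (fun j => by
        have := dist_le_pi_dist y x j
        rw [Real.dist_eq] at this
        rw [dist_comm x y]
        cases abs_le.mp this with
        | intro h1 h2 => linarith) i
    linarith

/-- for any perfect-information finite Shapley operator `T` and `M ≥ 0`,
the operator `T ∘ R_M` has an eigenvalue. -/
theorem stmt9 {n : ℕ} (hn : 0 < n)
    (A : Fin n → Type) [∀ i, Fintype (A i)] [∀ i, Nonempty (A i)]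
    (B : ∀ i, A i → Type) [∀ i a, Fintype (B i a)] [∀ i a, Nonempty (B i a)]
    (r : ∀ i, ∀ a : A i, B i a → ℝ) (P : ∀ i, ∀ a : A i, B i a → Fin n → ℝ)
    (hP : ∀ i a b, (∀ j, 0 ≤ P i a b j) ∧ ∑ j, P i a b j = 1)
    (T : (Fin n → ℝ) → (Fin n → ℝ)) (hT : T = shapleyOp A B r P)
    (M : ℝ) (hM : 0 ≤ M) :
    ∃ (lam : ℝ) (u : Fin n → ℝ), T (RM M u) = (fun _ => lam) + u := by
  have hne : Nonempty (Fin n) := Fin.pos_iff_nonempty.mp hn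
  set i0 : Fin n := ⟨0, hn⟩ with hi0
  set F : (Fin n → ℝ) → (Fin n → ℝ) := fun x => T (RM M x) with hF
  -- T is 1-Lipschitz
  have hTdist : ∀ x y, dist (T x) (T y) ≤ dist x y := by
    intro x y; rw [hT]; exact shapley_dist A B r P hP x y hn
  -- T is additively homogeneous
  have hTadd : ∀ (x : Fin n → ℝ) (c : ℝ) (i : Fin n),
      T (fun j => x j + c) i = T x i + c := by
    intro x c i; rw [hT]; exact shapley_add A B r P hP x c i
  -- RM is 1-Lipschitz
  have hRdist : ∀ x y : Fin n → ℝ, dist (RM M x) (RM M y) ≤ dist x y := by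
    intro x y
    rw [dist_pi_le_iff dist_nonneg]
    intro i
    have hco : ∀ j, dist (x j) (y j) ≤ dist x y := fun j => dist_le_pi_dist x y j
    have h1 : |x i - y i| ≤ dist x y := by
      have := hco i; rwa [Real.dist_eq] at this
    have h2 : |(⨆ j, (-M + x j)) - (⨆ j, (-M + y j))| ≤ dist x y := by
      rw [abs_sub_le_iff]
      constructor
      · rw [sub_le_iff_le_add']
        apply mySup_le_mySup
        intro j
        have := hco j; rw [Real.dist_eq, abs_sub_le_iff] at this
        linarith [this.1]
      · rw [sub_le_iff_le_add']
        apply mySup_le_mySup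
        intro j
        have := hco j; rw [Real.dist_eq, abs_sub_le_iff] at this
        linarith [this.2]
    calc dist (RM M x i) (RM M y i)
        = |max (x i) (⨆ j, (-M + x j)) - max (y i) (⨆ j, (-M + y j))| := by
          rw [Real.dist_eq]; rfl
      _ ≤ max (|x i - y i|) (|(⨆ j, (-M + x j)) - (⨆ j, (-M + y j))|) :=
          abs_max_sub_max_le_max _ _ _ _
      _ ≤ dist x y := max_le h1 h2
  -- RM is additively homogeneous
  have hRadd : ∀ (x : Fin n → ℝ) (c : ℝ), RM M (fun j => x j + c) = fun i => RM M x i + c := by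
    intro x c
    funext i
    show max (x i + c) (⨆ j, (-M + (x j + c))) = max (x i) (⨆ j, (-M + x j)) + c
    have : (⨆ j, (-M + (x j + c))) = (⨆ j, (-M + x j)) + c := by
      rw [← mySup_add]; congr 1; funext j; ring
    rw [this, max_add_add_right]
  -- F is 1-Lipschitz
  have hFdist : ∀ x y, dist (F x) (F y) ≤ dist x y := fun x y =>
    le_trans (hTdist _ _) (hRdist x y)
  -- F is additively homogeneous
  have hFadd : ∀ (x : Fin n → ℝ) (c : ℝ), F (fun j => x j + c) = fun i => F x i + c := by
    intro x c
    funext i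
    show T (RM M fun j => x j + c) i = T (RM M x) i + c
    rw [hRadd]
    exact hTadd (RM M x) c i
  -- oscillation bound for F
  set C0 : ℝ := dist (T 0) 0 with hC0
  set K : ℝ := 2 * M + 2 * C0 with hK
  have hC0nn : 0 ≤ C0 := dist_nonneg
  have hKnn : 0 ≤ K := by positivity
  have hosc : ∀ (x : Fin n → ℝ) (i : Fin n), |F x i - F x i0| ≤ K := by
    intro x i
    set S : ℝ := ⨆ j, x j with hS
    set w : Fin n → ℝ := fun j => RM M x j - S with hw
    have hxle : ∀ j, x j ≤ S := fun j => le_ciSup (Finite.bddAbove_range x) j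
    have hsupM : (⨆ j, (-M + x j)) = S - M := by
      rw [show (fun j => -M + x j) = fun j => x j + (-M) by funext j; ring, mySup_add]
      ring
    have hwb : ∀ j, |w j| ≤ M := by
      intro j
      have h1 : RM M x j ≤ S := by
        show max (x j) (⨆ j, (-M + x j)) ≤ S
        rw [hsupM]
        exact max_le (hxle j) (by linarith)
      have h2 : S - M ≤ RM M x j := by
        show S - M ≤ max (x j) (⨆ j, (-M + x j))
        rw [hsupM]
        exact le_max_right _ _
      rw [abs_le]; constructor <;> simp only [hw] <;> linarith
    have hRMx : RM M x = fun j => w j + S := by funext j; simp [hw]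
    have hFxw : ∀ i, F x i = T w i + S := by
      intro i
      show T (RM M x) i = T w i + S
      rw [hRMx]
      exact hTadd w S i
    have hTw : ∀ i, |T w i - T 0 i| ≤ M := by
      intro i
      have h1 : dist (T w) (T 0) ≤ M := by
        refine le_trans (hTdist w 0) ?_
        rw [dist_pi_le_iff hM]
        intro j
        rw [Real.dist_eq]
        simpa using hwb j
      have := le_trans (dist_le_pi_dist (T w) (T 0) i) h1
      rwa [Real.dist_eq] at this
    have hT0 : ∀ i : Fin n, |T 0 i| ≤ C0 := by
      intro i
      have := dist_le_pi_dist (T 0) 0 i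
      rw [Real.dist_eq] at this
      simp only [Pi.zero_apply, sub_zero] at this
      exact le_trans this (le_of_eq hC0.symm)
    have e1 : F x i - F x i0 = (T w i - T 0 i) + (T 0 i - T 0 i0) + (T 0 i0 - T w i0) := by
      rw [hFxw i, hFxw i0]; ring
    rw [e1]
    calc |(T w i - T 0 i) + (T 0 i - T 0 i0) + (T 0 i0 - T w i0)|
        ≤ |T w i - T 0 i| + |T 0 i - T 0 i0| + |T 0 i0 - T w i0| := by
          exact le_trans (abs_add_le _ _) (by gcongr; exact abs_add_le _ _)
      _ ≤ M + (|T 0 i| + |T 0 i0|) + M := by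
          gcongr
          · exact hTw i
          · exact le_trans (abs_sub _ _) le_rfl
          · rw [abs_sub_comm]; exact hTw i0
      _ ≤ M + (C0 + C0) + M := by gcongr <;> [exact hT0 i; exact hT0 i0]
      _ = K := by rw [hK]; ring

  set C1 : ℝ := |F 0 i0| with hC1
  set K2 : ℝ := K + C1 with hK2
  have hK2nn : 0 ≤ K2 := by positivity
  have main : ∀ k : ℕ, ∃ (v : Fin n → ℝ) (μ : ℝ),
      (∀ i, |v i| ≤ K) ∧ |μ| ≤ K2 ∧
      ∀ i, F v i = v i * (((k:ℝ) + 2) / ((k:ℝ) + 1)) + μ := by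
    intro k
    set t : ℝ := ((k:ℝ) + 1) / ((k:ℝ) + 2) with htdef
    have hk1 : (0:ℝ) < (k:ℝ) + 1 := by positivity
    have hk2 : (0:ℝ) < (k:ℝ) + 2 := by positivity
    have ht0 : 0 < t := by positivity
    have ht1 : t < 1 := by rw [htdef, div_lt_one hk2]; linarith
    set Φ : (Fin n → ℝ) → (Fin n → ℝ) := fun z => t • F z with hΦ
    have hlip : LipschitzWith (Real.toNNReal t) Φ := by
      apply LipschitzWith.of_dist_le_mul
      intro z y
      calc dist (Φ z) (Φ y) = ‖t‖ * dist (F z) (F y) := dist_smul₀ t _ _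
        _ ≤ t * dist z y := by
            rw [Real.norm_eq_abs, abs_of_pos ht0]
            exact mul_le_mul_of_nonneg_left (hFdist z y) ht0.le
        _ = (Real.toNNReal t : ℝ) * dist z y := by rw [Real.coe_toNNReal _ ht0.le]
    have hcontr : ContractingWith (Real.toNNReal t) Φ := by
      constructor
      · rw [← Real.toNNReal_one]
        exact (Real.toNNReal_lt_toNNReal_iff_of_nonneg ht0.le).mpr ht1
      · exact hlip
    set x : Fin n → ℝ := ContractingWith.fixedPoint Φ hcontr with hx
    have hfix : Φ x = x := hcontr.fixedPoint_isFixedPt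
    have hxi : ∀ i, t * F x i = x i := by
      intro i
      conv_rhs => rw [← hfix]
      simp [hΦ]
    set v : Fin n → ℝ := fun i => x i - x i0 with hv
    set μ : ℝ := x i0 / t - x i0 with hμ
    have hFv : ∀ i, F v i = F x i - x i0 := by
      intro i
      have : v = fun j => x j + (-(x i0)) := by funext j; simp [hv]; ring
      rw [this, hFadd x (-(x i0))]
      ring
    have hFxx : ∀ i, F x i = x i / t := by
      intro i
      field_simp
      rw [mul_comm]
      exact hxi i
    have hvb : ∀ i, |v i| ≤ K := by
      intro i
      have e : v i = t * (F x i - F x i0) := by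
        rw [mul_sub, hxi i, hxi i0, hv]
      rw [e, abs_mul, abs_of_pos ht0]
      calc t * |F x i - F x i0| ≤ 1 * |F x i - F x i0| := by
            apply mul_le_mul_of_nonneg_right ht1.le (abs_nonneg _)
        _ = |F x i - F x i0| := one_mul _
        _ ≤ K := hosc x i
    have hrec : ∀ i, F v i = v i * (((k:ℝ) + 2) / ((k:ℝ) + 1)) + μ := by
      intro i
      rw [hFv i, hFxx i]
      have hv' : x i = v i + x i0 := by simp [hv]
      rw [hv']
      rw [htdef] at hμ ⊢
      rw [hμ]
      field_simp
      ring
    refine ⟨v, μ, hvb, ?_, hrec⟩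
    have hdv0 : dist v 0 ≤ K := by
      rw [dist_pi_le_iff hKnn]
      intro i
      rw [Real.dist_eq]
      simpa using hvb i
    have hμF : μ = F v i0 := by
      rw [hFv i0, hFxx i0, hμ]
    have : |F v i0 - F 0 i0| ≤ K := by
      have h1 := le_trans (dist_le_pi_dist (F v) (F 0) i0) (le_trans (hFdist v 0) hdv0)
      rwa [Real.dist_eq] at h1
    rw [hμF, hK2]
    calc |F v i0| ≤ |F v i0 - F 0 i0| + |F 0 i0| := by
          have := abs_add_le (F v i0 - F 0 i0) (F 0 i0); simpa using this
      _ ≤ K + C1 := by gcongr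
  
  choose v μ hvb hμb hrec using main
  set p : ℕ → (Fin n → ℝ) × ℝ := fun k => (v k, μ k) with hp
  have hmem : ∀ k, p k ∈ Metric.closedBall (0 : (Fin n → ℝ) × ℝ) (K + K2) := by
    intro k
    rw [Metric.mem_closedBall, Prod.dist_eq]
    apply max_le
    · have : dist (v k) (0 : Fin n → ℝ) ≤ K := by
        rw [dist_pi_le_iff hKnn]
        intro i
        rw [Real.dist_eq]
        simpa using hvb k i
      calc dist (p k).1 (0 : (Fin n → ℝ) × ℝ).1 = dist (v k) (0 : Fin n → ℝ) := rfl
        _ ≤ K := this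
        _ ≤ K + K2 := by linarith
    · have : dist (μ k) (0:ℝ) ≤ K2 := by rw [Real.dist_eq, sub_zero]; exact hμb k
      calc dist (p k).2 (0 : (Fin n → ℝ) × ℝ).2 = dist (μ k) (0:ℝ) := rfl
        _ ≤ K2 := this
        _ ≤ K + K2 := by linarith
  obtain ⟨a, -, φ, hφ, hconv⟩ :=
    tendsto_subseq_of_bounded Metric.isBounded_closedBall hmem
  set u : Fin n → ℝ := a.1 with hu
  set lam : ℝ := a.2 with hlam
  have hconv1 : Filter.Tendsto (fun k => v (φ k)) Filter.atTop (nhds u) :=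
    (continuous_fst.tendsto a).comp hconv
  have hconv2 : Filter.Tendsto (fun k => μ (φ k)) Filter.atTop (nhds lam) :=
    (continuous_snd.tendsto a).comp hconv
  have hct : Filter.Tendsto (fun k : ℕ => (((k:ℝ) + 2) / ((k:ℝ) + 1)))
      Filter.atTop (nhds 1) := by
    have hfun : (fun k : ℕ => ((k:ℝ)+2)/((k:ℝ)+1)) = fun k : ℕ => 1 + 1/((k:ℝ)+1) := by
      funext k
      have hk : ((k:ℝ)+1) ≠ 0 := by positivity
      field_simp
      ring
    rw [hfun]
    simpa using (tendsto_const_nhds (x := (1:ℝ))).add tendsto_one_div_add_atTop_nhds_zero_nat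
  have hctφ : Filter.Tendsto (fun k => ((φ k : ℝ) + 2)/((φ k : ℝ)+1))
      Filter.atTop (nhds 1) := hct.comp hφ.tendsto_atTop
  have hFlip : LipschitzWith 1 F := by
    apply LipschitzWith.of_dist_le_mul
    intro z y
    rw [NNReal.coe_one, one_mul]
    exact hFdist z y
  have hFcont : Continuous F := hFlip.continuous
  have key : ∀ i, F u i = u i + lam := by
    intro i
    have hvti : Filter.Tendsto (fun k => v (φ k) i) Filter.atTop (nhds (u i)) :=
      ((continuous_apply i).tendsto u).comp hconv1
    have hL : Filter.Tendsto (fun k => F (v (φ k)) i) Filter.atTop (nhds (F u i)) :=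
      (((continuous_apply i).comp hFcont).tendsto u).comp hconv1
    have hR : Filter.Tendsto
        (fun k => v (φ k) i * (((φ k : ℝ) + 2) / ((φ k : ℝ) + 1)) + μ (φ k))
        Filter.atTop (nhds (u i * 1 + lam)) := (hvti.mul hctφ).add hconv2
    have heq : (fun k => F (v (φ k)) i)
        = fun k => v (φ k) i * (((φ k : ℝ) + 2) / ((φ k : ℝ) + 1)) + μ (φ k) :=
      funext fun k => hrec (φ k) i
    rw [heq] at hL
    have := tendsto_nhds_unique hL hR
    rw [this]
    ring
  refine ⟨lam, u, ?_⟩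
  funext i
  have h := key i
  rw [show T (RM M u) i = F u i from rfl] at *
  rw [Pi.add_apply, h]
  ring
end shap
end
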